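/- arXiv:1706.08541 — 9 statements merged into one kernel-verified Lean document; each statement's English description precedes it below -/
import Mathlib

section
/- Let A be a symmetric n×n real matrix, let C be an r×n real matrix with r < n and rank C = r, and suppose there is μ > 0 such that ⟨Ax, x⟩ ≥ μ⟨x, x⟩ for every x ∈ ℝⁿ with Cx = 0. Then there exist ρ with 0 < ρ < μ and k₀ > 0 such that for every k ≥ k₀ and every x ∈ ℝⁿ one has ⟨(A + k CᵀC)x, x⟩ ≥ ρ⟨x, x⟩. -/
open Matrix RealInnerProductSpace

set_option maxHeartbeats 2000000 in
/-- **Debreu's Lemma.** If `A` is a symmetric `n × n` real matrix, `C` an `r × n` real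
matrix with `r < n` and `rank C = r`, and `⟨Ax, x⟩ ≥ μ ⟨x, x⟩` for all `x` with `Cx = 0`,
then there are `0 < ρ < μ` and `k₀ > 0` such that for all `k ≥ k₀` and all `x`,
`⟨(A + k CᵀC) x, x⟩ ≥ ρ ⟨x, x⟩`. -/
theorem debreu_lemma {n r : ℕ} (hrn : r < n)
    (A : Matrix (Fin n) (Fin n) ℝ) (hA : A.IsSymm)
    (C : Matrix (Fin r) (Fin n) ℝ) (hC : C.rank = r)
    (μ : ℝ) (hμ : 0 < μ)
    (hpos : ∀ x : Fin n → ℝ, C.mulVec x = 0 → A.mulVec x ⬝ᵥ x ≥ μ * (x ⬝ᵥ x)) :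
    ∃ ρ : ℝ, 0 < ρ ∧ ρ < μ ∧ ∃ k₀ : ℝ, 0 < k₀ ∧ ∀ k : ℝ, k₀ ≤ k →
      ∀ x : Fin n → ℝ, (A + k • (Cᵀ * C)).mulVec x ⬝ᵥ x ≥ ρ * (x ⬝ᵥ x) := by
  classical
  set E := EuclideanSpace ℝ (Fin n) with hE
  set F := EuclideanSpace ℝ (Fin r) with hF
  set LA : E →L[ℝ] E := LinearMap.toContinuousLinearMap (Matrix.toEuclideanLin A) with hLA
  set LC : E →ₗ[ℝ] F := Matrix.toEuclideanLin C with hLCdef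
  set M := ‖LA‖ with hM
  have hM0 : 0 ≤ M := norm_nonneg _
  -- dot product vs inner product
  have hdotn : ∀ a b : Fin n → ℝ, a ⬝ᵥ b =
      ⟪(WithLp.equiv 2 (Fin n → ℝ)).symm a, (WithLp.equiv 2 (Fin n → ℝ)).symm b⟫ := by
    intro a b
    show a ⬝ᵥ b = b ⬝ᵥ star a
    rw [star_trivial, dotProduct_comm]
  have hdotr : ∀ a b : Fin r → ℝ, a ⬝ᵥ b =
      ⟪(WithLp.equiv 2 (Fin r → ℝ)).symm a, (WithLp.equiv 2 (Fin r → ℝ)).symm b⟫ := by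
    intro a b
    show a ⬝ᵥ b = b ⬝ᵥ star a
    rw [star_trivial, dotProduct_comm]
  set V : Submodule ℝ E := LinearMap.ker LC with hV
  -- antilipschitz constant for LC on Vᗮ
  set f : Vᗮ →ₗ[ℝ] F := LC.comp Vᗮ.subtype with hfdef
  have hfinj : Function.Injective f := by
    rw [← LinearMap.ker_eq_bot, LinearMap.ker_eq_bot']
    rintro ⟨w, hw⟩ hfw
    have hwV : w ∈ V := by
      have : LC w = 0 := by simpa [hfdef] using hfw
      exact this
    have : w = 0 := by
      have := (Submodule.orthogonal_disjoint V).le_bot ⟨hwV, hw⟩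
      simpa using this
    exact Subtype.ext this
  set e := (LinearEquiv.ofInjective f hfinj).toContinuousLinearEquiv with he
  set B := ‖(e.symm : LinearMap.range f →L[ℝ] Vᗮ)‖ with hB
  have hB0 : 0 ≤ B := hB ▸ ContinuousLinearMap.opNorm_nonneg _
  set c : ℝ := ((B + 1)⁻¹) ^ 2 with hc
  have hcpos : 0 < c := by positivity
  have hkey : ∀ w : E, w ∈ Vᗮ → c * ‖w‖ ^ 2 ≤ ‖LC w‖ ^ 2 := by
    intro w hw
    set w' : Vᗮ := ⟨w, hw⟩ with hw'
    have h1 : ‖w'‖ ≤ (B + 1) * ‖LC w‖ := by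
      have h2 : ‖(e.symm : LinearMap.range f →L[ℝ] Vᗮ) (e w')‖ ≤ B * ‖e w'‖ :=
        (e.symm : LinearMap.range f →L[ℝ] Vᗮ).le_opNorm (e w')
      have h3 : (e.symm : LinearMap.range f →L[ℝ] Vᗮ) (e w') = w' :=
        e.symm_apply_apply w'
      have h4 : ‖e w'‖ = ‖LC w‖ := by
        have : ((e w' : LinearMap.range f) : F) = f w' := by
          simp [he, LinearEquiv.coe_toContinuousLinearEquiv]
        rw [show ‖e w'‖ = ‖((e w' : LinearMap.range f) : F)‖ from rfl, this]
        rfl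
      rw [h3, h4] at h2
      have : B * ‖LC w‖ ≤ (B + 1) * ‖LC w‖ := by nlinarith [norm_nonneg (LC w)]
      linarith
    have hww : ‖w‖ = ‖w'‖ := rfl
    rw [hww]
    have hsq : ‖w'‖ ^ 2 ≤ (B + 1) ^ 2 * ‖LC w‖ ^ 2 := by
      nlinarith [norm_nonneg w', norm_nonneg (LC w)]
    have hone : c * (B + 1) ^ 2 = 1 := by
      rw [hc]
      field_simp
    calc c * ‖w'‖ ^ 2 ≤ c * ((B + 1) ^ 2 * ‖LC w‖ ^ 2) :=
          mul_le_mul_of_nonneg_left hsq hcpos.le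
      _ = ‖LC w‖ ^ 2 := by rw [← mul_assoc, hone, one_mul]
  -- bound for LA
  have hAbound : ∀ a b : E, ⟪LA a, b⟫ ≥ -(M * ‖a‖ * ‖b‖) := by
    intro a b
    have h1 : |⟪LA a, b⟫| ≤ ‖LA a‖ * ‖b‖ := abs_real_inner_le_norm _ _
    have h2 : ‖LA a‖ ≤ M * ‖a‖ := LA.le_opNorm a
    have := abs_le.mp h1
    nlinarith [norm_nonneg b, norm_nonneg a]
  refine ⟨μ / 2, by linarith, by linarith, (M * μ + 2 * M ^ 2 + μ ^ 2) / (c * μ), by positivity, ?_⟩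
  intro k hk x
  have hk0 : (0:ℝ) ≤ k := le_trans (by positivity) hk
  have hkc : k * (c * μ) ≥ M * μ + 2 * M ^ 2 + μ ^ 2 := by
    rw [ge_iff_le, ← div_le_iff₀ (by positivity)]
    exact hk
  -- expand the quadratic form
  have hexp : (A + k • (Cᵀ * C)).mulVec x ⬝ᵥ x
      = A.mulVec x ⬝ᵥ x + k * (C.mulVec x ⬝ᵥ C.mulVec x) := by
    rw [add_mulVec, add_dotProduct, smul_mulVec, smul_dotProduct, smul_eq_mul,
      ← mulVec_mulVec, mulVec_transpose, ← dotProduct_mulVec]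
  set x' : E := (WithLp.equiv 2 (Fin n → ℝ)).symm x with hx'
  have hAx : A.mulVec x ⬝ᵥ x = ⟪LA x', x'⟫ := by
    rw [hdotn]
    congr 1
  have hCx : C.mulVec x ⬝ᵥ C.mulVec x = ‖LC x'‖ ^ 2 := by
    rw [hdotr, ← real_inner_self_eq_norm_sq]
    congr 1
  have hxx : x ⬝ᵥ x = ‖x'‖ ^ 2 := by
    rw [hdotn, real_inner_self_eq_norm_sq]
  rw [ge_iff_le, hexp, hAx, hCx, hxx]
  -- decompose x'
  obtain ⟨v, hv, w, hw, hxvw⟩ := V.exists_add_mem_mem_orthogonal x'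
  have hvw0 : ⟪v, w⟫ = 0 := Submodule.inner_right_of_mem_orthogonal hv hw
  have hnorm : ‖x'‖ ^ 2 = ‖v‖ ^ 2 + ‖w‖ ^ 2 := by
    rw [hxvw, norm_add_sq_real, hvw0]; ring
  have hLCv : LC v = 0 := hv
  have hLCx : ‖LC x'‖ ^ 2 = ‖LC w‖ ^ 2 := by
    rw [hxvw, map_add, hLCv, zero_add]
  have hAvv : ⟪LA v, v⟫ ≥ μ * ‖v‖ ^ 2 := by
    have hCv : C.mulVec (WithLp.equiv 2 (Fin n → ℝ) v) = 0 := by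
      have : (WithLp.equiv 2 (Fin r → ℝ)) (LC v) = 0 := by rw [hLCv]; rfl
      exact this
    have := hpos (WithLp.equiv 2 (Fin n → ℝ) v) hCv
    have h1 : A.mulVec (WithLp.equiv 2 (Fin n → ℝ) v) ⬝ᵥ (WithLp.equiv 2 (Fin n → ℝ) v)
        = ⟪LA v, v⟫ := by
      rw [hdotn]
      congr 1 <;> simp
    have h2 : (WithLp.equiv 2 (Fin n → ℝ) v) ⬝ᵥ (WithLp.equiv 2 (Fin n → ℝ) v) = ‖v‖ ^ 2 := by
      rw [hdotn, real_inner_self_eq_norm_sq]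
      congr 1 <;> simp
    rw [h1, h2] at this
    exact this
  have hinner : ⟪LA x', x'⟫ = ⟪LA v, v⟫ + ⟪LA v, w⟫ + ⟪LA w, v⟫ + ⟪LA w, w⟫ := by
    rw [hxvw, map_add, inner_add_left, inner_add_right, inner_add_right]
    ring
  have h2 := hAbound v w
  have h3 := hAbound w v
  have h4 := hAbound w w
  have h5 := hkey w hw
  rw [hinner, hnorm, hLCx]
  nlinarith [sq_nonneg (μ * ‖v‖ - 2 * M * ‖w‖), norm_nonneg v, norm_nonneg w,
    mul_nonneg (mul_nonneg hk0 hμ.le) (sub_nonneg.2 h5), sq_nonneg ‖w‖, sq_nonneg ‖v‖,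
    mul_nonneg hM0 (mul_nonneg (norm_nonneg v) (norm_nonneg w))]
end

section
/- Let f : ℝⁿ → ℝ be convex and continuous, c_i : ℝⁿ → ℝ concave and continuous (i = 1,…,m), Ω = {x : c_i(x) ≥ 0 for all i}, and assume the solution set X* = {x ∈ Ω : f(x) = min_Ω f} is nonempty and bounded. Then for every y ∈ Ω with c_i(y) > 0 for all i and every k > 0, the extended relaxation set Ω_{−1/k}(y) = {x ∈ ℝⁿ : c_i(x) ≥ −1/k for i = 1,…,m, and f(x) ≤ f(y)} is convex and bounded. -/
open Real

open Set Filter Topology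

/-- Sum of convex functions is convex. -/
lemma myConvexOn_sum {E : Type*} [AddCommGroup E] [Module ℝ E] {ι : Type*} (s : Finset ι)
    (g : ι → E → ℝ) (h : ∀ i ∈ s, ConvexOn ℝ Set.univ (g i)) :
    ConvexOn ℝ Set.univ (fun x => ∑ i ∈ s, g i x) := by
  classical
  induction s using Finset.induction with
  | empty => simpa using convexOn_const (0:ℝ) convex_univ
  | insert _ _ hnot ih =>
    rename_i a s
    simp only [Finset.sum_insert hnot]
    exact (h a (Finset.mem_insert_self a s)).add
      (ih fun i hi => h i (Finset.mem_insert_of_mem hi))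

/-- If a convex continuous function has a nonempty bounded 0-sublevel set, every sublevel set
is bounded. -/
lemma sublevel_bounded {n : ℕ} (g : EuclideanSpace ℝ (Fin n) → ℝ)
    (hg : ConvexOn ℝ Set.univ g) (hgc : Continuous g)
    (x0 : EuclideanSpace ℝ (Fin n)) (hx0 : g x0 ≤ 0)
    (hb : Bornology.IsBounded {x | g x ≤ 0}) (t : ℝ) :
    Bornology.IsBounded {x | g x ≤ t} := by
  set t' : ℝ := max t 0 with ht'
  have hsub : {x : EuclideanSpace ℝ (Fin n) | g x ≤ t} ⊆ {x | g x ≤ t'} := by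
    intro x hx; exact le_trans hx (le_max_left t 0)
  refine Bornology.IsBounded.subset ?_ hsub
  by_contra hB
  set C : Set (EuclideanSpace ℝ (Fin n)) := {x | g x ≤ t'} with hC
  have hCclosed : IsClosed C := isClosed_le hgc continuous_const
  -- for each R there is a point of C far from x0
  have hfar : ∀ R : ℝ, ∃ x ∈ C, R < ‖x - x0‖ := by
    intro R
    by_contra hcon
    push_neg at hcon
    exact hB ((Metric.isBounded_iff_subset_closedBall x0).2 ⟨R, fun x hx => by
      simpa [Metric.mem_closedBall, dist_eq_norm] using hcon x hx⟩)
  -- nested compact family of directions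
  set K : ℕ → Set (EuclideanSpace ℝ (Fin n)) :=
    fun N => {d | ‖d‖ = 1 ∧ ∀ s ∈ Set.Icc (0:ℝ) (N:ℝ), x0 + s • d ∈ C} with hK
  have hKclosed : ∀ N, IsClosed (K N) := by
    intro N
    refine IsClosed.inter (isClosed_eq continuous_norm continuous_const) ?_
    have heq : {d : EuclideanSpace ℝ (Fin n) | ∀ s ∈ Set.Icc (0:ℝ) (N:ℝ), x0 + s • d ∈ C}
        = ⋂ s ∈ Set.Icc (0:ℝ) (N:ℝ), {d | x0 + s • d ∈ C} := by
      ext d; simp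
    rw [show (fun d : EuclideanSpace ℝ (Fin n) => ∀ s ∈ Set.Icc (0:ℝ) (N:ℝ), x0 + s • d ∈ C)
        = {d : EuclideanSpace ℝ (Fin n) | ∀ s ∈ Set.Icc (0:ℝ) (N:ℝ), x0 + s • d ∈ C} from rfl,
      heq]
    exact isClosed_biInter fun s _ => hCclosed.preimage (continuous_const.add (continuous_id.const_smul s))
  have hKnonempty : ∀ N, (K N).Nonempty := by
    intro N
    obtain ⟨x, hxC, hxfar⟩ := hfar (N : ℝ)
    have hr : (0:ℝ) < ‖x - x0‖ := lt_of_le_of_lt (Nat.cast_nonneg N) hxfar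
    set r : ℝ := ‖x - x0‖
    refine ⟨r⁻¹ • (x - x0), ?_, ?_⟩
    · rw [norm_smul, Real.norm_eq_abs, abs_inv, abs_of_pos hr]
      exact inv_mul_cancel₀ hr.ne'
    · intro s hs
      have hx0C : x0 ∈ C := by
        simp only [hC, Set.mem_setOf_eq]
        exact hx0.trans (le_max_right _ _)
      have hsr : s / r ∈ Set.Icc (0:ℝ) 1 := by
        constructor
        · exact div_nonneg hs.1 hr.le
        · rw [div_le_one hr]
          exact hs.2.trans hxfar.le
      have := hg.convex_le t'
      have hmem := (hg.convex_le t') ⟨trivial, hx0C⟩ ⟨trivial, hxC⟩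
        (by linarith [hsr.1, hsr.2] : (0:ℝ) ≤ 1 - s/r) hsr.1 (by ring)
      have heq : (1 - s/r) • x0 + (s/r) • x = x0 + s • (r⁻¹ • (x - x0)) := by
        rw [smul_smul]
        rw [div_eq_mul_inv, sub_smul, one_smul, mul_comm]
        module
      rw [heq] at hmem
      exact hmem.2
  have hKsub : ∀ N : ℕ, K (N + 1) ⊆ K N := by
    intro N d hd
    exact ⟨hd.1, fun s hs => hd.2 s ⟨hs.1, hs.2.trans (by exact_mod_cast Nat.le_succ N)⟩⟩
  have hK0 : IsCompact (K 0) := by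
    have : K 0 ⊆ Metric.sphere (0 : EuclideanSpace ℝ (Fin n)) 1 := by
      intro d hd; simpa [Metric.mem_sphere, dist_eq_norm] using hd.1
    exact (isCompact_sphere 0 1).of_isClosed_subset (hKclosed 0) this
  obtain ⟨d, hd⟩ := IsCompact.nonempty_iInter_of_sequence_nonempty_isCompact_isClosed
    K hKsub hKnonempty hK0 hKclosed
  simp only [Set.mem_iInter] at hd
  have hdnorm : ‖d‖ = 1 := (hd 0).1
  have hray : ∀ s : ℝ, 0 ≤ s → x0 + s • d ∈ C := by
    intro s hs
    obtain ⟨N, hN⟩ := exists_nat_ge s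
    exact (hd N).2 s ⟨hs, hN⟩
  -- the ray stays in the 0-sublevel set
  have hray0 : ∀ s : ℝ, 0 ≤ s → g (x0 + s • d) ≤ 0 := by
    intro s hs
    have key : ∀ T : ℝ, s < T → g (x0 + s • d) ≤ (s / T) * t' := by
      intro T hT
      have hT0 : 0 < T := lt_of_le_of_lt hs hT
      have hst : s / T ∈ Set.Icc (0:ℝ) 1 :=
        ⟨div_nonneg hs hT0.le, (div_le_one hT0).2 hT.le⟩
      have hTC : g (x0 + T • d) ≤ t' := hray T hT0.le
      have hx0' : g x0 ≤ 0 := hx0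
      have hconv := hg.2 (Set.mem_univ x0) (Set.mem_univ (x0 + T • d))
        (by linarith [hst.1, hst.2] : (0:ℝ) ≤ 1 - s/T) hst.1 (by ring)
      have heq : (1 - s/T) • x0 + (s/T) • (x0 + T • d) = x0 + s • d := by
        rw [smul_add, smul_smul, div_mul_cancel₀ _ hT0.ne']
        try module
      rw [heq] at hconv
      simp only [smul_eq_mul] at hconv
      have h1 : (1 - s/T) * g x0 ≤ 0 :=
        mul_nonpos_of_nonneg_of_nonpos (by linarith [hst.2]) hx0'
      have h2 : (s/T) * g (x0 + T • d) ≤ (s/T) * t' :=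
        mul_le_mul_of_nonneg_left hTC hst.1
      linarith
    have htend : Filter.Tendsto (fun N : ℕ => (s / (N:ℝ)) * t') Filter.atTop (nhds 0) := by
      have h0 : Filter.Tendsto (fun N : ℕ => s * t' / (N:ℝ)) Filter.atTop (nhds 0) :=
        tendsto_const_div_atTop_nhds_zero_nat (s * t')
      exact h0.congr fun N => by ring
    have hev : ∀ᶠ N : ℕ in Filter.atTop, g (x0 + s • d) ≤ (s / (N:ℝ)) * t' := by
      filter_upwards [Filter.eventually_gt_atTop ⌈s⌉₊] with N hN
      exact key N (lt_of_le_of_lt (Nat.le_ceil s) (by exact_mod_cast hN))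
    exact ge_of_tendsto htend hev
  -- contradiction with boundedness of the 0-sublevel set
  obtain ⟨R, hR⟩ := (Metric.isBounded_iff_subset_closedBall x0).1 hb
  have hmem : x0 + (max R 0 + 1) • d ∈ {x | g x ≤ 0} :=
    hray0 _ (by positivity)
  have := hR hmem
  rw [Metric.mem_closedBall, dist_eq_norm] at this
  simp only [add_sub_cancel_left, norm_smul, hdnorm, mul_one,
    Real.norm_eq_abs, abs_of_pos (by positivity : (0:ℝ) < max R 0 + 1)] at this
  linarith [le_max_left R 0]


/-- Under Assumption A (the solution set `X*` is nonempty and bounded), for every interior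
point `y` and every `k > 0`, the extended relaxation set
`Ω_{-1/k}(y) = {x : c i x ≥ -1/k ∀ i, f x ≤ f y}` is convex and bounded. -/
theorem extended_relaxation_set_convex_bounded {n m : ℕ}
    (f : EuclideanSpace ℝ (Fin n) → ℝ)
    (c : Fin m → EuclideanSpace ℝ (Fin n) → ℝ)
    (hfcont : Continuous f) (hf : ConvexOn ℝ Set.univ f)
    (hccont : ∀ i, Continuous (c i))
    (hc : ∀ i, ConcaveOn ℝ Set.univ (c i))
    (Ω : Set (EuclideanSpace ℝ (Fin n)))
    (hΩ : Ω = {x | ∀ i, 0 ≤ c i x})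
    (Xstar : Set (EuclideanSpace ℝ (Fin n)))
    (hXstar : Xstar = {x | x ∈ Ω ∧ ∀ z ∈ Ω, f x ≤ f z})
    (hne : Xstar.Nonempty) (hbd : Bornology.IsBounded Xstar)
    (y : EuclideanSpace ℝ (Fin n)) (hy : ∀ i, 0 < c i y)
    (k : ℝ) (hk : 0 < k) :
    Convex ℝ {x : EuclideanSpace ℝ (Fin n) |
        (∀ i, -1 / k ≤ c i x) ∧ f x ≤ f y} ∧
    Bornology.IsBounded {x : EuclideanSpace ℝ (Fin n) |
        (∀ i, -1 / k ≤ c i x) ∧ f x ≤ f y} := by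
  constructor
  · have hset : {x : EuclideanSpace ℝ (Fin n) | (∀ i, -1 / k ≤ c i x) ∧ f x ≤ f y}
        = (⋂ i, {x | -1 / k ≤ c i x}) ∩ {x | f x ≤ f y} := by
      ext x; simp [Set.mem_iInter]
    rw [hset]
    refine Convex.inter (convex_iInter fun i => ?_) ?_
    · have := (hc i).convex_ge (-1 / k)
      simpa using this
    · have := hf.convex_le (f y)
      simpa using this
  · obtain ⟨xs, hxs⟩ := hne
    rw [hXstar] at hxs
    obtain ⟨hxsΩ, hxsmin⟩ := hxs
    set g : EuclideanSpace ℝ (Fin n) → ℝ :=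
      fun x => max (f x - f xs) (∑ i, max (-(c i x)) 0) with hgdef
    have hg1 : ConvexOn ℝ Set.univ (fun x => f x - f xs) :=
      hf.sub (concaveOn_const _ convex_univ)
    have hg2 : ConvexOn ℝ Set.univ (fun x => ∑ i, max (-(c i x)) 0) :=
      myConvexOn_sum Finset.univ _
        (fun i _ => ((hc i).neg).sup (convexOn_const 0 convex_univ))
    have hg : ConvexOn ℝ Set.univ g := hg1.sup hg2
    have hgc : Continuous g :=
      (hfcont.sub continuous_const).max
        (continuous_finset_sum _ fun i _ => ((hccont i).neg).max continuous_const)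
    have hterm_nonneg : ∀ (x : EuclideanSpace ℝ (Fin n)) (i : Fin m),
        0 ≤ max (-(c i x)) 0 := fun x i => le_max_right _ _
    have hgzero : {x | g x ≤ 0} = Xstar := by
      ext x
      rw [hXstar]
      simp only [Set.mem_setOf_eq, hgdef, max_le_iff, hΩ]
      constructor
      · rintro ⟨h1, h2⟩
        have hsum0 : ∑ i, max (-(c i x)) 0 = 0 :=
          le_antisymm h2 (Finset.sum_nonneg fun i _ => hterm_nonneg x i)
        have hci : ∀ i, 0 ≤ c i x := by
          intro i
          have := (Finset.sum_eq_zero_iff_of_nonneg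
            (fun i _ => hterm_nonneg x i)).1 hsum0 i (Finset.mem_univ i)
          have hle : -(c i x) ≤ 0 := le_of_le_of_eq (le_max_left _ _) this
          linarith
        refine ⟨hci, fun z hz => ?_⟩
        have := hxsmin z (by rw [hΩ]; exact hz)
        linarith
      · rintro ⟨h1, h2⟩
        refine ⟨by linarith [h2 xs (by rw [hΩ] at hxsΩ; exact hxsΩ)], ?_⟩
        have : ∀ i ∈ Finset.univ, max (-(c i x)) 0 = 0 := by
          intro i _
          exact max_eq_right (by linarith [h1 i])
        rw [Finset.sum_congr rfl this]
        simp
    have hbd0 : Bornology.IsBounded {x | g x ≤ 0} := hgzero ▸ hbd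
    have hxs0 : g xs ≤ 0 := by
      have : xs ∈ Xstar := by rw [hXstar]; exact ⟨hxsΩ, hxsmin⟩
      rw [← hgzero] at this
      exact this
    have hmain := sublevel_bounded g hg hgc xs hxs0 hbd0
      (max (f y - f xs) ((m : ℝ) / k))
    refine hmain.subset ?_
    rintro x ⟨h1, h2⟩
    simp only [Set.mem_setOf_eq, hgdef, max_le_iff]
    constructor
    · exact le_max_of_le_left (by linarith)
    · refine le_max_of_le_right ?_
      have hsum : ∑ i, max (-(c i x)) 0 ≤ ∑ _i : Fin m, 1 / k := by
        refine Finset.sum_le_sum fun i _ => ?_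
        refine max_le ?_ (by positivity)
        have := h1 i
        rw [neg_div] at this
        linarith
      calc ∑ i, max (-(c i x)) 0 ≤ ∑ _i : Fin m, 1 / k := hsum
        _ = (m : ℝ) / k := by
            rw [Finset.sum_const, Finset.card_univ, Fintype.card_fin, nsmul_eq_mul]
            ring
end

section
/- Let f : ℝⁿ → ℝ be convex, c_i : ℝⁿ → ℝ concave (i = 1,…,m), y ∈ ℝⁿ, k > 0, and λ ∈ ℝ^m with λ_i ≥ 0 for all i. Then the exterior distance function x ↦ 𝓛_y(x,λ,k) = −ln(f(y) − f(x)) − k⁻¹ Σ_{i=1}^m λ_i ln(k c_i(x) + 1) is convex on the convex set {x ∈ ℝⁿ : f(x) < f(y) and c_i(x) > −1/k for i = 1,…,m}. -/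
open Real

private lemma neg_log_convexOn {E : Type*} [AddCommGroup E] [Module ℝ E]
    {s : Set E} (hs : Convex ℝ s) {g : E → ℝ} (hg : ConcaveOn ℝ s g)
    (hpos : ∀ x ∈ s, 0 < g x) : ConvexOn ℝ s (fun x => -Real.log (g x)) := by
  refine ⟨hs, fun x hx y hy a b ha hb hab => ?_⟩
  have hgx := hpos x hx
  have hgy := hpos y hy
  have hco := hg.2 hx hy ha hb hab
  simp only [smul_eq_mul] at hco ⊢
  have hpos2 : 0 < a * g x + b * g y := by
    rcases eq_or_lt_of_le ha with h | h
    · have hb1 : b = 1 := by linarith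
      simp [← h, hb1, hgy]
    · nlinarith
  have h1 : Real.log (a * g x + b * g y) ≤ Real.log (g (a • x + b • y)) :=
    Real.log_le_log hpos2 hco
  have h2 : a * Real.log (g x) + b * Real.log (g y) ≤ Real.log (a * g x + b * g y) := by
    have := (strictConcaveOn_log_Ioi.concaveOn).2 (Set.mem_Ioi.mpr hgx)
      (Set.mem_Ioi.mpr hgy) ha hb hab
    simpa using this
  linarith

private lemma convexOn_finset_sum {ι E : Type*} [DecidableEq ι] [AddCommGroup E] [Module ℝ E]
    {s : Set E} (hs : Convex ℝ s) (t : Finset ι) {g : ι → E → ℝ}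
    (h : ∀ i ∈ t, ConvexOn ℝ s (g i)) :
    ConvexOn ℝ s (fun x => ∑ i ∈ t, g i x) := by
  induction t using Finset.induction with
  | empty => simpa using convexOn_const 0 hs
  | insert i t hni ih =>
    simp only [Finset.sum_insert hni]
    exact (h i (Finset.mem_insert_self i t)).add
      (ih fun j hj => h j (Finset.mem_insert_of_mem hj))

/-- The exterior distance function
`𝓛_y(x,λ,k) = -ln (f y - f x) - k⁻¹ ∑ i, λ i * ln (k * c i x + 1)`
is convex on the convex set `{x : f x < f y ∧ c i x > -1/k ∀ i}` whenever `f` is convex,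
the `c i` are concave, `k > 0` and `λ ≥ 0`. -/
theorem EDF_convexOn {n m : ℕ}
    (f : EuclideanSpace ℝ (Fin n) → ℝ)
    (c : Fin m → EuclideanSpace ℝ (Fin n) → ℝ)
    (hf : ConvexOn ℝ Set.univ f)
    (hc : ∀ i, ConcaveOn ℝ Set.univ (c i))
    (y : EuclideanSpace ℝ (Fin n))
    (k : ℝ) (hk : 0 < k)
    (lam : Fin m → ℝ) (hlam : ∀ i, 0 ≤ lam i) :
    Convex ℝ {x : EuclideanSpace ℝ (Fin n) | f x < f y ∧ ∀ i, -1 / k < c i x} ∧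
    ConvexOn ℝ {x : EuclideanSpace ℝ (Fin n) | f x < f y ∧ ∀ i, -1 / k < c i x}
      (fun x => -Real.log (f y - f x)
        - k⁻¹ * ∑ i, lam i * Real.log (k * c i x + 1)) := by
  set S := {x : EuclideanSpace ℝ (Fin n) | f x < f y ∧ ∀ i, -1 / k < c i x} with hS
  have hSconv : Convex ℝ S := by
    intro x hx z hz a b ha hb hab
    obtain ⟨hx1, hx2⟩ := hx
    obtain ⟨hz1, hz2⟩ := hz
    constructor
    · have hle := hf.2 (Set.mem_univ x) (Set.mem_univ z) ha hb hab
      simp only [smul_eq_mul] at hle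
      have hfact : a * f y + b * f y = f y := by rw [← add_mul, hab, one_mul]
      rcases eq_or_lt_of_le ha with h | h
      · have := mul_le_mul_of_nonneg_left hz1.le hb
        have hax : a * f x = a * f y := by rw [← h]; ring
        have hbz : b * f z < b * f y := by
          have hb1 : b = 1 := by linarith
          rw [hb1]; simpa using hz1
        linarith
      · have h1 := mul_lt_mul_of_pos_left hx1 h
        have h2 := mul_le_mul_of_nonneg_left hz1.le hb
        linarith
    · intro i
      have hge := (hc i).2 (Set.mem_univ x) (Set.mem_univ z) ha hb hab
      simp only [smul_eq_mul] at hge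
      have h1 := hx2 i
      have h2 := hz2 i
      have hfact : a * (-1 / k) + b * (-1 / k) = -1 / k := by rw [← add_mul, hab, one_mul]
      rcases eq_or_lt_of_le ha with h | h
      · have hax : a * c i x = a * (-1 / k) := by rw [← h]; ring
        have hbz : b * (-1 / k) < b * c i z := by
          have hb1 : b = 1 := by linarith
          rw [hb1]; simpa using h2
        linarith
      · have h3 := mul_lt_mul_of_pos_left h1 h
        have h4 := mul_le_mul_of_nonneg_left h2.le hb
        linarith
  refine ⟨hSconv, ?_⟩
  -- first part: -log (f y - f x)
  have hg1 : ConcaveOn ℝ S (fun x => f y - f x) := by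
    have : ConcaveOn ℝ Set.univ (fun x => -f x + f y) := hf.neg.add_const (f y)
    have := this.subset (Set.subset_univ S) hSconv
    simpa [sub_eq_neg_add] using this
  have hF1 : ConvexOn ℝ S (fun x => -Real.log (f y - f x)) :=
    neg_log_convexOn hSconv hg1 (fun x hx => by have := hx.1; simp only [hS] at hx; linarith [hx.1])
  -- second part
  have hF2 : ConvexOn ℝ S
      (fun x => ∑ i, k⁻¹ * (lam i * -Real.log (k * c i x + 1))) := by
    refine convexOn_finset_sum hSconv _ (fun i _ => ?_)
    have hgi : ConcaveOn ℝ S (fun x => k * c i x + 1) := by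
      have h1 : ConcaveOn ℝ Set.univ (fun x => k * c i x) := (hc i).smul hk.le
      have := (h1.add_const 1).subset (Set.subset_univ S) hSconv
      exact this
    have hgpos : ∀ x ∈ S, 0 < k * c i x + 1 := by
      intro x hx
      have h2 := hx.2 i
      have : -1 / k < c i x := h2
      have := (div_lt_iff₀ hk).mp this
      nlinarith
    have hlog := neg_log_convexOn hSconv hgi hgpos
    have := (hlog.smul (hlam i)).smul (inv_nonneg.mpr hk.le)
    simpa [smul_eq_mul] using this
  have h := hF1.add hF2
  have heq : (fun x => -Real.log (f y - f x)
        - k⁻¹ * ∑ i, lam i * Real.log (k * c i x + 1))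
      = (fun x => -Real.log (f y - f x)
        + ∑ i, k⁻¹ * (lam i * -Real.log (k * c i x + 1))) := by
    funext x
    rw [← Finset.mul_sum]
    simp only [mul_neg, Finset.sum_neg_distrib, mul_neg]
    ring
  rw [heq]
  exact h
end

section
/- Let f, c_i : ℝⁿ → ℝ (i = 1,…,m) be twice differentiable, y ∈ ℝⁿ, and let (x*, λ*) satisfy f(x*) < f(y), c_i(x*) ≥ 0, λ*_i ≥ 0, λ*_i c_i(x*) = 0 for all i, and (f(y) − f(x*))⁻¹ ∇f(x*) = Σ λ*_i ∇c_i(x*). Set Δ = f(y) − f(x*). Then for every k > 0 the Hessian in x of the exterior distance function at (x*, λ*) equals ∇²_{xx}𝓛_y(x*,λ*,k) = Δ⁻² ∇f(x*)∇f(x*)ᵀ + Δ⁻¹ ∇²f(x*) − Σ_{i=1}^m λ*_i ∇²c_i(x*) + k Σ_{i=1}^m λ*_i ∇c_i(x*)∇c_i(x*)ᵀ, i.e. ∇²_{xx}𝓛_y(x*,λ*,k) = ∇²_{xx}L_y(x*,λ*) + k ∇c(x*)ᵀ Λ* ∇c(x*), where Λ* = diag(λ*_i). -/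
open Real RealInnerProductSpace

private lemma inner_gradient_eq {n : ℕ} (g : EuclideanSpace ℝ (Fin n) → ℝ)
    (x u : EuclideanSpace ℝ (Fin n)) : ⟪gradient g x, u⟫ = fderiv ℝ g x u := by
  rw [gradient]; exact InnerProductSpace.toDual_symm_apply

set_option maxHeartbeats 1000000 in
/-- At a KKT pair `(x*, λ*)` with `Δ = f y - f x*`, for every `k > 0` the Hessian in `x`
of the EDF `𝓛_y(·,λ*,k)` at `x*` equals (as a bilinear form)
`Δ⁻² ∇f∇fᵀ + Δ⁻¹ ∇²f - ∑ λ*_i ∇²c_i + k ∑ λ*_i ∇c_i∇c_iᵀ`, i.e.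
`∇²𝓛_y(x*,λ*,k) = ∇²L_y(x*,λ*) + k ∇c(x*)ᵀ Λ* ∇c(x*)`. -/
theorem EDF_hessian_at_KKT {n m : ℕ}
    (f : EuclideanSpace ℝ (Fin n) → ℝ)
    (c : Fin m → EuclideanSpace ℝ (Fin n) → ℝ)
    (hf : ContDiff ℝ 2 f) (hc : ∀ i, ContDiff ℝ 2 (c i))
    (y xstar : EuclideanSpace ℝ (Fin n)) (lamstar : Fin m → ℝ)
    (hlt : f xstar < f y)
    (hfeas : ∀ i, 0 ≤ c i xstar)
    (hdual : ∀ i, 0 ≤ lamstar i)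
    (hcomp : ∀ i, lamstar i * c i xstar = 0)
    (hstat : (f y - f xstar)⁻¹ • gradient f xstar
        = ∑ i, lamstar i • gradient (c i) xstar)
    (k : ℝ) (hk : 0 < k) :
    ∀ u v : EuclideanSpace ℝ (Fin n),
      (fderiv ℝ (fderiv ℝ (fun x => -Real.log (f y - f x)
          - k⁻¹ * ∑ i, lamstar i * Real.log (k * c i x + 1))) xstar) u v
        = ((f y - f xstar)⁻¹) ^ 2 * (⟪gradient f xstar, u⟫ * ⟪gradient f xstar, v⟫)
          + (f y - f xstar)⁻¹ * (fderiv ℝ (fderiv ℝ f) xstar) u v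
          - ∑ i, lamstar i * (fderiv ℝ (fderiv ℝ (c i)) xstar) u v
          + k * ∑ i, lamstar i *
              (⟪gradient (c i) xstar, u⟫ * ⟪gradient (c i) xstar, v⟫) ∧
      (fderiv ℝ (fderiv ℝ (fun x => -Real.log (f y - f x)
          - k⁻¹ * ∑ i, lamstar i * Real.log (k * c i x + 1))) xstar) u v
        = (fderiv ℝ (fderiv ℝ (fun x => -Real.log (f y - f x)
            - ∑ i, lamstar i * c i x)) xstar) u v
          + k * ∑ i, lamstar i *
              (⟪gradient (c i) xstar, u⟫ * ⟪gradient (c i) xstar, v⟫) := by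
  classical
  -- differentiability facts
  have hfd : ∀ x : EuclideanSpace ℝ (Fin n), HasFDerivAt f (fderiv ℝ f x) x := fun x =>
    ((hf.differentiable two_ne_zero) x).hasFDerivAt
  have hcd : ∀ i, ∀ x : EuclideanSpace ℝ (Fin n), HasFDerivAt (c i) (fderiv ℝ (c i) x) x := fun i x =>
    (((hc i).differentiable two_ne_zero) x).hasFDerivAt
  have hFd : HasFDerivAt (fderiv ℝ f) (fderiv ℝ (fderiv ℝ f) xstar) xstar :=
    (((hf.fderiv_right (m := 1) (le_refl 2)).differentiable one_ne_zero) xstar).hasFDerivAt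
  have hCd : ∀ i, HasFDerivAt (fderiv ℝ (c i)) (fderiv ℝ (fderiv ℝ (c i)) xstar) xstar :=
    fun i => ((((hc i).fderiv_right (m := 1) (le_refl 2)).differentiable one_ne_zero) xstar).hasFDerivAt
  have hΔ : 0 < f y - f xstar := sub_pos.mpr hlt
  -- neighborhood facts
  have hU : ∀ᶠ x in nhds xstar, 0 < f y - f x := by
    have hcont : Continuous fun x : EuclideanSpace ℝ (Fin n) => f y - f x := continuous_const.sub hf.continuous
    exact (isOpen_Ioi.preimage hcont).mem_nhds (by simpa using hΔ)
  have hV : ∀ᶠ x in nhds xstar, ∀ i, 0 < k * c i x + 1 := by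
    rw [Filter.eventually_all]
    intro i
    have hcont : Continuous fun x : EuclideanSpace ℝ (Fin n) => k * c i x + 1 :=
      ((continuous_const.mul (hc i).continuous).add continuous_const)
    refine (isOpen_Ioi.preimage hcont).mem_nhds ?_
    have h1 := mul_nonneg hk.le (hfeas i); simp only [Set.mem_preimage, Set.mem_Ioi]; linarith
  -- first derivative of the EDF
  set φ : EuclideanSpace ℝ (Fin n) → ℝ := fun x => -Real.log (f y - f x)
      - k⁻¹ * ∑ i, lamstar i * Real.log (k * c i x + 1) with hφ
  set G : EuclideanSpace ℝ (Fin n) → (EuclideanSpace ℝ (Fin n) →L[ℝ] ℝ) := fun x =>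
    (f y - f x)⁻¹ • fderiv ℝ f x
      - k⁻¹ • ∑ i, lamstar i • ((k * c i x + 1)⁻¹ • (k • fderiv ℝ (c i) x)) with hG
  have hφG : ∀ x : EuclideanSpace ℝ (Fin n), 0 < f y - f x → (∀ i, 0 < k * c i x + 1) →
      HasFDerivAt φ (G x) x := by
    intro x hx1 hx2
    have h1 : HasFDerivAt (fun x : EuclideanSpace ℝ (Fin n) => f y - f x) (-(fderiv ℝ f x)) x :=
      (hfd x).const_sub (f y)
    have h2 : HasFDerivAt (fun x : EuclideanSpace ℝ (Fin n) => -Real.log (f y - f x))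
        ((f y - f x)⁻¹ • fderiv ℝ f x) x := by
      have := (h1.log hx1.ne').fun_neg
      simpa [smul_neg] using this
    have h3 : ∀ i, HasFDerivAt (fun x : EuclideanSpace ℝ (Fin n) => lamstar i * Real.log (k * c i x + 1))
        (lamstar i • ((k * c i x + 1)⁻¹ • (k • fderiv ℝ (c i) x))) x := by
      intro i
      have hi : HasFDerivAt (fun x : EuclideanSpace ℝ (Fin n) => k * c i x + 1) (k • fderiv ℝ (c i) x) x :=
        ((hcd i x).const_mul k).add_const 1
      exact (hi.log (hx2 i).ne').const_mul (lamstar i)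
    have h4 : HasFDerivAt (fun x : EuclideanSpace ℝ (Fin n) => k⁻¹ * ∑ i, lamstar i * Real.log (k * c i x + 1))
        (k⁻¹ • ∑ i, lamstar i • ((k * c i x + 1)⁻¹ • (k • fderiv ℝ (c i) x))) x :=
      (HasFDerivAt.fun_sum fun i _ => h3 i).const_mul k⁻¹
    exact h2.sub h4
  have hfe : fderiv ℝ φ =ᶠ[nhds xstar] G := by
    filter_upwards [hU, hV] with x h1 h2
    exact (hφG x h1 h2).fderiv
  -- second derivative blocks
  have h1s : HasFDerivAt (fun x : EuclideanSpace ℝ (Fin n) => f y - f x) (-(fderiv ℝ f xstar)) xstar :=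
    (hfd xstar).const_sub (f y)
  have ha : HasFDerivAt (fun x : EuclideanSpace ℝ (Fin n) => (f y - f x)⁻¹)
      (((f y - f xstar) ^ 2)⁻¹ • fderiv ℝ f xstar) xstar := by
    have := (hasDerivAt_inv hΔ.ne').comp_hasFDerivAt xstar h1s
    simpa [Function.comp_def, smul_smul, neg_smul, smul_neg] using this
  have term1 : HasFDerivAt (fun x : EuclideanSpace ℝ (Fin n) => (f y - f x)⁻¹ • fderiv ℝ f x)
      ((f y - f xstar)⁻¹ • fderiv ℝ (fderiv ℝ f) xstar
        + (((f y - f xstar) ^ 2)⁻¹ • fderiv ℝ f xstar).smulRight (fderiv ℝ f xstar)) xstar :=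
    ha.smul hFd
  have hbterm : ∀ i, HasFDerivAt
      (fun x : EuclideanSpace ℝ (Fin n) => lamstar i • ((k * c i x + 1)⁻¹ • (k • fderiv ℝ (c i) x)))
      (lamstar i • ((k * c i xstar + 1)⁻¹ • (k • fderiv ℝ (fderiv ℝ (c i)) xstar)
        + ((-(((k * c i xstar + 1)) ^ 2)⁻¹) • (k • fderiv ℝ (c i) xstar)).smulRight
            (k • fderiv ℝ (c i) xstar))) xstar := by
    intro i
    have hti : 0 < k * c i xstar + 1 := by have := mul_nonneg hk.le (hfeas i); linarith
    have hsi : HasFDerivAt (fun x : EuclideanSpace ℝ (Fin n) => k * c i x + 1) (k • fderiv ℝ (c i) xstar) xstar :=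
      ((hcd i xstar).const_mul k).add_const 1
    have hb : HasFDerivAt (fun x : EuclideanSpace ℝ (Fin n) => (k * c i x + 1)⁻¹)
        ((-(((k * c i xstar + 1)) ^ 2)⁻¹) • (k • fderiv ℝ (c i) xstar)) xstar := by
      have := (hasDerivAt_inv hti.ne').comp_hasFDerivAt xstar hsi
      simpa [Function.comp_def] using this
    exact (hb.smul ((hCd i).const_smul k)).const_smul (lamstar i)
  have hG' : HasFDerivAt G
      (((f y - f xstar)⁻¹ • fderiv ℝ (fderiv ℝ f) xstar
        + (((f y - f xstar) ^ 2)⁻¹ • fderiv ℝ f xstar).smulRight (fderiv ℝ f xstar))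
       - k⁻¹ • ∑ i, lamstar i • ((k * c i xstar + 1)⁻¹ • (k • fderiv ℝ (fderiv ℝ (c i)) xstar)
        + ((-(((k * c i xstar + 1)) ^ 2)⁻¹) • (k • fderiv ℝ (c i) xstar)).smulRight
            (k • fderiv ℝ (c i) xstar))) xstar :=
    term1.sub ((HasFDerivAt.fun_sum fun i _ => hbterm i).const_smul k⁻¹)
  have key : fderiv ℝ (fderiv ℝ φ) xstar = fderiv ℝ G xstar := hfe.fderiv_eq
  -- complementarity consequences
  have hl1 : ∀ i, lamstar i * (k * c i xstar + 1)⁻¹ = lamstar i := by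
    intro i
    rcases mul_eq_zero.mp (hcomp i) with h | h
    · simp [h]
    · simp [h]
  have hl2 : ∀ i, lamstar i * ((k * c i xstar + 1) ^ 2)⁻¹ = lamstar i := by
    intro i
    rcases mul_eq_zero.mp (hcomp i) with h | h
    · simp [h]
    · simp [h]
  intro u v
  -- the EDF Hessian formula
  have main : (fderiv ℝ (fderiv ℝ φ) xstar) u v
      = ((f y - f xstar)⁻¹) ^ 2 * (fderiv ℝ f xstar u * fderiv ℝ f xstar v)
        + (f y - f xstar)⁻¹ * (fderiv ℝ (fderiv ℝ f) xstar) u v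
        - ∑ i, lamstar i * (fderiv ℝ (fderiv ℝ (c i)) xstar) u v
        + k * ∑ i, lamstar i * (fderiv ℝ (c i) xstar u * fderiv ℝ (c i) xstar v) := by
    rw [key, hG'.fderiv]
    simp only [ContinuousLinearMap.sub_apply, ContinuousLinearMap.add_apply,
      ContinuousLinearMap.smul_apply, ContinuousLinearMap.smulRight_apply,
      ContinuousLinearMap.coe_smul', Pi.smul_apply, ContinuousLinearMap.coe_sum',
      Finset.sum_apply, smul_eq_mul, ContinuousLinearMap.sum_apply, neg_mul, mul_neg,
      neg_neg]
    rw [Finset.mul_sum, Finset.mul_sum]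
    have hsum1 : ∀ i, k⁻¹ * (lamstar i * ((k * c i xstar + 1)⁻¹ *
          (k * (fderiv ℝ (fderiv ℝ (c i)) xstar) u v)
        + -(((k * c i xstar + 1) ^ 2)⁻¹ * (k * fderiv ℝ (c i) xstar u)
            * (k * fderiv ℝ (c i) xstar v))))
        = lamstar i * (fderiv ℝ (fderiv ℝ (c i)) xstar) u v
          - k * (lamstar i * (fderiv ℝ (c i) xstar u * fderiv ℝ (c i) xstar v)) := by
      intro i
      rcases mul_eq_zero.mp (hcomp i) with h | h
      · simp [h]
      · have hk' := hk.ne'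
        rw [h]
        field_simp
        ring
    simp only [hsum1, Finset.sum_sub_distrib, inv_pow]
    ring
  -- Hessian of the classical Lagrangian
  set L : EuclideanSpace ℝ (Fin n) → ℝ :=
    fun x => -Real.log (f y - f x) - ∑ i, lamstar i * c i x with hL
  set GLag : EuclideanSpace ℝ (Fin n) → (EuclideanSpace ℝ (Fin n) →L[ℝ] ℝ) := fun x =>
    (f y - f x)⁻¹ • fderiv ℝ f x - ∑ i, lamstar i • fderiv ℝ (c i) x with hGLdef
  have hLG : ∀ x : EuclideanSpace ℝ (Fin n), 0 < f y - f x → HasFDerivAt L (GLag x) x := by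
    intro x hx1
    have h1 : HasFDerivAt (fun x : EuclideanSpace ℝ (Fin n) => f y - f x)
        (-(fderiv ℝ f x)) x := (hfd x).const_sub (f y)
    have h2 : HasFDerivAt (fun x : EuclideanSpace ℝ (Fin n) => -Real.log (f y - f x))
        ((f y - f x)⁻¹ • fderiv ℝ f x) x := by
      have := (h1.log hx1.ne').fun_neg
      simpa [smul_neg] using this
    exact h2.sub (HasFDerivAt.fun_sum fun i _ => (hcd i x).const_mul (lamstar i))
  have hfeL : fderiv ℝ L =ᶠ[nhds xstar] GLag := by
    filter_upwards [hU] with x h1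
    exact (hLG x h1).fderiv
  have keyL : fderiv ℝ (fderiv ℝ L) xstar = fderiv ℝ GLag xstar := hfeL.fderiv_eq
  have hGL' : HasFDerivAt GLag
      (((f y - f xstar)⁻¹ • fderiv ℝ (fderiv ℝ f) xstar
        + (((f y - f xstar) ^ 2)⁻¹ • fderiv ℝ f xstar).smulRight (fderiv ℝ f xstar))
       - ∑ i, lamstar i • fderiv ℝ (fderiv ℝ (c i)) xstar) xstar :=
    term1.sub (HasFDerivAt.fun_sum fun i _ => (hCd i).const_smul (lamstar i))
  have mainL : (fderiv ℝ (fderiv ℝ L) xstar) u v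
      = ((f y - f xstar)⁻¹) ^ 2 * (fderiv ℝ f xstar u * fderiv ℝ f xstar v)
        + (f y - f xstar)⁻¹ * (fderiv ℝ (fderiv ℝ f) xstar) u v
        - ∑ i, lamstar i * (fderiv ℝ (fderiv ℝ (c i)) xstar) u v := by
    rw [keyL, hGL'.fderiv]
    simp only [ContinuousLinearMap.sub_apply, ContinuousLinearMap.add_apply,
      ContinuousLinearMap.smul_apply, ContinuousLinearMap.smulRight_apply,
      ContinuousLinearMap.coe_smul', Pi.smul_apply, ContinuousLinearMap.coe_sum',
      Finset.sum_apply, smul_eq_mul, ContinuousLinearMap.sum_apply, inv_pow]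
    ring
  constructor
  · simpa only [inner_gradient_eq] using main
  · simp only [inner_gradient_eq]
    rw [main, mainL]
end

section
/- Let f, c_i : ℝⁿ → ℝ (i = 1,…,m) be twice differentiable, y ∈ ℝⁿ, and let (x*, λ*) be a KKT pair with f(x*) < f(y), active set I* = {1,…,r} (c_i(x*) = 0 and λ*_i > 0 for i ≤ r; c_i(x*) > 0 and λ*_i = 0 for i > r). Assume the second order sufficient optimality condition: there is μ > 0 with ⟨∇²_{xx}L_y(x*,λ*)u, u⟩ ≥ μ‖u‖² for all u with ⟨∇c_i(x*), u⟩ = 0, i = 1,…,r, and the gradients ∇c_1(x*),…,∇c_r(x*) are linearly independent. Then there exist k₀ > 0 and ρ with 0 < ρ < μ such that for every k ≥ k₀ and every u ∈ ℝⁿ, ⟨∇²_{xx}𝓛_y(x*,λ*,k)u, u⟩ ≥ ρ‖u‖², i.e. the EDF is strongly convex at x*. -/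
open Real RealInnerProductSpace

private theorem hess_pen {n m : ℕ} (c : Fin m → EuclideanSpace ℝ (Fin n) → ℝ)
    (hc : ∀ i, ContDiff ℝ 2 (c i)) (lam : Fin m → ℝ)
    (xs : EuclideanSpace ℝ (Fin n)) (act : Finset (Fin m)) (hact0 : ∀ i ∈ act, c i xs = 0)
    (k : ℝ) (hk : 0 < k) (u : EuclideanSpace ℝ (Fin n)) :
    fderiv ℝ (fderiv ℝ (fun x => ∑ i ∈ act,
        lam i * (c i x - k⁻¹ * Real.log (k * c i x + 1)))) xs u u
      = ∑ i ∈ act, k * lam i * ((fderiv ℝ (c i) xs) u)^2 := by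
  classical
  set G : EuclideanSpace ℝ (Fin n) → (EuclideanSpace ℝ (Fin n) →L[ℝ] ℝ) := fun x => ∑ i ∈ act,
    (lam i * (1 - (k * c i x + 1)⁻¹)) • fderiv ℝ (c i) x with hG
  -- neighborhood where all k * c i x + 1 > 0
  have hVnhds : ∀ᶠ x in nhds xs, ∀ i ∈ act, 0 < k * c i x + 1 := by
    rw [Filter.eventually_all_finset]
    intro i hi
    have hcont : Continuous fun x => k * c i x + 1 :=
      (continuous_const.mul ((hc i).continuous)).add continuous_const
    have : (fun x => k * c i x + 1) xs ∈ Set.Ioi (0:ℝ) := by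
      simp [hact0 i hi]
    exact hcont.continuousAt.eventually_mem (isOpen_Ioi.mem_nhds (by simpa using this))
  -- on that neighborhood, fderiv of the sum is G
  have hevh : fderiv ℝ (fun x => ∑ i ∈ act,
      lam i * (c i x - k⁻¹ * Real.log (k * c i x + 1))) =ᶠ[nhds xs] G := by
    filter_upwards [hVnhds] with x hx
    have : HasFDerivAt (fun x => ∑ i ∈ act,
        lam i * (c i x - k⁻¹ * Real.log (k * c i x + 1))) (G x) x := by
      rw [hG]
      apply HasFDerivAt.fun_sum
      intro i hi
      have hci : HasFDerivAt (c i) (fderiv ℝ (c i) x) x :=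
        (((hc i).differentiable two_ne_zero) x).hasFDerivAt
      have hlin : HasFDerivAt (fun z => k * c i z + 1) (k • fderiv ℝ (c i) x) x :=
        (hci.const_mul k).add_const 1
      have hlog : HasFDerivAt (fun z => Real.log (k * c i z + 1))
          ((k * c i x + 1)⁻¹ • (k • fderiv ℝ (c i) x)) x :=
        by have := (Real.hasDerivAt_log (ne_of_gt (hx i hi))).comp_hasFDerivAt x hlin; exact this
      have := ((hci.sub (hlog.const_mul k⁻¹)).const_mul (lam i))
      refine this.congr_fderiv ?_
      ext v
      simp only [ContinuousLinearMap.smul_apply, ContinuousLinearMap.sub_apply,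
        smul_eq_mul]
      field_simp
    exact this.fderiv
  rw [hevh.fderiv_eq]
  -- now differentiate G at xs
  have hD : HasFDerivAt G (∑ i ∈ act,
      (ContinuousLinearMap.smulRight ((k * lam i) • fderiv ℝ (c i) xs)
        (fderiv ℝ (c i) xs))) xs := by
    rw [hG]
    apply HasFDerivAt.fun_sum
    intro i hi
    have hci : HasFDerivAt (c i) (fderiv ℝ (c i) xs) xs :=
      (((hc i).differentiable two_ne_zero) xs).hasFDerivAt
    have hlin : HasFDerivAt (fun z => k * c i z + 1) (k • fderiv ℝ (c i) xs) xs :=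
      (hci.const_mul k).add_const 1
    have hinv : HasFDerivAt (fun z => (k * c i z + 1)⁻¹)
        (-((k * c i xs + 1) ^ 2)⁻¹ • (k • fderiv ℝ (c i) xs)) xs := by
      have := (hasDerivAt_inv (x := k * c i xs + 1) (by simp [hact0 i hi])).comp_hasFDerivAt xs hlin
      simpa [smul_smul, mul_comm, Function.comp_def] using this
    have hs : HasFDerivAt (fun z => lam i * (1 - (k * c i z + 1)⁻¹))
        ((lam i) • ((0 : EuclideanSpace ℝ (Fin n) →L[ℝ] ℝ)
          - (-((k * c i xs + 1) ^ 2)⁻¹ • (k • fderiv ℝ (c i) xs)))) xs :=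
      ((hasFDerivAt_const (1:ℝ) xs).sub hinv).const_mul (lam i)
    have hM : HasFDerivAt (fun z => fderiv ℝ (c i) z)
        (fderiv ℝ (fun z => fderiv ℝ (c i) z) xs) xs :=
      ((((hc i).fderiv_right (m := 1) (by norm_num)).differentiable one_ne_zero) xs).hasFDerivAt
    have := hs.smul hM
    refine this.congr_fderiv ?_
    have h0 : c i xs = 0 := hact0 i hi
    ext v w
    simp [h0, ContinuousLinearMap.smulRight_apply, ContinuousLinearMap.add_apply,
      ContinuousLinearMap.smul_apply, ContinuousLinearMap.sub_apply,
      ContinuousLinearMap.zero_apply, smul_eq_mul]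
    exact Or.inl (by ring)
  rw [hD.fderiv]
  simp only [ContinuousLinearMap.sum_apply, ContinuousLinearMap.smulRight_apply,
    ContinuousLinearMap.smul_apply, smul_eq_mul]
  exact Finset.sum_congr rfl fun i _ => by ring

private theorem coercive_on_span {n : ℕ} {ι : Type*} [Fintype ι]
    (g : ι → EuclideanSpace ℝ (Fin n)) (lam : ι → ℝ) (hlam : ∀ i, 0 < lam i) :
    ∃ α > 0, ∀ w ∈ Submodule.span ℝ (Set.range g),
      α * ‖w‖^2 ≤ ∑ i, lam i * (⟪g i, w⟫)^2 := by
  classical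
  set W : Submodule ℝ (EuclideanSpace ℝ (Fin n)) := Submodule.span ℝ (Set.range g) with hW
  let T : EuclideanSpace ℝ (Fin n) →ₗ[ℝ] EuclideanSpace ℝ ι :=
    { toFun := fun u => WithLp.toLp 2 (fun i => Real.sqrt (lam i) * ⟪g i, u⟫)
      map_add' := by intro a b; ext i; simp [inner_add_right, mul_add]
      map_smul' := by intro t a; ext i; simp [inner_smul_right]; ring }
  let T' : W →ₗ[ℝ] EuclideanSpace ℝ ι := T.comp W.subtype
  have hker : LinearMap.ker T' = ⊥ := by
    rw [eq_bot_iff]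
    rintro ⟨w, hwW⟩ hw
    simp only [LinearMap.mem_ker] at hw
    have hTw : ∀ i, Real.sqrt (lam i) * ⟪g i, w⟫ = 0 := fun i => by
      have := congrArg (fun z => z i) hw; simpa [T', T] using this
    have hin : ∀ i, ⟪g i, w⟫ = 0 := by
      intro i
      have := hTw i
      have hs : Real.sqrt (lam i) ≠ 0 := ne_of_gt (Real.sqrt_pos.2 (hlam i))
      exact (mul_eq_zero.1 this).resolve_left hs
    have hwO : w ∈ Wᗮ := by
      rw [Submodule.mem_orthogonal]
      intro u hu
      induction hu using Submodule.span_induction with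
      | mem x hx => obtain ⟨i, rfl⟩ := hx; exact hin i
      | zero => simp
      | add a b _ _ ha hb => simp [inner_add_left, ha, hb]
      | smul t a _ ha => simp [inner_smul_left, ha]
    have : w = 0 := by
      have h0 : ⟪w, w⟫ = 0 := (Submodule.mem_orthogonal W w).1 hwO w hwW
      exact inner_self_eq_zero.1 h0
    simp [this]
  obtain ⟨K, hK0, hK⟩ := T'.exists_antilipschitzWith hker
  refine ⟨((K:ℝ)^2)⁻¹, by positivity, ?_⟩
  intro w hwW
  set w' : W := ⟨w, hwW⟩
  have hle : ‖w‖ ≤ (K:ℝ) * ‖T' w'‖ := by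
    have := hK.le_mul_dist w' 0
    simpa [dist_eq_norm, map_zero] using this
  have hTnorm : ‖T' w'‖^2 = ∑ i, lam i * (⟪g i, w⟫)^2 := by
    rw [EuclideanSpace.norm_eq]
    rw [Real.sq_sqrt (by positivity)]
    refine Finset.sum_congr rfl fun i _ => ?_
    have : ‖Real.sqrt (lam i) * ⟪g i, w⟫‖^2 = (Real.sqrt (lam i))^2 * (⟪g i, w⟫)^2 := by
      rw [norm_mul]; rw [mul_pow]; simp [sq_abs]
    rw [show (T' w').ofLp i = Real.sqrt (lam i) * ⟪g i, w⟫ from rfl] at *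
    rw [this, Real.sq_sqrt (le_of_lt (hlam i))]
  rw [← hTnorm]
  have h1 : ‖w‖^2 ≤ ((K:ℝ) * ‖T' w'‖)^2 := by
    apply sq_le_sq' <;> nlinarith [norm_nonneg w, norm_nonneg (T' w'), hK0.le]
  have hKpos : (0:ℝ) < (K:ℝ) := hK0
  calc ((K:ℝ)^2)⁻¹ * ‖w‖^2 ≤ ((K:ℝ)^2)⁻¹ * ((K:ℝ) * ‖T' w'‖)^2 := by
        apply mul_le_mul_of_nonneg_left h1 (by positivity)
    _ = ‖T' w'‖^2 := by field_simp

set_option maxHeartbeats 1000000 in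
/-- Under the second order sufficient optimality condition at a KKT pair `(x*, λ*)` with
active set `{1,…,r}`, there exist `k₀ > 0` and `0 < ρ < μ` such that for every `k ≥ k₀`
the Hessian of the EDF `𝓛_y(·,λ*,k)` at `x*` satisfies
`⟨∇²𝓛 u, u⟩ ≥ ρ ‖u‖²` for all `u`, i.e. the EDF is strongly convex at `x*`. -/
theorem EDF_strongly_convex_at_solution {n m r : ℕ} (hrm : r ≤ m)
    (f : EuclideanSpace ℝ (Fin n) → ℝ)
    (c : Fin m → EuclideanSpace ℝ (Fin n) → ℝ)
    (hf : ContDiff ℝ 2 f) (hc : ∀ i, ContDiff ℝ 2 (c i))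
    (y xstar : EuclideanSpace ℝ (Fin n)) (lamstar : Fin m → ℝ)
    (hlt : f xstar < f y)
    (hact : ∀ i : Fin m, (i : ℕ) < r → c i xstar = 0 ∧ 0 < lamstar i)
    (hinact : ∀ i : Fin m, r ≤ (i : ℕ) → 0 < c i xstar ∧ lamstar i = 0)
    (hstat : gradient (fun x => -Real.log (f y - f x)
        - ∑ i, lamstar i * c i x) xstar = 0)
    (μ : ℝ) (hμ : 0 < μ)
    (hsosc : ∀ u : EuclideanSpace ℝ (Fin n),
      (∀ i : Fin m, (i : ℕ) < r → ⟪gradient (c i) xstar, u⟫ = 0) →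
      (fderiv ℝ (fderiv ℝ (fun x => -Real.log (f y - f x)
          - ∑ i, lamstar i * c i x)) xstar) u u ≥ μ * ‖u‖ ^ 2)
    (hli : LinearIndependent ℝ
      (fun i : {i : Fin m // (i : ℕ) < r} => gradient (c i.1) xstar)) :
    ∃ k₀ : ℝ, 0 < k₀ ∧ ∃ ρ : ℝ, 0 < ρ ∧ ρ < μ ∧
      ∀ k : ℝ, k₀ ≤ k → ∀ u : EuclideanSpace ℝ (Fin n),
        (fderiv ℝ (fderiv ℝ (fun x => -Real.log (f y - f x)
            - k⁻¹ * ∑ i, lamstar i * Real.log (k * c i x + 1))) xstar) u u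
          ≥ ρ * ‖u‖ ^ 2 := by
  classical
  set L : EuclideanSpace ℝ (Fin n) → ℝ := fun x => -Real.log (f y - f x) - ∑ i, lamstar i * c i x with hLdef
  set B := fderiv ℝ (fderiv ℝ L) xstar with hBdef
  set act : Finset (Fin m) := Finset.univ.filter (fun i => (i : ℕ) < r) with hactdef
  have hact0 : ∀ i ∈ act, c i xstar = 0 := by
    intro i hi
    exact (hact i (by simpa [hactdef] using hi)).1
  -- gradient/fderiv relation
  have hgrad : ∀ (i : Fin m) (v : EuclideanSpace ℝ (Fin n)), ⟪gradient (c i) xstar, v⟫ = fderiv ℝ (c i) xstar v := by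
    intro i v
    simp [gradient, InnerProductSpace.toDual_symm_apply]
  -- coercivity constant on the span of active gradients
  set g : {i : Fin m // (i : ℕ) < r} → EuclideanSpace ℝ (Fin n) := fun i => gradient (c i.1) xstar with hgdef
  obtain ⟨α, hα0, hαle⟩ := coercive_on_span g (fun i => lamstar i.1)
    (fun i => (hact i.1 i.2).2)
  set W : Submodule ℝ (EuclideanSpace ℝ (Fin n)) := Submodule.span ℝ (Set.range g) with hWdef
  -- bound on the Lagrangian Hessian
  set C : ℝ := ‖B‖ + 1 with hCdef
  have hC0 : 0 < C := by positivity
  have habs : ∀ a b : EuclideanSpace ℝ (Fin n), |B a b| ≤ C * ‖a‖ * ‖b‖ := by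
    intro a b
    have h1 := B.le_opNorm₂ a b
    rw [Real.norm_eq_abs] at h1
    nlinarith [mul_nonneg (norm_nonneg a) (norm_nonneg b), norm_nonneg a, norm_nonneg b]
  refine ⟨max 1 ((2*C*μ + 4*C^2 + μ^2) / (2*α*μ)), lt_of_lt_of_le one_pos (le_max_left _ _),
    μ/2, by linarith, by linarith, ?_⟩
  intro k hk u
  have hk1 : (1:ℝ) ≤ k := le_trans (le_max_left _ _) hk
  have hkpos : (0:ℝ) < k := lt_of_lt_of_le one_pos hk1
  have hkα : 2*C*μ + 4*C^2 + μ^2 ≤ 2*k*α*μ := by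
    have h2 : (2*C*μ + 4*C^2 + μ^2) / (2*α*μ) ≤ k := le_trans (le_max_right _ _) hk
    have hpos : (0:ℝ) < 2*α*μ := by positivity
    calc 2*C*μ + 4*C^2 + μ^2 = ((2*C*μ + 4*C^2 + μ^2) / (2*α*μ)) * (2*α*μ) := by
          field_simp
      _ ≤ k * (2*α*μ) := mul_le_mul_of_nonneg_right h2 hpos.le
      _ = 2*k*α*μ := by ring
  -- rewrite the EDF as L + penalty
  set pen : EuclideanSpace ℝ (Fin n) → ℝ := fun x => ∑ i ∈ act, lamstar i * (c i x - k⁻¹ * Real.log (k * c i x + 1))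
    with hpendef
  have hEq : (fun x => -Real.log (f y - f x)
      - k⁻¹ * ∑ i, lamstar i * Real.log (k * c i x + 1)) = fun x => L x + pen x := by
    funext x
    have e1 : ∑ i ∈ act, lamstar i * c i x = ∑ i, lamstar i * c i x := by
      rw [hactdef]
      apply Finset.sum_filter_of_ne
      intro i _ hne
      by_contra h'
      push_neg at h'
      exact hne (by simp [(hinact i h').2])
    have e2 : ∑ i ∈ act, lamstar i * Real.log (k * c i x + 1)
        = ∑ i, lamstar i * Real.log (k * c i x + 1) := by
      rw [hactdef]
      apply Finset.sum_filter_of_ne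
      intro i _ hne
      by_contra h'
      push_neg at h'
      exact hne (by simp [(hinact i h').2])
    have e3 : pen x = ∑ i ∈ act, lamstar i * c i x
        - k⁻¹ * ∑ i ∈ act, lamstar i * Real.log (k * c i x + 1) := by
      rw [hpendef, Finset.mul_sum, ← Finset.sum_sub_distrib]
      exact Finset.sum_congr rfl fun i _ => by ring
    rw [e3, e1, e2, hLdef]
    ring
  rw [hEq]
  -- smoothness of L and pen at xstar
  have hlogf : ContDiffAt ℝ 2 (fun x => Real.log (f y - f x)) xstar := by
    have h1 : ContDiffAt ℝ 2 (fun x : EuclideanSpace ℝ (Fin n) => f y - f x) xstar :=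
      (contDiff_const.sub hf).contDiffAt
    exact (Real.contDiffAt_log.2 (ne_of_gt (sub_pos.2 hlt))).comp xstar h1
  have hL2 : ContDiffAt ℝ 2 L xstar := by
    rw [hLdef]
    exact (hlogf.neg).sub
      ((ContDiff.sum fun i _ => contDiff_const.mul (hc i)).contDiffAt)
  have hpen2 : ContDiffAt ℝ 2 pen xstar := by
    rw [hpendef]
    apply ContDiffAt.sum
    intro i hi
    have h1 : ContDiffAt ℝ 2 (fun x : EuclideanSpace ℝ (Fin n) => k * c i x + 1) xstar :=
      ((contDiff_const.mul (hc i)).add contDiff_const).contDiffAt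
    have h2 : ContDiffAt ℝ 2 (fun x : EuclideanSpace ℝ (Fin n) => Real.log (k * c i x + 1)) xstar := by
      refine (Real.contDiffAt_log.2 ?_).comp xstar h1
      simp [hact0 i hi]
    exact contDiff_const.contDiffAt.mul (((hc i).contDiffAt).sub
      (contDiff_const.contDiffAt.mul h2))
  -- split the Hessian
  have hsplit : fderiv ℝ (fderiv ℝ (fun x => L x + pen x)) xstar u u
      = B u u + fderiv ℝ (fderiv ℝ pen) xstar u u := by
    have hev : (fderiv ℝ (fun x => L x + pen x))
        =ᶠ[nhds xstar] fun x => fderiv ℝ L x + fderiv ℝ pen x := by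
      filter_upwards [hL2.eventually (by norm_num), hpen2.eventually (by norm_num)]
        with x h1 h2
      exact fderiv_fun_add (h1.differentiableAt (by norm_num)) (h2.differentiableAt (by norm_num))
    rw [hev.fderiv_eq, fderiv_fun_add ((hL2.fderiv_right (m := 1) (by norm_num)).differentiableAt one_ne_zero)
      ((hpen2.fderiv_right (m := 1) (by norm_num)).differentiableAt one_ne_zero)]
    simp [hBdef]
  rw [hsplit, hess_pen c hc lamstar xstar act hact0 k hkpos u]
  -- orthogonal decomposition u = v + w
  set w : EuclideanSpace ℝ (Fin n) := ((W.orthogonalProjectionOnto u : W) : EuclideanSpace ℝ (Fin n)) with hwdef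
  have hwW : w ∈ W := (W.orthogonalProjectionOnto u).2
  set v : EuclideanSpace ℝ (Fin n) := u - w with hvdef
  have hv : v ∈ Wᗮ := Submodule.sub_starProjection_mem_orthogonal (K := W) u
  have huvw : u = v + w := by rw [hvdef]; abel
  have hgv : ∀ i : Fin m, (i : ℕ) < r → fderiv ℝ (c i) xstar v = 0 := by
    intro i hi
    have hmem : gradient (c i) xstar ∈ W := Submodule.subset_span ⟨⟨i, hi⟩, rfl⟩
    have h0 : ⟪gradient (c i) xstar, v⟫ = 0 :=
      (Submodule.mem_orthogonal W v).1 hv _ hmem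
    rwa [hgrad] at h0
  have hBvv : B v v ≥ μ * ‖v‖^2 := by
    refine hsosc v fun i hi => ?_
    rw [hgrad]
    exact hgv i hi
  have hov : ⟪v, w⟫ = 0 := (Submodule.mem_orthogonal' W v).1 hv w hwW
  have hnorm : ‖u‖^2 = ‖v‖^2 + ‖w‖^2 := by
    rw [huvw, norm_add_sq_real, hov]; ring
  have hBexp : B u u = B v v + B v w + B w v + B w w := by
    rw [huvw]
    simp [map_add, ContinuousLinearMap.add_apply]
    ring
  -- penalty sum equals k * quadratic form in w
  have hsum : ∑ i ∈ act, k * lamstar i * ((fderiv ℝ (c i) xstar) u)^2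
      = k * ∑ i : {i : Fin m // (i : ℕ) < r}, lamstar i.1 * (⟪g i, w⟫)^2 := by
    rw [Finset.mul_sum]
    rw [hactdef, Finset.sum_subtype (p := fun i : Fin m => (i : ℕ) < r)
      (Finset.univ.filter (fun i : Fin m => (i : ℕ) < r))
      (by simp) (fun i => k * lamstar i * ((fderiv ℝ (c i) xstar) u)^2)]
    refine Finset.sum_congr rfl fun i _ => ?_
    have : (fderiv ℝ (c i.1) xstar) u = (fderiv ℝ (c i.1) xstar) w := by
      rw [huvw, map_add, hgv i.1 i.2]
      ring
    rw [this, hgdef, hgrad]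
    ring
  rw [hsum]
  have hq : α * ‖w‖^2 ≤ ∑ i : {i : Fin m // (i : ℕ) < r}, lamstar i.1 * (⟪g i, w⟫)^2 :=
    hαle w hwW
  set S := ∑ i : {i : Fin m // (i : ℕ) < r}, lamstar i.1 * (⟪g i, w⟫)^2 with hSdef
  have hkS : k * (α * ‖w‖^2) ≤ k * S := mul_le_mul_of_nonneg_left hq hkpos.le
  have h2 := abs_le.1 (habs v w)
  have h3 := abs_le.1 (habs w v)
  have h4 := abs_le.1 (habs w w)
  rw [ge_iff_le, hnorm, hBexp]
  nlinarith [sq_nonneg (μ*‖v‖ - 2*C*‖w‖), mul_le_mul_of_nonneg_right hkα (sq_nonneg ‖w‖),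
    sq_nonneg ‖w‖, sq_nonneg ‖v‖, mul_nonneg (norm_nonneg v) (norm_nonneg w), hμ.le, hC0.le]
end

section
/- Let f : ℝⁿ → ℝ be convex, c_i : ℝⁿ → ℝ concave (i = 1,…,m), all differentiable, let y satisfy c_i(y) > 0 for all i, and let (x*, λ*) be a KKT pair with f(x*) < f(y). Then for every k > 0, x* is a global minimizer of x ↦ 𝓛_y(x,λ*,k) over the set {x : f(x) < f(y), c_i(x) > −1/k for all i}, and the minimal value equals 𝓛_y(x*,λ*,k) = −ln(f(y) − f(x*)); equivalently, f(x*) = f(y) − exp(−𝓛_y(x*,λ*,k)). -/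
open Real


lemma convex_grad_le {E : Type*} [NormedAddCommGroup E] [InnerProductSpace ℝ E]
    [CompleteSpace E] {f : E → ℝ} (hf : ConvexOn ℝ Set.univ f)
    (hd : Differentiable ℝ f) (a b : E) :
    (inner ℝ (gradient f a) (b - a) : ℝ) ≤ f b - f a := by
  rcases eq_or_ne a b with rfl | hab
  · simp
  set g : ℝ → ℝ := fun t => f (AffineMap.lineMap a b t) with hgdef
  have hg : ConvexOn ℝ Set.univ g := by
    have := hf.comp_affineMap (AffineMap.lineMap a b)
    simpa [hgdef, Function.comp_def] using this
  have hline : HasDerivAt (fun t : ℝ => (AffineMap.lineMap a b t : E)) (b - a) 0 := by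
    simp_rw [AffineMap.lineMap_apply_module]
    have h1 : HasDerivAt (fun t : ℝ => t • (b - a) + a) (b - a) 0 := by
      simpa using ((hasDerivAt_id (0:ℝ)).smul_const (b - a)).add_const a
    refine h1.congr_deriv ?_ |>.congr_of_eventuallyEq ?_ <;>
      first
        | rfl
        | exact Filter.Eventually.of_forall (fun t => by
            simp [sub_smul, smul_sub]; abel)
  have hgrad : HasFDerivAt f (InnerProductSpace.toDual ℝ E (gradient f a)) a :=
    (hasGradientAt_iff_hasFDerivAt.mp (hd a).hasGradientAt)
  have hgrad' : HasFDerivAt f (InnerProductSpace.toDual ℝ E (gradient f a))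
      ((AffineMap.lineMap a b : ℝ →ᵃ[ℝ] E) 0) := by simpa using hgrad
  have hder : HasDerivAt g ((inner ℝ (gradient f a) (b - a) : ℝ)) 0 := by
    have := hgrad'.comp_hasDerivAt 0 hline
    simpa [hgdef, Function.comp_def, InnerProductSpace.toDual_apply_apply] using this
  have := hg.le_slope_of_hasDerivAt (Set.mem_univ 0) (Set.mem_univ 1) one_pos hder
  simpa [hgdef, slope_def_field] using this

lemma hasGradientAt_neg' {E : Type*} [NormedAddCommGroup E] [InnerProductSpace ℝ E]
    [CompleteSpace E] {f : E → ℝ} {g x : E} (h : HasGradientAt f g x) :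
    HasGradientAt (fun z => -(f z)) (-g) x := by
  rw [hasGradientAt_iff_hasFDerivAt] at h ⊢
  rw [map_neg]; exact h.neg

lemma concave_grad_ge {E : Type*} [NormedAddCommGroup E] [InnerProductSpace ℝ E]
    [CompleteSpace E] {f : E → ℝ} (hf : ConcaveOn ℝ Set.univ f)
    (hd : Differentiable ℝ f) (a b : E) :
    f b - f a ≤ (inner ℝ (gradient f a) (b - a) : ℝ) := by
  have hneg := convex_grad_le (f := fun z => -(f z)) hf.neg (fun z => (hd z).neg) a b
  have hg : gradient (fun z => -(f z)) a = -gradient f a :=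
    (hasGradientAt_neg' (hd a).hasGradientAt).gradient
  rw [hg, inner_neg_left] at hneg
  linarith

/-- For a KKT pair `(x*, λ*)` and any `k > 0`, `x*` is a global minimizer of the EDF
`𝓛_y(·,λ*,k)` over `{x : f x < f y, c i x > -1/k ∀ i}`, the minimal value equals
`-ln (f y - f x*)`, and equivalently `f x* = f y - exp (-𝓛_y(x*,λ*,k))`. -/
theorem EDF_exact_smooth_approximation {n m : ℕ}
    (f : EuclideanSpace ℝ (Fin n) → ℝ)
    (c : Fin m → EuclideanSpace ℝ (Fin n) → ℝ)
    (hf : ConvexOn ℝ Set.univ f) (hc : ∀ i, ConcaveOn ℝ Set.univ (c i))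
    (hfd : Differentiable ℝ f) (hcd : ∀ i, Differentiable ℝ (c i))
    (y : EuclideanSpace ℝ (Fin n)) (hy : ∀ i, 0 < c i y)
    (xstar : EuclideanSpace ℝ (Fin n)) (lamstar : Fin m → ℝ)
    (hlt : f xstar < f y)
    (hfeas : ∀ i, 0 ≤ c i xstar)
    (hdual : ∀ i, 0 ≤ lamstar i)
    (hcomp : ∀ i, lamstar i * c i xstar = 0)
    (hstat : (f y - f xstar)⁻¹ • gradient f xstar
        - ∑ i, lamstar i • gradient (c i) xstar = 0)
    (k : ℝ) (hk : 0 < k) :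
    (∀ x : EuclideanSpace ℝ (Fin n), f x < f y → (∀ i, -1 / k < c i x) →
      (-Real.log (f y - f xstar)
          - k⁻¹ * ∑ i, lamstar i * Real.log (k * c i xstar + 1))
        ≤ -Real.log (f y - f x)
          - k⁻¹ * ∑ i, lamstar i * Real.log (k * c i x + 1)) ∧
    (-Real.log (f y - f xstar)
        - k⁻¹ * ∑ i, lamstar i * Real.log (k * c i xstar + 1))
      = -Real.log (f y - f xstar) ∧
    f xstar = f y - Real.exp (-(-Real.log (f y - f xstar)
        - k⁻¹ * ∑ i, lamstar i * Real.log (k * c i xstar + 1))) := by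
  have hb : (0:ℝ) < f y - f xstar := by linarith
  have hS0 : ∑ i, lamstar i * Real.log (k * c i xstar + 1) = 0 := by
    refine Finset.sum_eq_zero fun i _ => ?_
    rcases mul_eq_zero.mp (hcomp i) with h | h
    · simp [h]
    · simp [h]
  refine ⟨?_, by rw [hS0]; ring, by
    rw [hS0]; rw [mul_zero, sub_zero, neg_neg, Real.exp_log hb]; ring⟩
  intro x hx hcx
  have ha : (0:ℝ) < f y - f x := by linarith
  set d := x - xstar with hd
  -- stationarity in direction d
  have hst : (f y - f xstar)⁻¹ * (inner ℝ (gradient f xstar) d : ℝ)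
      = ∑ i, lamstar i * (inner ℝ (gradient (c i) xstar) d : ℝ) := by
    have h0 := congrArg (fun v : EuclideanSpace ℝ (Fin n) => (inner ℝ v d : ℝ)) hstat
    simp only [inner_sub_left, sum_inner, real_inner_smul_left, inner_zero_left] at h0
    linarith
  -- convexity of f
  have hfgrad : (inner ℝ (gradient f xstar) d : ℝ) ≤ f x - f xstar :=
    convex_grad_le hf hfd xstar x
  -- per-constraint bound
  have hterm : ∀ i, k⁻¹ * (lamstar i * Real.log (k * c i x + 1))
      ≤ lamstar i * (inner ℝ (gradient (c i) xstar) d : ℝ) := by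
    intro i
    have hpos : 0 < k * c i x + 1 := by
      have := hcx i
      have : -1 < k * c i x := by
        rw [div_lt_iff₀ hk] at this
        nlinarith [this]
      linarith
    have hlog : Real.log (k * c i x + 1) ≤ k * c i x := by
      have := Real.log_le_sub_one_of_pos hpos
      linarith
    have hcg : c i x - c i xstar ≤ (inner ℝ (gradient (c i) xstar) d : ℝ) :=
      concave_grad_ge (hc i) (hcd i) xstar x
    have hl := hdual i
    have hcs := hcomp i
    have h1 : lamstar i * Real.log (k * c i x + 1) ≤ lamstar i * (k * c i x) :=
      mul_le_mul_of_nonneg_left hlog hl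
    have h2 : lamstar i * c i x ≤ lamstar i * (inner ℝ (gradient (c i) xstar) d : ℝ) := by
      nlinarith [mul_le_mul_of_nonneg_left hcg hl]
    have hkinv : (0:ℝ) < k⁻¹ := inv_pos.mpr hk
    calc k⁻¹ * (lamstar i * Real.log (k * c i x + 1))
        ≤ k⁻¹ * (lamstar i * (k * c i x)) := mul_le_mul_of_nonneg_left h1 hkinv.le
      _ = lamstar i * c i x := by field_simp
      _ ≤ _ := h2
  have hsum : k⁻¹ * ∑ i, lamstar i * Real.log (k * c i x + 1)
      ≤ ∑ i, lamstar i * (inner ℝ (gradient (c i) xstar) d : ℝ) := by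
    rw [Finset.mul_sum]
    exact Finset.sum_le_sum fun i _ => hterm i
  have hkey : k⁻¹ * ∑ i, lamstar i * Real.log (k * c i x + 1)
      ≤ 1 - (f y - f x) / (f y - f xstar) := by
    have h3 : (f y - f xstar)⁻¹ * (inner ℝ (gradient f xstar) d : ℝ)
        ≤ (f y - f xstar)⁻¹ * (f x - f xstar) :=
      mul_le_mul_of_nonneg_left hfgrad (inv_pos.mpr hb).le
    have h4 : (f y - f xstar)⁻¹ * (f x - f xstar) = 1 - (f y - f x) / (f y - f xstar) := by
      field_simp; ring
    linarith [hsum, hst ▸ h3]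
  have hlogab : 1 - (f y - f x) / (f y - f xstar)
      ≤ Real.log (f y - f xstar) - Real.log (f y - f x) := by
    have hq : (0:ℝ) < (f y - f x) / (f y - f xstar) := div_pos ha hb
    have := Real.log_le_sub_one_of_pos hq
    rw [Real.log_div ha.ne' hb.ne'] at this
    linarith
  rw [hS0]
  have := hkey.trans hlogab
  linarith
end

section
/- Let f : ℝⁿ → ℝ be convex and continuously differentiable, c_i : ℝⁿ → ℝ concave and continuously differentiable (i = 1,…,m), assume the solution set X* of min{f(x) : c_i(x) ≥ 0 ∀i} is nonempty and bounded and the Slater condition holds. Let y satisfy c_i(y) > 0 for all i and f(y) > min_Ω f. Then for every k > 0 and every λ ∈ ℝ^m with all λ_i > 0, the EDF 𝓛_y(·,λ,k) attains its infimum over {x : f(x) < f(y), c_i(x) > −1/k ∀i} at some point x̂ satisfying ∇_x 𝓛_y(x̂,λ,k) = 0, f(x̂) < f(y) and k c_i(x̂) + 1 > 0 for all i; consequently the updated multipliers λ̂_i = λ_i (k c_i(x̂) + 1)⁻¹ are all positive, i.e. the exterior point method step is well defined. -/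
open Real Topology Filter

lemma EPM_S_bounded {n m : ℕ}
    (f : EuclideanSpace ℝ (Fin n) → ℝ)
    (c : Fin m → EuclideanSpace ℝ (Fin n) → ℝ)
    (hf : ConvexOn ℝ Set.univ f) (hc : ∀ i, ConcaveOn ℝ Set.univ (c i))
    (hfc : Continuous f) (hcc : ∀ i, Continuous (c i))
    (Xstar : Set (EuclideanSpace ℝ (Fin n)))
    (hXmem : ∀ x, ((∀ i, 0 ≤ c i x) ∧ ∀ z, (∀ i, 0 ≤ c i z) → f x ≤ f z) → x ∈ Xstar)
    (hbd : Bornology.IsBounded Xstar)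
    (xs : EuclideanSpace ℝ (Fin n))
    (hxsc : ∀ i, 0 ≤ c i xs) (hxsmin : ∀ z, (∀ i, 0 ≤ c i z) → f xs ≤ f z)
    (y : EuclideanSpace ℝ (Fin n)) (k : ℝ) (hk : 0 < k) :
    Bornology.IsBounded {x | f x < f y ∧ ∀ i, 0 < k * c i x + 1} := by
  set S := {x : EuclideanSpace ℝ (Fin n) | f x < f y ∧ ∀ i, 0 < k * c i x + 1} with hS
  by_contra hub
  have hseq : ∀ j : ℕ, ∃ x, x ∈ S ∧ (j : ℝ) + 1 < ‖x - xs‖ := by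
    intro j
    by_contra hcon
    push_neg at hcon
    apply hub
    apply (Metric.isBounded_closedBall (x := xs) (r := (j : ℝ) + 1)).subset
    intro x hx
    rw [Metric.mem_closedBall, dist_eq_norm]
    exact hcon x hx
  choose u huS hunorm using hseq
  have hupos : ∀ j, (0 : ℝ) < ‖u j - xs‖ := fun j =>
    lt_of_le_of_lt (by positivity) (hunorm j)
  set d : ℕ → EuclideanSpace ℝ (Fin n) := fun j => ‖u j - xs‖⁻¹ • (u j - xs) with hd
  have hdmem : ∀ j, d j ∈ Metric.sphere (0 : EuclideanSpace ℝ (Fin n)) 1 := by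
    intro j
    rw [mem_sphere_zero_iff_norm, hd]
    rw [norm_smul, norm_inv, norm_norm, inv_mul_cancel₀ (hupos j).ne']
  obtain ⟨d0, hd0, φ, hφ, hconv⟩ :=
    (isCompact_sphere (0 : EuclideanSpace ℝ (Fin n)) 1).tendsto_subseq hdmem
  have hd0norm : ‖d0‖ = 1 := mem_sphere_zero_iff_norm.mp hd0
  have hmono : ∀ l : ℕ, (l : ℝ) ≤ ‖u (φ l) - xs‖ := by
    intro l
    have h1 : (l : ℝ) ≤ (φ l : ℝ) := Nat.cast_le.mpr hφ.le_apply
    have h2 := hunorm (φ l)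
    linarith
  have hnorm_top : Filter.Tendsto (fun l => ‖u (φ l) - xs‖) Filter.atTop Filter.atTop :=
    Filter.tendsto_atTop_mono hmono tendsto_natCast_atTop_atTop
  have key : ∀ t : ℝ, 0 ≤ t → (∀ i, 0 ≤ c i (xs + t • d0)) ∧ f (xs + t • d0) ≤ f xs := by
    intro t ht
    set s : ℕ → ℝ := fun l => t * ‖u (φ l) - xs‖⁻¹ with hsdef
    have hs0 : Filter.Tendsto s Filter.atTop (𝓝 0) := by
      have h := (tendsto_inv_atTop_zero.comp hnorm_top).const_mul t
      simpa using h
    have hsnn : ∀ l, 0 ≤ s l := fun l => mul_nonneg ht (inv_nonneg.mpr (norm_nonneg _))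
    have hev : ∀ᶠ l in Filter.atTop, s l ≤ 1 := by
      filter_upwards [hnorm_top.eventually_ge_atTop t] with l hl
      show t * ‖u (φ l) - xs‖⁻¹ ≤ 1
      rw [← div_eq_mul_inv]
      exact (div_le_one (hupos (φ l))).mpr hl
    have hpt : ∀ l, xs + t • d (φ l) = (1 - s l) • xs + s l • u (φ l) := by
      intro l
      rw [hd]
      simp only [smul_smul]
      rw [smul_sub, sub_smul, one_smul]
      abel
    have hptt : Filter.Tendsto (fun l => xs + t • d (φ l)) Filter.atTop (𝓝 (xs + t • d0)) :=
      tendsto_const_nhds.add (hconv.const_smul t)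
    have hRlim : Filter.Tendsto (fun l => (1 - s l) * f xs + s l * f y)
        Filter.atTop (𝓝 (f xs)) := by
      have h : Tendsto (fun l => (1 - s l) * f xs + s l * f y) atTop
          (𝓝 ((1 - 0) * f xs + 0 * f y)) :=
        ((tendsto_const_nhds.sub hs0).mul tendsto_const_nhds).add (hs0.mul tendsto_const_nhds)
      simpa using h
    have hfl : f (xs + t • d0) ≤ f xs := by
      have hL : Filter.Tendsto (fun l => f (xs + t • d (φ l))) Filter.atTop
          (𝓝 (f (xs + t • d0))) := (hfc.tendsto _).comp hptt
      refine le_of_tendsto_of_tendsto hL hRlim ?_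
      filter_upwards [hev] with l hl
      rw [hpt l]
      have h1 := hf.2 (Set.mem_univ xs) (Set.mem_univ (u (φ l)))
        (show (0:ℝ) ≤ 1 - s l by linarith [hsnn l]) (hsnn l) (by ring)
      have h2 : f (u (φ l)) ≤ f y := le_of_lt (huS (φ l)).1
      have h3 := mul_le_mul_of_nonneg_left h2 (hsnn l)
      simp only [smul_eq_mul] at h1
      linarith
    have hcl : ∀ i, 0 ≤ c i (xs + t • d0) := by
      intro i
      have hub' : ∀ l, -k⁻¹ < c i (u l) := by
        intro l
        have h1 := (huS l).2 i
        have h3 : 0 < (k * c i (u l) + 1) / k := div_pos h1 hk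
        have h4 : (k * c i (u l) + 1) / k = c i (u l) + k⁻¹ := by
          field_simp
        rw [h4] at h3
        linarith
      have hL : Filter.Tendsto (fun l => c i (xs + t • d (φ l))) Filter.atTop
          (𝓝 (c i (xs + t • d0))) := ((hcc i).tendsto _).comp hptt
      have hR : Filter.Tendsto (fun l => (1 - s l) * c i xs + s l * (-k⁻¹))
          Filter.atTop (𝓝 (c i xs)) := by
        have h : Tendsto (fun l => (1 - s l) * c i xs + s l * (-k⁻¹)) atTop
            (𝓝 ((1 - 0) * c i xs + 0 * (-k⁻¹))) :=
          ((tendsto_const_nhds.sub hs0).mul tendsto_const_nhds).add (hs0.mul tendsto_const_nhds)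
        simpa using h
      have hle : c i xs ≤ c i (xs + t • d0) := by
        refine le_of_tendsto_of_tendsto hR hL ?_
        filter_upwards [hev] with l hl
        rw [hpt l]
        have h1 := (hc i).2 (Set.mem_univ xs) (Set.mem_univ (u (φ l)))
          (show (0:ℝ) ≤ 1 - s l by linarith [hsnn l]) (hsnn l) (by ring)
        have h2 := mul_le_mul_of_nonneg_left (le_of_lt (hub' (φ l))) (hsnn l)
        simp only [smul_eq_mul] at h1
        linarith
      linarith [hxsc i]
    exact ⟨hcl, hfl⟩
  obtain ⟨R, hR⟩ := hbd.subset_closedBall 0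
  set t : ℝ := |R| + ‖xs‖ + 1 with htdef
  have ht : 0 ≤ t := by positivity
  have hmem : xs + t • d0 ∈ Xstar :=
    hXmem _ ⟨(key t ht).1, fun z hz => le_trans ((key t ht).2) (hxsmin z hz)⟩
  have hnorm : ‖xs + t • d0‖ ≤ R := by
    have := hR hmem
    rwa [Metric.mem_closedBall, dist_zero_right] at this
  have h5 : ‖t • d0‖ ≤ ‖xs + t • d0‖ + ‖xs‖ := by
    have h6 := norm_sub_le (xs + t • d0) xs
    simpa using h6
  rw [norm_smul, hd0norm, mul_one, Real.norm_eq_abs, abs_of_nonneg ht] at h5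
  have h7 := le_abs_self R
  linarith
/-- Well-definedness of the exterior point method step: under Assumptions A and B, for
any interior "center" `y`, any `k > 0` and any positive vector of Lagrange multipliers
`λ`, the EDF `𝓛_y(·,λ,k)` attains its infimum over
`S = {x : f x < f y, k c_i x + 1 > 0 ∀ i}` at some `x̂` with `∇_x 𝓛_y(x̂,λ,k) = 0`,
and the updated multipliers `λ̂_i = λ_i (k c_i(x̂) + 1)⁻¹` are all positive. -/
theorem EPM_step_well_defined {n m : ℕ}
    (f : EuclideanSpace ℝ (Fin n) → ℝ)
    (c : Fin m → EuclideanSpace ℝ (Fin n) → ℝ)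
    (hf : ConvexOn ℝ Set.univ f) (hc : ∀ i, ConcaveOn ℝ Set.univ (c i))
    (hfd : ContDiff ℝ 1 f) (hcd : ∀ i, ContDiff ℝ 1 (c i))
    (Ω : Set (EuclideanSpace ℝ (Fin n)))
    (hΩ : Ω = {x | ∀ i, 0 ≤ c i x})
    (Xstar : Set (EuclideanSpace ℝ (Fin n)))
    (hXstar : Xstar = {x | x ∈ Ω ∧ ∀ z ∈ Ω, f x ≤ f z})
    (hne : Xstar.Nonempty) (hbd : Bornology.IsBounded Xstar)
    (y : EuclideanSpace ℝ (Fin n)) (hy : ∀ i, 0 < c i y)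
    (hfy : ∀ x ∈ Xstar, f x < f y)
    (k : ℝ) (hk : 0 < k)
    (lam : Fin m → ℝ) (hlam : ∀ i, 0 < lam i) :
    ∃ xhat : EuclideanSpace ℝ (Fin n),
      f xhat < f y ∧ (∀ i, 0 < k * c i xhat + 1) ∧
      IsMinOn (fun x => -Real.log (f y - f x)
          - k⁻¹ * ∑ i, lam i * Real.log (k * c i x + 1))
        {x : EuclideanSpace ℝ (Fin n) | f x < f y ∧ ∀ i, 0 < k * c i x + 1} xhat ∧
      gradient (fun x => -Real.log (f y - f x)
          - k⁻¹ * ∑ i, lam i * Real.log (k * c i x + 1)) xhat = 0 ∧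
      ∀ i, 0 < lam i * (k * c i xhat + 1)⁻¹ := by
  classical
  subst hΩ
  subst hXstar
  obtain ⟨xs, hxsX⟩ := hne
  have hfxs : f xs < f y := hfy xs hxsX
  simp only [Set.mem_setOf_eq] at hxsX
  obtain ⟨hxsΩ, hxsmin⟩ := hxsX
  have hfc : Continuous f := hfd.continuous
  have hcc : ∀ i, Continuous (c i) := fun i => (hcd i).continuous
  set L : EuclideanSpace ℝ (Fin n) → ℝ := fun x => -Real.log (f y - f x)
      - k⁻¹ * ∑ i, lam i * Real.log (k * c i x + 1) with hL
  set S := {x : EuclideanSpace ℝ (Fin n) | f x < f y ∧ ∀ i, 0 < k * c i x + 1} with hSdef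
  have hSbd : Bornology.IsBounded S :=
    EPM_S_bounded f c hf hc hfc hcc _ (fun x hx => hx) hbd xs hxsΩ hxsmin y k hk
  have hxsS : xs ∈ S := by
    refine ⟨hfxs, fun i => ?_⟩
    have := mul_nonneg hk.le (hxsΩ i)
    linarith
  have hSopen : IsOpen S := by
    have h1 : IsOpen {x : EuclideanSpace ℝ (Fin n) | f x < f y} :=
      isOpen_lt hfc continuous_const
    have h2 : IsOpen {x : EuclideanSpace ℝ (Fin n) | ∀ i, 0 < k * c i x + 1} := by
      have he : {x : EuclideanSpace ℝ (Fin n) | ∀ i, 0 < k * c i x + 1}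
          = ⋂ i, {x : EuclideanSpace ℝ (Fin n) | 0 < k * c i x + 1} := by
        ext x; simp [Set.mem_iInter]
      rw [he]
      exact isOpen_iInter_of_finite fun i =>
        isOpen_lt continuous_const ((continuous_const.mul (hcc i)).add continuous_const)
    have he2 : S = {x : EuclideanSpace ℝ (Fin n) | f x < f y}
        ∩ {x : EuclideanSpace ℝ (Fin n) | ∀ i, 0 < k * c i x + 1} := rfl
    rw [he2]; exact h1.inter h2
  set q : Fin m → ℝ := fun i => k⁻¹ * lam i with hq
  have hqpos : ∀ i, 0 < q i := fun i => mul_pos (inv_pos.mpr hk) (hlam i)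
  set G : EuclideanSpace ℝ (Fin n) → ℝ :=
    fun x => max (f y - f x) 0 * ∏ i, (max (k * c i x + 1) 0) ^ (q i) with hG
  have hGcont : Continuous G := by
    refine Continuous.mul ((continuous_const.sub hfc).max continuous_const) ?_
    refine continuous_finset_prod _ fun i _ => ?_
    refine continuous_iff_continuousAt.mpr fun x => ?_
    exact (((continuous_const.mul (hcc i)).add continuous_const).max
      continuous_const).continuousAt.rpow_const (Or.inr (hqpos i).le)
  have hGpos : ∀ x ∈ S, 0 < G x := by
    intro x hx
    refine mul_pos (lt_max_iff.mpr (Or.inl (sub_pos.mpr hx.1))) ?_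
    exact Finset.prod_pos fun i _ =>
      Real.rpow_pos_of_pos (lt_max_iff.mpr (Or.inl (hx.2 i))) _
  have hScpt : IsCompact (closure S) := hSbd.isCompact_closure
  obtain ⟨xh, hxhcl, hxhmax⟩ :=
    hScpt.exists_isMaxOn ⟨xs, subset_closure hxsS⟩ hGcont.continuousOn
  have hxhmax' : ∀ x ∈ closure S, G x ≤ G xh := fun x hx => hxhmax hx
  have hGxh : 0 < G xh := lt_of_lt_of_le (hGpos xs hxsS) (hxhmax' xs (subset_closure hxsS))
  have e : G xh = max (f y - f xh) 0 * ∏ i, (max (k * c i xh + 1) 0) ^ (q i) := rfl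
  have hprodnn : (0:ℝ) ≤ ∏ i, (max (k * c i xh + 1) 0) ^ (q i) :=
    Finset.prod_nonneg fun i _ => Real.rpow_nonneg (le_max_right _ 0) _
  have hmaxf : 0 < max (f y - f xh) 0 := by
    by_contra hcon
    push_neg at hcon
    have hz : max (f y - f xh) 0 = 0 := le_antisymm hcon (le_max_right _ 0)
    rw [e, hz, zero_mul] at hGxh
    exact lt_irrefl _ hGxh
  have hfxh : f xh < f y := by
    rcases lt_max_iff.mp hmaxf with h | h
    · linarith
    · exact absurd h (lt_irrefl 0)
  have hprodpos : 0 < ∏ i, (max (k * c i xh + 1) 0) ^ (q i) := by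
    rw [e] at hGxh
    rcases mul_pos_iff.mp hGxh with ⟨_, h⟩ | ⟨h, _⟩
    · exact h
    · exact absurd hmaxf (not_lt.mpr h.le)
  have hcxh : ∀ i, 0 < k * c i xh + 1 := by
    intro i
    by_contra hcon
    push_neg at hcon
    have hm : max (k * c i xh + 1) 0 = 0 := max_eq_right hcon
    have hz : (max (k * c i xh + 1) 0) ^ (q i) = 0 := by
      rw [hm, Real.zero_rpow (hqpos i).ne']
    have hzz : ∏ i, (max (k * c i xh + 1) 0) ^ (q i) = 0 :=
      Finset.prod_eq_zero (Finset.mem_univ i) hz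
    rw [hzz] at hprodpos
    exact lt_irrefl _ hprodpos
  have hxhS : xh ∈ S := ⟨hfxh, hcxh⟩
  have hLG : ∀ x ∈ S, L x = -Real.log (G x) := by
    intro x hx
    have h1 : max (f y - f x) 0 = f y - f x := max_eq_left (sub_pos.mpr hx.1).le
    have h3 : G x = (f y - f x) * ∏ i, (k * c i x + 1) ^ (q i) := by
      rw [hG]
      simp only [h1]
      congr 1
      exact Finset.prod_congr rfl fun i _ => by rw [max_eq_left (hx.2 i).le]
    show -Real.log (f y - f x) - k⁻¹ * ∑ i, lam i * Real.log (k * c i x + 1)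
        = -Real.log (G x)
    rw [h3, Real.log_mul (sub_pos.mpr hx.1).ne'
        (Finset.prod_pos fun i _ => Real.rpow_pos_of_pos (hx.2 i) _).ne',
      Real.log_prod (fun i _ => (Real.rpow_pos_of_pos (hx.2 i) _).ne')]
    have h4 : ∑ i, Real.log ((k * c i x + 1) ^ (q i))
        = ∑ i, q i * Real.log (k * c i x + 1) :=
      Finset.sum_congr rfl fun i _ => Real.log_rpow (hx.2 i) _
    rw [h4]
    have h5 : k⁻¹ * ∑ i, lam i * Real.log (k * c i x + 1)
        = ∑ i, q i * Real.log (k * c i x + 1) := by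
      rw [Finset.mul_sum]
      exact Finset.sum_congr rfl fun i _ => by rw [hq]; ring
    rw [h5]
    ring
  have hmin : IsMinOn L S xh := by
    rw [isMinOn_iff]
    intro x hx
    rw [hLG x hx, hLG xh hxhS]
    have hle := hxhmax' x (subset_closure hx)
    have hlog := Real.log_le_log (hGpos x hx) hle
    linarith
  have hloc : IsLocalMin L xh := hmin.isLocalMin (hSopen.mem_nhds hxhS)
  have hgrad : gradient L xh = 0 := by
    have hz := hloc.fderiv_eq_zero
    simp [gradient, hz]
  exact ⟨xh, hfxh, hcxh, hmin, hgrad,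
    fun i => mul_pos (hlam i) (inv_pos.mpr (hcxh i))⟩
end

section
/- Let f : ℝⁿ → ℝ be convex, c_i : ℝⁿ → ℝ concave (i = 1,…,m), all continuously differentiable, assume the primal solution set is nonempty and bounded and the Slater condition holds, fix y with c_i(y) > 0 for all i and f(y) > min_Ω f, fix k > 0, and let (x_s, λ_s)_{s≥0} be any sequence generated by the EPM: λ_0 has all positive entries, x_{s+1} is a global minimizer of 𝓛_y(·,λ_s,k) with k c_i(x_{s+1}) + 1 > 0 for all i, and λ_{i,s+1} = λ_{i,s}(k c_i(x_{s+1}) + 1)⁻¹. Then the asymptotic complementarity condition holds: lim_{s→∞} Σ_{i=1}^m λ_{i,s} c_i(x_s) = 0. -/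
open Real


lemma EPM_psi_nonneg {u v : ℝ} (hu : 0 < u) (hv : 0 < v) :
    0 ≤ v - u - u * Real.log (v / u) := by
  have h := Real.log_le_sub_one_of_pos (show 0 < v / u by positivity)
  have h2 : u * Real.log (v / u) ≤ u * (v / u - 1) :=
    mul_le_mul_of_nonneg_left h hu.le
  have : u * (v / u - 1) = v - u := by field_simp
  linarith

lemma EPM_sq_le_ell {a u : ℝ} (ha : 0 ≤ a) (hu : 0 < u) :
    (Real.sqrt u - Real.sqrt a) ^ 2 ≤ a * Real.log a - a * Real.log u - a + u := by
  rcases ha.eq_or_lt with h0 | ha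
  · rw [← h0]
    simp [Real.sq_sqrt hu.le]
  · have hsq : 0 < Real.sqrt (u / a) := Real.sqrt_pos.mpr (by positivity)
    have h := Real.log_le_sub_one_of_pos hsq
    have hlogs : Real.log (Real.sqrt (u / a)) = Real.log (u / a) / 2 :=
      Real.log_sqrt (by positivity)
    have hld : Real.log (u / a) = Real.log u - Real.log a :=
      Real.log_div hu.ne' ha.ne'
    have hsd : Real.sqrt (u / a) = Real.sqrt u / Real.sqrt a :=
      Real.sqrt_div hu.le a
    have hsa : Real.sqrt a * Real.sqrt a = a := Real.mul_self_sqrt ha.le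
    have hsu : Real.sqrt u * Real.sqrt u = u := Real.mul_self_sqrt hu.le
    have hsa0 : 0 < Real.sqrt a := Real.sqrt_pos.mpr ha
    have key : a * (Real.sqrt u / Real.sqrt a) = Real.sqrt a * Real.sqrt u := by
      rw [show Real.sqrt a * Real.sqrt u = a / Real.sqrt a * Real.sqrt u by rw [Real.div_sqrt]]
      ring
    rw [hlogs, hld, hsd] at h
    have h2 := mul_le_mul_of_nonneg_left h ha.le
    nlinarith [h2]

/-- prox-step inequality: with `v = u (kc+1)⁻¹`, `k⁻¹ ψ(v,u) ≤ (u-v) c`. -/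
lemma EPM_prox_ineq {u c k : ℝ} (hu : 0 < u) (hk : 0 < k) (ht : 0 < k * c + 1) :
    k⁻¹ * (u * (k * c + 1)⁻¹ - u - u * Real.log (u * (k * c + 1)⁻¹ / u)) ≤
      (u - u * (k * c + 1)⁻¹) * c := by
  set t := k * c + 1 with htdef
  have hlog : Real.log t ≤ t - 1 := Real.log_le_sub_one_of_pos ht
  have hvu : u * t⁻¹ / u = t⁻¹ := by field_simp
  rw [hvu, Real.log_inv]
  have key : u - u * t + u * t * Real.log t ≤ u * (t - 1) ^ 2 := by
    nlinarith [mul_le_mul_of_nonneg_left hlog (le_of_lt (mul_pos hu ht))]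
  have hc : c = (t - 1) / k := by rw [htdef]; field_simp; ring
  have h1 : (u - u * t⁻¹) * c - k⁻¹ * (u * t⁻¹ - u - u * (-Real.log t)) =
      (u * (t - 1) ^ 2 - (u - u * t + u * t * Real.log t)) / (k * t) := by
    rw [hc]; field_simp; ring
  nlinarith [div_nonneg (sub_nonneg.mpr key) (le_of_lt (mul_pos hk ht)), h1]

/-- convex function with zero derivative at an interior-ish point is minimal on the set. -/
lemma EPM_min_of_deriv_zero {E : Type*} [NormedAddCommGroup E] [NormedSpace ℝ E]
    {S : Set E} {g : E → ℝ} (hg : ConvexOn ℝ S g) {x₀ : E} (hx₀ : x₀ ∈ S)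
    (hd : HasFDerivAt g (0 : E →L[ℝ] ℝ) x₀) : ∀ z ∈ S, g x₀ ≤ g z := by
  intro z hz
  set φ : ℝ → E := fun t => x₀ + t • (z - x₀) with hφ
  have hφd : HasDerivAt φ (z - x₀) 0 := by
    have : HasDerivAt (fun t : ℝ => t • (z - x₀)) ((1 : ℝ) • (z - x₀)) 0 :=
      (hasDerivAt_id (0:ℝ)).smul_const (z - x₀)
    have h2 := this.const_add x₀
    simp only [one_smul] at h2
    exact h2
  have hcomp : HasDerivAt (g ∘ φ) 0 0 := by
    have hφ0 : φ 0 = x₀ := by simp [hφ]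
    have := (hφ0 ▸ hd).comp_hasDerivAt (0:ℝ) hφd
    simpa using this
  have hslope := hasDerivAt_iff_tendsto_slope.mp hcomp
  have hslope' : Filter.Tendsto (slope (g ∘ φ) 0) (nhdsWithin 0 (Set.Ioi 0)) (nhds 0) :=
    hslope.mono_left (nhdsWithin_mono 0 (fun t ht => ne_of_gt ht))
  have hev : ∀ᶠ t in nhdsWithin (0:ℝ) (Set.Ioi 0),
      slope (g ∘ φ) 0 t ≤ g z - g x₀ := by
    filter_upwards [Ioc_mem_nhdsGT_of_mem (Set.left_mem_Ico.mpr zero_lt_one)] with t ht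
    have ht0 : 0 < t := ht.1
    have hconv := hg.2 hx₀ hz (by linarith [ht.2] : (0:ℝ) ≤ 1 - t) ht0.le (by ring)
    have hpt : x₀ + t • (z - x₀) = (1 - t) • x₀ + t • z := by
      simp [smul_sub, sub_smul]; abel
    have hval : g (x₀ + t • (z - x₀)) ≤ (1 - t) * g x₀ + t * g z := by
      rw [hpt]; simpa using hconv
    have hsl : slope (g ∘ φ) 0 t = (g (x₀ + t • (z - x₀)) - g x₀) / t := by
      simp [slope_def_field, hφ, Function.comp]
    rw [hsl, div_le_iff₀ ht0]
    nlinarith [hval]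
  have := le_of_tendsto hslope' hev
  linarith

lemma EPM_combo_lt {a b x1 y1 x2 y2 : ℝ} (ha : 0 ≤ a) (hb : 0 ≤ b) (hab : a + b = 1)
    (h1 : x1 < y1) (h2 : x2 < y2) : a * x1 + b * x2 < a * y1 + b * y2 := by
  rcases ha.eq_or_lt with h | h
  · rw [← h] at hab ⊢; simp at hab; simp [hab]; linarith
  · nlinarith

/-- Strong Lagrange duality with Slater condition, specialized form. -/
lemma EPM_strong_duality {E : Type*} [NormedAddCommGroup E] [NormedSpace ℝ E] {m : ℕ}
    {S : Set E} (hSc : Convex ℝ S) {F : E → ℝ} (hF : ConvexOn ℝ S F)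
    {c : Fin m → E → ℝ} (hc : ∀ i, ConcaveOn ℝ Set.univ (c i))
    {w : E} (hw : w ∈ S) (hwc : ∀ i, 0 < c i w)
    {xs : E} (hopt : ∀ z ∈ S, (∀ i, 0 ≤ c i z) → F xs ≤ F z) :
    ∃ lam : Fin m → ℝ, (∀ i, 0 ≤ lam i) ∧
      ∀ z ∈ S, F xs + ∑ i, lam i * c i z ≤ F z := by
  classical
  set A : Set (ℝ × (Fin m → ℝ)) :=
    {p | ∃ z ∈ S, F z < p.1 ∧ ∀ i, p.2 i < c i z} with hA
  set B : Set (ℝ × (Fin m → ℝ)) :=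
    {p | p.1 ≤ F xs ∧ ∀ i, 0 ≤ p.2 i} with hB
  have hAopen : IsOpen A := by
    have : A = ⋃ z ∈ S, ({p : ℝ × (Fin m → ℝ) | F z < p.1} ∩
        ⋂ i, {p : ℝ × (Fin m → ℝ) | p.2 i < c i z}) := by
      ext p; simp [hA, Set.mem_iUnion, Set.mem_iInter]
      tauto
    rw [this]
    refine isOpen_biUnion fun z _ => ?_
    exact (isOpen_lt continuous_const continuous_fst).inter
      (isOpen_iInter_of_finite fun i =>
        isOpen_lt ((continuous_apply i).comp continuous_snd) continuous_const)
  have hAconv : Convex ℝ A := by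
    rintro p ⟨z1, hz1, hp1, hp2⟩ q ⟨z2, hz2, hq1, hq2⟩ a b ha hb hab
    refine ⟨a • z1 + b • z2, hSc hz1 hz2 ha hb hab, ?_, ?_⟩
    · calc F (a • z1 + b • z2) ≤ a * F z1 + b * F z2 := hF.2 hz1 hz2 ha hb hab
        _ < a * p.1 + b * q.1 := by
            rcases eq_or_lt_of_le ha with h | h
            · rw [← h] at hab ⊢; simp at hab; simpa [hab] using hq1
            · rcases eq_or_lt_of_le hb with h' | h'
              · rw [← h'] at hab ⊢; simp at hab; simpa [hab] using hp1
              · have := add_lt_add (mul_lt_mul_of_pos_left hp1 h)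
                  (mul_lt_mul_of_pos_left hq1 h')
                simpa using this
        _ = (a • p + b • q).1 := by simp
    · intro i
      have h1 : a * p.2 i + b * q.2 i < a * c i z1 + b * c i z2 := by
        rcases eq_or_lt_of_le ha with h | h
        · rw [← h] at hab ⊢; simp at hab; simpa [hab] using hq2 i
        · rcases eq_or_lt_of_le hb with h' | h'
          · rw [← h'] at hab ⊢; simp at hab; simpa [hab] using hp2 i
          · exact add_lt_add (mul_lt_mul_of_pos_left (hp2 i) h)
              (mul_lt_mul_of_pos_left (hq2 i) h')
      have h2 : a * c i z1 + b * c i z2 ≤ c i (a • z1 + b • z2) :=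
        (hc i).2 (Set.mem_univ z1) (Set.mem_univ z2) ha hb hab
      have : (a • p + b • q).2 i = a * p.2 i + b * q.2 i := by simp
      rw [this]; linarith
  have hBconv : Convex ℝ B := by
    rintro p ⟨hp1, hp2⟩ q ⟨hq1, hq2⟩ a b ha hb hab
    constructor
    · have : (a • p + b • q).1 = a * p.1 + b * q.1 := by simp
      rw [this]
      calc a * p.1 + b * q.1 ≤ a * F xs + b * F xs := by
            exact add_le_add (mul_le_mul_of_nonneg_left hp1 ha)
              (mul_le_mul_of_nonneg_left hq1 hb)
        _ = F xs := by rw [← add_mul, hab, one_mul]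
    · intro i
      have : (a • p + b • q).2 i = a * p.2 i + b * q.2 i := by simp
      rw [this]
      have := add_le_add (mul_le_mul_of_nonneg_left (hp2 i) ha)
        (mul_le_mul_of_nonneg_left (hq2 i) hb)
      simpa using this
  have hdisj : Disjoint A B := by
    rw [Set.disjoint_left]
    rintro p ⟨z, hz, hp1, hp2⟩ ⟨hb1, hb2⟩
    have : F xs ≤ F z := hopt z hz fun i => le_of_lt (lt_of_le_of_lt (hb2 i) (hp2 i))
    linarith
  obtain ⟨φ, thr, hφA, hφB⟩ := geometric_hahn_banach_open hAconv hAopen hBconv hdisj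
  set α : ℝ := φ (1, 0) with hα
  set g : Fin m → ℝ := fun i => φ (0, Pi.single i 1) with hg
  have hrep : ∀ p : ℝ × (Fin m → ℝ), φ p = p.1 * α + ∑ i, p.2 i * g i := by
    intro p
    have hp : p = p.1 • ((1:ℝ), (0 : Fin m → ℝ)) +
        ∑ i, p.2 i • ((0:ℝ), (Pi.single i (1:ℝ) : Fin m → ℝ)) := by
      refine Prod.ext ?_ ?_
      · simp [Prod.fst_sum]
      · simp only [Prod.snd_add, Prod.smul_snd, Prod.snd_sum]
        funext j
        simp [Finset.sum_apply, Pi.single_apply, Finset.sum_ite_eq']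
    conv_lhs => rw [hp]
    rw [map_add, map_smul, map_sum]
    congr 1
    refine Finset.sum_congr rfl fun i _ => ?_
    rw [map_smul]
    simp [hg, smul_eq_mul]
  have hBxs : thr ≤ F xs * α := by
    have := hφB (F xs, 0) ⟨le_refl _, fun i => le_refl 0⟩
    rw [hrep] at this
    simpa using this
  have hαle : α ≤ 0 := by
    by_contra h
    push_neg at h
    obtain ⟨r, hr⟩ : ∃ r : ℝ, r = (F xs * α - thr) / α + 1 := ⟨_, rfl⟩
    have hdiv : 0 ≤ (F xs * α - thr) / α := div_nonneg (by linarith) h.le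
    have hr0 : 0 ≤ r := by rw [hr]; linarith
    have hmem : ((F xs - r, 0) : ℝ × (Fin m → ℝ)) ∈ B :=
      ⟨by show F xs - r ≤ F xs; linarith, fun i => le_refl 0⟩
    have h2 := hφB _ hmem
    rw [hrep] at h2
    simp at h2
    have hα0 : α ≠ 0 := ne_of_gt h
    have hrα : r * α = F xs * α - thr + α := by
      rw [hr]; field_simp <;> ring
    have hexp : (F xs - r) * α = F xs * α - r * α := by ring
    linarith
  have hgnn : ∀ i, 0 ≤ g i := by
    intro i
    by_contra h
    push_neg at h
    have hgi : 0 < -(g i) := by linarith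
    obtain ⟨r, hr⟩ : ∃ r : ℝ, r = (F xs * α - thr) / (-(g i)) + 1 := ⟨_, rfl⟩
    have hdiv : 0 ≤ (F xs * α - thr) / (-(g i)) := div_nonneg (by linarith) hgi.le
    have hr0 : 0 ≤ r := by rw [hr]; linarith
    have hmem : ((F xs, r • (Pi.single i (1:ℝ) : Fin m → ℝ)) : ℝ × (Fin m → ℝ)) ∈ B := by
      refine ⟨le_refl _, fun j => ?_⟩
      show 0 ≤ (r • (Pi.single i 1 : Fin m → ℝ)) j
      by_cases hj : j = i
      · simp [Pi.single_apply, hj]; exact hr0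
      · simp [Pi.single_apply, hj]
    have h2 := hφB _ hmem
    rw [hrep] at h2
    dsimp only at h2
    have h3 : (∑ j : Fin m, (r • (Pi.single i 1 : Fin m → ℝ)) j * g j) = r * g i := by
      rw [Finset.sum_eq_single i]
      · simp
      · intro j _ hj; simp [Pi.single_apply, hj]
      · simp
    rw [h3] at h2
    have hgne : -g i ≠ 0 := ne_of_gt hgi
    have hrg : r * (-(g i)) = F xs * α - thr + (-(g i)) := by
      rw [hr, add_mul, div_mul_cancel₀ _ hgne, one_mul]
    have : r * g i = -(F xs * α - thr) + g i := by linarith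
    linarith
  have hkey : ∀ z ∈ S, α * F z + ∑ i, g i * c i z ≤ α * F xs := by
    intro z hz
    have hε : ∀ ε : ℝ, 0 < ε →
        α * F z + ∑ i, g i * c i z < α * F xs + ε * (∑ i, g i - α) := by
      intro ε hεp
      have hmem : ((F z + ε, fun i => c i z - ε) : ℝ × (Fin m → ℝ)) ∈ A :=
        ⟨z, hz, by show F z < F z + ε; linarith,
          fun i => by show c i z - ε < c i z; linarith⟩
      have h2 := hφA _ hmem
      rw [hrep] at h2
      dsimp only at h2
      have h3 : (∑ i : Fin m, (c i z - ε) * g i) =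
          (∑ i, g i * c i z) - ε * ∑ i, g i := by
        rw [Finset.mul_sum, ← Finset.sum_sub_distrib]
        exact Finset.sum_congr rfl fun i _ => by ring
      rw [h3] at h2
      nlinarith [hBxs]
    by_contra hcon
    push_neg at hcon
    obtain ⟨C, hC⟩ : ∃ C : ℝ, C = ∑ i, g i - α := ⟨_, rfl⟩
    rcases le_or_gt C 0 with hC0 | hC0
    · have h5 := hε 1 one_pos
      rw [← hC] at h5
      linarith
    · obtain ⟨d, hd⟩ : ∃ d : ℝ, d = α * F z + ∑ i, g i * c i z - α * F xs := ⟨_, rfl⟩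
      have hd0 : 0 < d := by rw [hd]; linarith
      have hdC : 0 < d / (2 * C) := by positivity
      have h5 := hε _ hdC
      rw [← hC] at h5
      have h6 : d / (2 * C) * C = d / 2 := by field_simp
      rw [h6] at h5
      linarith
  have hαneg : α < 0 := by
    rcases hαle.lt_or_eq with h | h
    · exact h
    · exfalso
      have hw0 : ∑ i, g i * c i w ≤ 0 := by
        have := hkey w hw
        rw [h] at this
        simpa using this
      have hterms : ∀ j ∈ Finset.univ, (0:ℝ) ≤ g j * c j w :=
        fun j _ => mul_nonneg (hgnn j) (hwc j).le
      have hsum0 : ∑ j, g j * c j w = 0 :=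
        le_antisymm hw0 (Finset.sum_nonneg hterms)
      have hg0 : ∀ i, g i = 0 := by
        intro i
        have h4 := (Finset.sum_eq_zero_iff_of_nonneg hterms).mp hsum0 i (Finset.mem_univ i)
        rcases mul_eq_zero.mp h4 with h' | h'
        · exact h'
        · exact absurd h' (hwc i).ne'
      have hmem : ((F w + 1, fun i => c i w - 1) : ℝ × (Fin m → ℝ)) ∈ A :=
        ⟨w, hw, by show F w < F w + 1; linarith,
          fun i => by show c i w - 1 < c i w; linarith⟩
      have h2 := hφA _ hmem
      rw [hrep] at h2
      dsimp only at h2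
      rw [h] at h2 hBxs
      simp only [hg0, mul_zero, zero_mul, Finset.sum_const_zero, add_zero, zero_add] at h2 hBxs
      linarith
  refine ⟨fun i => g i / (-α), fun i => div_nonneg (hgnn i) (by linarith), ?_⟩
  intro z hz
  have hk := hkey z hz
  have hsum : ∑ i, g i / (-α) * c i z = (∑ i, g i * c i z) / (-α) := by
    rw [Finset.sum_div]
    exact Finset.sum_congr rfl fun i _ => by ring
  rw [hsum, ← sub_nonneg]
  have h1 : F z - (F xs + (∑ i, g i * c i z) / (-α)) =
      (α * F xs - (α * F z + ∑ i, g i * c i z)) / (-α) := by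
    have hne : (α:ℝ) ≠ 0 := ne_of_lt hαneg
    field_simp [hne]
    ring
  rw [h1]
  exact div_nonneg (by linarith) (by linarith)

lemma EPM_concaveOn_sum {ι : Type*} {E : Type*} [AddCommGroup E] [Module ℝ E]
    {S : Set E} (hS : Convex ℝ S) (t : Finset ι) (g : ι → E → ℝ)
    (h : ∀ i ∈ t, ConcaveOn ℝ S (g i)) : ConcaveOn ℝ S (fun z => ∑ i ∈ t, g i z) := by
  classical
  induction t using Finset.induction_on with
  | empty => simpa using concaveOn_const (0:ℝ) hS
  | @insert a s ha ih =>
      have h1 : ConcaveOn ℝ S (fun z => g a z + ∑ i ∈ s, g i z) :=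
        (h a (Finset.mem_insert_self a s)).add
          (ih fun i hi => h i (Finset.mem_insert_of_mem hi))
      have : (fun z => ∑ i ∈ insert a s, g i z) = fun z => g a z + ∑ i ∈ s, g i z := by
        funext z; rw [Finset.sum_insert ha]
      rw [this]; exact h1


set_option maxHeartbeats 1000000

/-- Asymptotic complementarity of the exterior point method: along any EPM sequence
(`x_{s+1}` a global minimizer of `𝓛_y(·,λ_s,k)` with `k c_i(x_{s+1}) + 1 > 0`, and
`λ_{i,s+1} = λ_{i,s} (k c_i(x_{s+1}) + 1)⁻¹`), one has
`lim_{s→∞} ∑ i, λ_{i,s} c_i(x_s) = 0`. -/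
theorem EPM_asymptotic_complementarity {n m : ℕ}
    (f : EuclideanSpace ℝ (Fin n) → ℝ)
    (c : Fin m → EuclideanSpace ℝ (Fin n) → ℝ)
    (hf : ConvexOn ℝ Set.univ f) (hc : ∀ i, ConcaveOn ℝ Set.univ (c i))
    (hfd : ContDiff ℝ 1 f) (hcd : ∀ i, ContDiff ℝ 1 (c i))
    (Ω : Set (EuclideanSpace ℝ (Fin n)))
    (hΩ : Ω = {x | ∀ i, 0 ≤ c i x})
    (Xstar : Set (EuclideanSpace ℝ (Fin n)))
    (hXstar : Xstar = {x | x ∈ Ω ∧ ∀ z ∈ Ω, f x ≤ f z})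
    (hne : Xstar.Nonempty) (hbd : Bornology.IsBounded Xstar)
    (y : EuclideanSpace ℝ (Fin n)) (hy : ∀ i, 0 < c i y)
    (hfy : ∀ x ∈ Xstar, f x < f y)
    (k : ℝ) (hk : 0 < k)
    (x : ℕ → EuclideanSpace ℝ (Fin n)) (lam : ℕ → Fin m → ℝ)
    (hlam0 : ∀ i, 0 < lam 0 i)
    (hxstep : ∀ s : ℕ,
      f (x (s + 1)) < f y ∧ (∀ i, 0 < k * c i (x (s + 1)) + 1) ∧
      IsMinOn (fun z => -Real.log (f y - f z)
          - k⁻¹ * ∑ i, lam s i * Real.log (k * c i z + 1))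
        {z : EuclideanSpace ℝ (Fin n) | f z < f y ∧ ∀ i, 0 < k * c i z + 1}
        (x (s + 1)))
    (hlamstep : ∀ s : ℕ, ∀ i,
      lam (s + 1) i = lam s i * (k * c i (x (s + 1)) + 1)⁻¹) :
    Filter.Tendsto (fun s : ℕ => ∑ i, lam s i * c i (x s))
      Filter.atTop (nhds 0) := by
  classical
  -- positivity of the multipliers
  have hpos : ∀ s i, 0 < lam s i := by
    intro s
    induction s with
    | zero => exact hlam0
    | succ s ih =>
        intro i
        rw [hlamstep s i]
        exact mul_pos (ih i) (inv_pos.mpr ((hxstep s).2.1 i))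
  -- the level set S₀ and objective F
  set S₀ : Set (EuclideanSpace ℝ (Fin n)) := {z | f z < f y} with hS₀
  set F : EuclideanSpace ℝ (Fin n) → ℝ := fun z => -Real.log (f y - f z) with hFdef
  have hS₀conv : Convex ℝ S₀ := by
    have h := hf.convex_lt (f y)
    have : {x_1 | x_1 ∈ Set.univ ∧ f x_1 < f y} = S₀ := by ext z; simp [hS₀]
    rwa [this] at h
  -- convexity of F on S₀
  have hFconv : ConvexOn ℝ S₀ F := by
    refine ⟨hS₀conv, ?_⟩
    intro p hp q hq a b ha hb hab
    have hfp : f p < f y := hp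
    have hfq : f q < f y := hq
    have hcomb : f (a • p + b • q) ≤ a * f p + b * f q := by
      have := hf.2 (Set.mem_univ p) (Set.mem_univ q) ha hb hab
      simpa using this
    have h1 : 0 < a * (f y - f p) + b * (f y - f q) := by
      rcases ha.eq_or_lt with h | h
      · rw [← h] at hab ⊢
        simp only [zero_add] at hab
        rw [hab]; simp; linarith
      · have h2 := mul_pos h (sub_pos.mpr hfp)
        have h3 := mul_nonneg hb (le_of_lt (sub_pos.mpr hfq))
        linarith
    have hy' : a * f y + b * f y = f y := by rw [← add_mul, hab, one_mul]
    have h2 : 0 < f y - f (a • p + b • q) := by nlinarith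
    have hmono : Real.log (a * (f y - f p) + b * (f y - f q)) ≤
        Real.log (f y - f (a • p + b • q)) :=
      Real.log_le_log h1 (by nlinarith)
    have hconc : a * Real.log (f y - f p) + b * Real.log (f y - f q) ≤
        Real.log (a * (f y - f p) + b * (f y - f q)) := by
      have := strictConcaveOn_log_Ioi.concaveOn.2
        (Set.mem_Ioi.mpr (sub_pos.mpr hfp)) (Set.mem_Ioi.mpr (sub_pos.mpr hfq)) ha hb hab
      simpa using this
    show -Real.log (f y - f (a • p + b • q)) ≤
        a • (-Real.log (f y - f p)) + b • (-Real.log (f y - f q))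
    simp only [smul_eq_mul]
    linarith
  -- the optimal point
  obtain ⟨xs, hxsmem⟩ := hne
  have hxsy : f xs < f y := hfy xs hxsmem
  rw [hXstar] at hxsmem
  obtain ⟨hxsΩ, hxsopt⟩ := hxsmem
  have hxsc : ∀ i, 0 ≤ c i xs := by rw [hΩ] at hxsΩ; exact hxsΩ
  have hxsS₀ : xs ∈ S₀ := hxsy
  have hopt : ∀ z ∈ S₀, (∀ i, 0 ≤ c i z) → F xs ≤ F z := by
    intro z hz hcz
    have hfz : f z < f y := hz
    have hle : f xs ≤ f z := hxsopt z (by rw [hΩ]; exact hcz)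
    have h1 : 0 < f y - f z := by linarith
    have := Real.log_le_log h1 (by linarith : f y - f z ≤ f y - f xs)
    simp only [hFdef]
    linarith
  -- Slater point
  set w : EuclideanSpace ℝ (Fin n) := (2⁻¹ : ℝ) • xs + (2⁻¹ : ℝ) • y with hwdef
  have hwS : w ∈ S₀ := by
    have := hf.2 (Set.mem_univ xs) (Set.mem_univ y)
      (by norm_num : (0:ℝ) ≤ 2⁻¹) (by norm_num : (0:ℝ) ≤ 2⁻¹) (by norm_num)
    simp only [smul_eq_mul] at this
    show f w < f y
    rw [hwdef]
    calc f ((2⁻¹ : ℝ) • xs + (2⁻¹ : ℝ) • y) ≤ 2⁻¹ * f xs + 2⁻¹ * f y := this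
      _ < 2⁻¹ * f y + 2⁻¹ * f y := by linarith
      _ = f y := by ring
  have hwc : ∀ i, 0 < c i w := by
    intro i
    have := (hc i).2 (Set.mem_univ xs) (Set.mem_univ y)
      (by norm_num : (0:ℝ) ≤ 2⁻¹) (by norm_num : (0:ℝ) ≤ 2⁻¹) (by norm_num)
    simp only [smul_eq_mul] at this
    have h1 : 0 < 2⁻¹ * c i y := by have := hy i; positivity
    have h2 : 0 ≤ 2⁻¹ * c i xs := by have := hxsc i; positivity
    calc (0:ℝ) < 2⁻¹ * c i xs + 2⁻¹ * c i y := by linarith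
      _ ≤ c i w := by rw [hwdef]; exact this
  -- strong duality
  obtain ⟨lamstar, hls0, hlsineq⟩ :=
    EPM_strong_duality hS₀conv hFconv hc hwS hwc hopt
  -- openness of the minimization set
  have hSopen : IsOpen {z : EuclideanSpace ℝ (Fin n) | f z < f y ∧ ∀ i, 0 < k * c i z + 1} := by
    have h1 : IsOpen {z : EuclideanSpace ℝ (Fin n) | f z < f y} :=
      isOpen_lt (hfd.continuous) continuous_const
    have h2 : IsOpen (⋂ i, {z : EuclideanSpace ℝ (Fin n) | 0 < k * c i z + 1}) :=
      isOpen_iInter_of_finite fun i =>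
        isOpen_lt continuous_const
          ((continuous_const.mul (hcd i).continuous).add continuous_const)
    have heq : {z : EuclideanSpace ℝ (Fin n) | f z < f y ∧ ∀ i, 0 < k * c i z + 1} =
        {z : EuclideanSpace ℝ (Fin n) | f z < f y} ∩
          ⋂ i, {z : EuclideanSpace ℝ (Fin n) | 0 < k * c i z + 1} := by
      ext z; simp [Set.mem_iInter]
    rw [heq]; exact h1.inter h2
  -- key: x (s+1) minimizes the ordinary Lagrangian over S₀
  have hGmin : ∀ s, ∀ z ∈ S₀, F (x (s+1)) - ∑ i, lam (s+1) i * c i (x (s+1)) ≤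
      F z - ∑ i, lam (s+1) i * c i z := by
    intro s
    obtain ⟨hfs, hcs, hmin⟩ := hxstep s
    have huS : x (s+1) ∈ {z : EuclideanSpace ℝ (Fin n) | f z < f y ∧ ∀ i, 0 < k * c i z + 1} :=
      ⟨hfs, hcs⟩
    have hloc : IsLocalMin (fun z => -Real.log (f y - f z)
        - k⁻¹ * ∑ i, lam s i * Real.log (k * c i z + 1)) (x (s+1)) :=
      hmin.isLocalMin (hSopen.mem_nhds huS)
    have hfd' : HasFDerivAt f (fderiv ℝ f (x (s+1))) (x (s+1)) :=
      (hfd.differentiable one_ne_zero (x (s+1))).hasFDerivAt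
    have hcd' : ∀ i, HasFDerivAt (c i) (fderiv ℝ (c i) (x (s+1))) (x (s+1)) :=
      fun i => ((hcd i).differentiable one_ne_zero (x (s+1))).hasFDerivAt
    have hne1 : f y - f (x (s+1)) ≠ 0 := ne_of_gt (by linarith)
    have hL : HasFDerivAt (fun z => -Real.log (f y - f z)
        - k⁻¹ * ∑ i, lam s i * Real.log (k * c i z + 1))
        ((-((f y - f (x (s+1)))⁻¹ •
            ((0 : EuclideanSpace ℝ (Fin n) →L[ℝ] ℝ) - fderiv ℝ f (x (s+1))))) -
          k⁻¹ • ∑ i, lam s i •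
            ((k * c i (x (s+1)) + 1)⁻¹ • (k • fderiv ℝ (c i) (x (s+1)))))
        (x (s+1)) := by
      refine HasFDerivAt.sub ?_ ?_
      · exact (((hasFDerivAt_const (f y) (x (s+1))).sub hfd').log hne1).neg
      · have hterm : ∀ i, HasFDerivAt (fun z => lam s i * Real.log (k * c i z + 1))
            (lam s i • ((k * c i (x (s+1)) + 1)⁻¹ • (k • fderiv ℝ (c i) (x (s+1)))))
            (x (s+1)) := fun i =>
          ((((hcd' i).const_mul k).add_const 1).log (ne_of_gt (hcs i))).const_mul (lam s i)
        exact (HasFDerivAt.fun_sum (fun i (_ : i ∈ Finset.univ) => hterm i)).const_mul k⁻¹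
    have hzero := hloc.hasFDerivAt_eq_zero hL
    have hpsi : ∀ i, HasFDerivAt
        (fun z => k⁻¹ * lam s i * Real.log (k * c i z + 1) - lam (s+1) i * c i z)
        (0 : EuclideanSpace ℝ (Fin n) →L[ℝ] ℝ) (x (s+1)) := by
      intro i
      have h1 : HasDerivAt (fun t : ℝ => k * t + 1) k (c i (x (s+1))) := by
        simpa using ((hasDerivAt_id (c i (x (s+1)))).const_mul k).add_const 1
      have h2 := (h1.log (ne_of_gt (hcs i))).const_mul (k⁻¹ * lam s i)
      have h3 := (hasDerivAt_id (c i (x (s+1)))).const_mul (lam (s+1) i)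
      have hρ : HasDerivAt
          (fun t : ℝ => k⁻¹ * lam s i * Real.log (k * t + 1) - lam (s+1) i * t)
          (k⁻¹ * lam s i * (k / (k * c i (x (s+1)) + 1)) - lam (s+1) i) (c i (x (s+1))) := by
        simpa using h2.fun_sub h3
      have hcoef : k⁻¹ * lam s i * (k / (k * c i (x (s+1)) + 1)) - lam (s+1) i = 0 := by
        rw [hlamstep s i]
        have h4 : (k * c i (x (s+1)) + 1) ≠ 0 := ne_of_gt (hcs i)
        field_simp
        ring
      rw [hcoef] at hρ
      have := hρ.comp_hasFDerivAt (x (s+1)) (hcd' i)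
      simpa [Function.comp_def] using this
    have hsum0 : HasFDerivAt
        (fun z => ∑ i, (k⁻¹ * lam s i * Real.log (k * c i z + 1) - lam (s+1) i * c i z))
        (0 : EuclideanSpace ℝ (Fin n) →L[ℝ] ℝ) (x (s+1)) := by
      have := HasFDerivAt.fun_sum (fun i (_ : i ∈ Finset.univ) => hpsi i)
      simpa using this
    have hGid : (fun z => F z - ∑ i, lam (s+1) i * c i z) = (fun z =>
        (-Real.log (f y - f z) - k⁻¹ * ∑ i, lam s i * Real.log (k * c i z + 1)) +
        ∑ i, (k⁻¹ * lam s i * Real.log (k * c i z + 1) - lam (s+1) i * c i z)) := by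
      funext z
      simp only [hFdef, Finset.sum_sub_distrib]
      rw [Finset.mul_sum]
      ring
    have hGd : HasFDerivAt (fun z => F z - ∑ i, lam (s+1) i * c i z)
        (0 : EuclideanSpace ℝ (Fin n) →L[ℝ] ℝ) (x (s+1)) := by
      rw [hGid]
      have hadd := hL.fun_add hsum0
      rw [hzero] at hadd
      simpa using hadd
    have hGconv : ConvexOn ℝ S₀ (fun z => F z - ∑ i, lam (s+1) i * c i z) := by
      refine hFconv.sub ?_
      have hsum : ConcaveOn ℝ S₀ (fun z => ∑ i, lam (s+1) i * c i z) := by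
        refine EPM_concaveOn_sum hS₀conv Finset.univ _ fun i _ => ?_
        have := ((hc i).smul (hpos (s+1) i).le).subset (Set.subset_univ S₀) hS₀conv
        simpa [smul_eq_mul] using this
      exact hsum
    exact EPM_min_of_deriv_zero hGconv (show x (s+1) ∈ S₀ from hfs) hGd
  -- basic recursion facts
  have hrel : ∀ s i, lam s i = lam (s+1) i * (k * c i (x (s+1)) + 1) := by
    intro s i
    rw [hlamstep s i]
    have h4 : (k * c i (x (s+1)) + 1) ≠ 0 := ne_of_gt ((hxstep s).2.1 i)
    field_simp
  have hdiffrel : ∀ s i, lam s i - lam (s+1) i = k * lam (s+1) i * c i (x (s+1)) := by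
    intro s i
    rw [hrel s i]; ring
  -- dual function values
  obtain ⟨e, hedef⟩ : ∃ e : ℕ → ℝ, e = fun s =>
      F (x (s+1)) - ∑ i, lam (s+1) i * c i (x (s+1)) := ⟨_, rfl⟩
  have hxS₀ : ∀ s : ℕ, x (s+1) ∈ S₀ := fun s => (hxstep s).1
  have hEb : ∀ s, e s ≤ F xs := by
    intro s
    have h1 := hGmin s xs hxsS₀
    have h2 : 0 ≤ ∑ i, lam (s+1) i * c i xs :=
      Finset.sum_nonneg fun i _ => mul_nonneg (hpos (s+1) i).le (hxsc i)
    simp only [hedef]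
    linarith
  have hprox : ∀ s i, k⁻¹ * (lam (s+1) i - lam s i -
      lam s i * Real.log (lam (s+1) i / lam s i)) ≤
      (lam s i - lam (s+1) i) * c i (x (s+1)) := by
    intro s i
    have h := EPM_prox_ineq (hpos s i) hk ((hxstep s).2.1 i)
    rw [← hlamstep s i] at h
    exact h
  obtain ⟨D, hDdef⟩ : ∃ D : ℕ → ℝ, D = fun s => ∑ i, (lam (s+1) i - lam s i -
      lam s i * Real.log (lam (s+1) i / lam s i)) := ⟨_, rfl⟩
  have hDnn : ∀ s, 0 ≤ D s := by
    intro s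
    rw [hDdef]
    exact Finset.sum_nonneg fun i _ => EPM_psi_nonneg (hpos s i) (hpos (s+1) i)
  have hascent : ∀ s, e s + k⁻¹ * D (s+1) ≤ e (s+1) := by
    intro s
    have h1 := hGmin s (x (s+2)) (hxS₀ (s+1))
    have h2 : k⁻¹ * D (s+1) ≤ ∑ i, (lam (s+1) i - lam (s+2) i) * c i (x (s+2)) := by
      simp only [hDdef]
      rw [Finset.mul_sum]
      exact Finset.sum_le_sum fun i _ => hprox (s+1) i
    have h3 : ∑ i, lam (s+2) i * c i (x (s+2)) =
        ∑ i, lam (s+1) i * c i (x (s+2)) -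
          ∑ i, (lam (s+1) i - lam (s+2) i) * c i (x (s+2)) := by
      rw [← Finset.sum_sub_distrib]
      exact Finset.sum_congr rfl fun i _ => by ring
    simp only [hedef, show s + 1 + 1 = s + 2 from rfl]
    rw [h3]
    have habc : ∀ A F2 S1 S2 KD : ℝ, A ≤ F2 - S1 → KD ≤ S2 →
        A + KD ≤ F2 - (S1 - S2) := by intros; linarith
    exact habc _ _ _ _ _ h1 h2
  have hemono : Monotone e := monotone_nat_of_le_succ fun s => by
    have h1 := hascent s
    have h2 := mul_nonneg (inv_pos.mpr hk).le (hDnn (s+1))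
    linarith
  have hbddA : BddAbove (Set.range e) := ⟨F xs, by rintro v ⟨s, rfl⟩; exact hEb s⟩
  have heconv := tendsto_atTop_ciSup hemono hbddA
  have hde : Filter.Tendsto (fun s => e (s+1) - e s) Filter.atTop (nhds 0) := by
    have h1 := (heconv.comp (Filter.tendsto_add_atTop_nat 1)).sub heconv
    simpa using h1
  have hDto : Filter.Tendsto (fun s => D (s+1)) Filter.atTop (nhds 0) := by
    have h1 : Filter.Tendsto (fun s => k⁻¹ * D (s+1)) Filter.atTop (nhds 0) :=
      squeeze_zero (fun s => mul_nonneg (inv_pos.mpr hk).le (hDnn (s+1)))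
        (fun s => by have := hascent s; linarith) hde
    have h2 := h1.const_mul k
    simp only [← mul_assoc, mul_inv_cancel₀ (ne_of_gt hk), one_mul, mul_zero] at h2
    exact h2
  -- the Lyapunov function L and boundedness of the multipliers
  obtain ⟨L, hLdef⟩ : ∃ L : ℕ → ℝ, L = fun s => ∑ i, (lamstar i * Real.log (lamstar i) -
      lamstar i * Real.log (lam s i) - lamstar i + lam s i) := ⟨_, rfl⟩
  have hLterm : ∀ s i, (Real.sqrt (lam s i) - Real.sqrt (lamstar i))^2 ≤
      lamstar i * Real.log (lamstar i) - lamstar i * Real.log (lam s i) -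
        lamstar i + lam s i := fun s i => EPM_sq_le_ell (hls0 i) (hpos s i)
  have hLsum : ∀ s i, (Real.sqrt (lam s i) - Real.sqrt (lamstar i))^2 ≤ L s := by
    intro s i
    refine le_trans (hLterm s i) ?_
    rw [hLdef]
    exact Finset.single_le_sum
      (fun j _ => le_trans (sq_nonneg _) (hLterm s j)) (Finset.mem_univ i)
  have hIII : ∀ s, ∑ i, lamstar i * c i (x (s+1)) ≤
      ∑ i, lam (s+1) i * c i (x (s+1)) := by
    intro s
    have h1 := hlsineq (x (s+1)) (hxS₀ s)
    have h2 := hGmin s xs hxsS₀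
    have h3 : 0 ≤ ∑ i, lam (s+1) i * c i xs :=
      Finset.sum_nonneg fun i _ => mul_nonneg (hpos (s+1) i).le (hxsc i)
    linarith
  have hLmono : ∀ s, L (s+1) ≤ L s := by
    intro s
    have hterm : ∀ i, (lamstar i * Real.log (lamstar i) -
        lamstar i * Real.log (lam (s+1) i) - lamstar i + lam (s+1) i) -
        (lamstar i * Real.log (lamstar i) - lamstar i * Real.log (lam s i) -
          lamstar i + lam s i) ≤
        k * (lamstar i * c i (x (s+1))) - k * (lam (s+1) i * c i (x (s+1))) := by
      intro i
      have hlog : Real.log (lam s i) =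
          Real.log (lam (s+1) i) + Real.log (k * c i (x (s+1)) + 1) := by
        rw [hrel s i]
        exact Real.log_mul (hpos (s+1) i).ne' (ne_of_gt ((hxstep s).2.1 i))
      have hlb : Real.log (k * c i (x (s+1)) + 1) ≤ k * c i (x (s+1)) := by
        have := Real.log_le_sub_one_of_pos ((hxstep s).2.1 i)
        linarith
      have hmul : lamstar i * Real.log (k * c i (x (s+1)) + 1) ≤
          lamstar i * (k * c i (x (s+1))) := mul_le_mul_of_nonneg_left hlb (hls0 i)
      have hd := hdiffrel s i
      rw [hlog]
      nlinarith [hmul, hd]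
    have hsum : L (s+1) - L s ≤ k * ((∑ i, lamstar i * c i (x (s+1))) -
        ∑ i, lam (s+1) i * c i (x (s+1))) := by
      simp only [hLdef]
      rw [← Finset.sum_sub_distrib, mul_sub, Finset.mul_sum, Finset.mul_sum,
        ← Finset.sum_sub_distrib]
      exact Finset.sum_le_sum fun i _ => hterm i
    have h4 := hIII s
    nlinarith [hsum, h4]
  have hLle : ∀ s, L s ≤ L 0 := by
    intro s
    induction s with
    | zero => exact le_refl _
    | succ s ih => exact le_trans (hLmono s) ih
  have hsqrtbd : ∀ s i, Real.sqrt (lam s i) ≤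
      Real.sqrt (L 0) + Real.sqrt (lamstar i) := by
    intro s i
    have h1 : (Real.sqrt (lam s i) - Real.sqrt (lamstar i))^2 ≤ L 0 :=
      le_trans (hLsum s i) (hLle s)
    have h2 := Real.sqrt_le_sqrt h1
    rw [Real.sqrt_sq_eq_abs] at h2
    have h3 := le_abs_self (Real.sqrt (lam s i) - Real.sqrt (lamstar i))
    linarith
  -- coordinatewise convergence of multiplier differences
  have hfinal : ∀ i, Filter.Tendsto (fun s => lam (s+2) i - lam (s+1) i)
      Filter.atTop (nhds 0) := by
    intro i
    have hψ : Filter.Tendsto (fun s => lam (s+2) i - lam (s+1) i -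
        lam (s+1) i * Real.log (lam (s+2) i / lam (s+1) i)) Filter.atTop (nhds 0) := by
      refine squeeze_zero (fun s => EPM_psi_nonneg (hpos (s+1) i) (hpos (s+2) i))
        (fun s => ?_) hDto
      rw [hDdef]
      exact Finset.single_le_sum
        (fun j _ => EPM_psi_nonneg (hpos (s+1) j) (hpos (s+2) j)) (Finset.mem_univ i)
    have hsq2 : Filter.Tendsto
        (fun s => (Real.sqrt (lam (s+2) i) - Real.sqrt (lam (s+1) i))^2)
        Filter.atTop (nhds 0) := by
      refine squeeze_zero (fun s => sq_nonneg _) (fun s => ?_) hψ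
      have h := EPM_sq_le_ell (hpos (s+1) i).le (hpos (s+2) i)
      have hld : Real.log (lam (s+2) i / lam (s+1) i) =
          Real.log (lam (s+2) i) - Real.log (lam (s+1) i) :=
        Real.log_div (hpos (s+2) i).ne' (hpos (s+1) i).ne'
      rw [hld]
      nlinarith [h]
    have habs : Filter.Tendsto
        (fun s => Real.sqrt ((Real.sqrt (lam (s+2) i) - Real.sqrt (lam (s+1) i))^2))
        Filter.atTop (nhds 0) := by
      have hcont := (Real.continuous_sqrt.tendsto' 0 0 Real.sqrt_zero).comp hsq2
      exact hcont
    have hbound : ∀ s, |lam (s+2) i - lam (s+1) i| ≤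
        Real.sqrt ((Real.sqrt (lam (s+2) i) - Real.sqrt (lam (s+1) i))^2) *
          (2 * (Real.sqrt (L 0) + Real.sqrt (lamstar i))) := by
      intro s
      rw [Real.sqrt_sq_eq_abs]
      have e1 : Real.sqrt (lam (s+2) i) ^ 2 = lam (s+2) i := Real.sq_sqrt (hpos (s+2) i).le
      have e2 : Real.sqrt (lam (s+1) i) ^ 2 = lam (s+1) i := Real.sq_sqrt (hpos (s+1) i).le
      have h1 : lam (s+2) i - lam (s+1) i =
          (Real.sqrt (lam (s+2) i) - Real.sqrt (lam (s+1) i)) *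
            (Real.sqrt (lam (s+2) i) + Real.sqrt (lam (s+1) i)) := by
        nlinarith [e1, e2]
      rw [h1, abs_mul]
      have h2 : |Real.sqrt (lam (s+2) i) + Real.sqrt (lam (s+1) i)| =
          Real.sqrt (lam (s+2) i) + Real.sqrt (lam (s+1) i) :=
        abs_of_nonneg (by positivity)
      rw [h2]
      have h3 : Real.sqrt (lam (s+2) i) + Real.sqrt (lam (s+1) i) ≤
          2 * (Real.sqrt (L 0) + Real.sqrt (lamstar i)) := by
        have hb1 := hsqrtbd (s+2) i
        have hb2 := hsqrtbd (s+1) i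
        linarith
      exact mul_le_mul_of_nonneg_left h3 (abs_nonneg _)
    have hmul : Filter.Tendsto
        (fun s => Real.sqrt ((Real.sqrt (lam (s+2) i) - Real.sqrt (lam (s+1) i))^2) *
          (2 * (Real.sqrt (L 0) + Real.sqrt (lamstar i)))) Filter.atTop (nhds 0) := by
      have := habs.mul_const (2 * (Real.sqrt (L 0) + Real.sqrt (lamstar i)))
      simpa using this
    exact squeeze_zero_norm hbound hmul
  have hshift : ∀ i, Filter.Tendsto (fun s => lam s i - lam (s+1) i)
      Filter.atTop (nhds 0) := by
    intro i
    refine (Filter.tendsto_add_atTop_iff_nat 1).mp ?_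
    have := (hfinal i).neg
    simp only [neg_sub, neg_zero] at this
    exact this
  have hsumlim : Filter.Tendsto (fun t => ∑ i, (lam t i - lam (t+1) i))
      Filter.atTop (nhds 0) := by
    have := tendsto_finset_sum Finset.univ (fun i (_ : i ∈ Finset.univ) => hshift i)
    simpa using this
  have hmain : Filter.Tendsto (fun t => ∑ i, lam (t+1) i * c i (x (t+1)))
      Filter.atTop (nhds 0) := by
    have heq : (fun t => ∑ i, lam (t+1) i * c i (x (t+1))) =
        fun t => k⁻¹ * ∑ i, (lam t i - lam (t+1) i) := by
      funext t
      rw [Finset.mul_sum]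
      refine Finset.sum_congr rfl fun i _ => ?_
      rw [hdiffrel t i]
      field_simp
    rw [heq]
    have := hsumlim.const_mul k⁻¹
    simpa using this
  exact (Filter.tendsto_add_atTop_iff_nat 1).mp hmain
end

section
/- Let f, c_i : ℝⁿ → ℝ (i = 1,…,m) be twice continuously differentiable, y with c_i(y) > 0 for all i, and let (x*, λ*) be a KKT pair of min{F(x,y) : c_i(x) ≥ 0} with f(x*) < f(y), active set {1,…,r} (c_i(x*) = 0 and λ*_i > 0 for i ≤ r; c_i(x*) > 0 and λ*_i = 0 for i > r), satisfying the second order sufficient optimality condition: ⟨∇²_{xx}L_y(x*,λ*)u,u⟩ ≥ μ‖u‖² for some μ > 0 and all u with ⟨∇c_i(x*),u⟩ = 0 (i ≤ r), and ∇c_1(x*),…,∇c_r(x*) linearly independent. Then there exist δ > 0 small enough, k₀ > 0 large enough and c > 0 independent of k, such that for every k ≥ k₀ and every λ ∈ ℝ^m with λ_i ≥ δ and |λ_i − λ*_i| ≤ δk for i ≤ r and 0 ≤ λ_i ≤ δk for i > r: (1) there exists x̂ = x̂(λ,k) with ∇_x 𝓛_y(x̂,λ,k) = 0 and k c_i(x̂)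 + 1 > 0 for all i; (2) with λ̂_i = λ_i (k c_i(x̂) + 1)⁻¹, the bound max{‖x̂ − x*‖_∞, ‖λ̂ − λ*‖_∞} ≤ c k⁻¹ ‖λ − λ*‖_∞ holds; and (3) x̂(λ*,k) = x* and λ̂(λ*,k) = λ*, i.e. λ* is a fixed point of the multiplier map λ ↦ λ̂(λ,k). -/
open Real RealInnerProductSpace Filter Topology Metric

lemma abs_ift {P₁ P₂ Z : Type*}
    [NormedAddCommGroup P₁] [NormedSpace ℝ P₁] [FiniteDimensional ℝ P₁]
    [NormedAddCommGroup P₂] [NormedSpace ℝ P₂] [FiniteDimensional ℝ P₂]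
    [NormedAddCommGroup Z] [NormedSpace ℝ Z] [FiniteDimensional ℝ Z]
    (G : (P₁ × P₂) × Z → Z) (z₀ : Z)
    (hG : ContDiffAt ℝ 1 G ((0, 0), z₀))
    (D : ((P₁ × P₂) × Z) →L[ℝ] Z)
    (hD : HasFDerivAt G D ((0, 0), z₀))
    (Dz : Z ≃L[ℝ] Z)
    (hDz : ∀ w : Z, D (0, w) = Dz w)
    (hfix : ∀ s : P₂, G ((0, s), z₀) = 0)
    (η : ℝ) (hη : 0 < η) :
    ∃ ε > 0, ∃ L > 0, ∃ φ : P₁ × P₂ → Z,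
      (∀ p : P₁ × P₂, ‖p.1‖ ≤ ε → ‖p.2‖ ≤ ε →
        G (p, φ p) = 0 ∧ ‖φ p - z₀‖ ≤ η ∧ ‖φ p - z₀‖ ≤ L * ‖p.1‖) ∧
      (∀ s : P₂, ‖s‖ ≤ ε → φ (0, s) = z₀) := by
  classical
  set p₀ : (P₁ × P₂) × Z := ((0, 0), z₀) with hp₀
  set Ψ : (P₁ × P₂) × Z → (P₁ × P₂) × Z := fun q => (q.1, G q) with hΨdef
  -- the split of D
  set Dp : (P₁ × P₂) →L[ℝ] Z := D.comp (ContinuousLinearMap.inl ℝ _ _) with hDp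
  have hDsplit : ∀ (p : P₁ × P₂) (w : Z), D (p, w) = Dp p + Dz w := by
    intro p w
    have h1 : ((p, w) : (P₁ × P₂) × Z) = (p, 0) + (0, w) := by simp
    rw [h1, map_add, ← hDz w]
    rfl
  -- the full derivative as a continuous linear equiv
  set Df : ((P₁ × P₂) × Z) →L[ℝ] ((P₁ × P₂) × Z) :=
    (ContinuousLinearMap.fst ℝ _ _).prod D with hDf
  set Dg : ((P₁ × P₂) × Z) →L[ℝ] ((P₁ × P₂) × Z) :=
    (ContinuousLinearMap.fst ℝ _ _).prod
      ((Dz.symm : Z →L[ℝ] Z).comp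
        ((ContinuousLinearMap.snd ℝ _ _) - Dp.comp (ContinuousLinearMap.fst ℝ _ _))) with hDg
  have hgf : Function.LeftInverse Dg Df := by
    intro q
    simp only [hDf, hDg, ContinuousLinearMap.prod_apply, ContinuousLinearMap.coe_comp',
      Function.comp_apply, ContinuousLinearMap.coe_fst', ContinuousLinearMap.coe_snd',
      ContinuousLinearMap.sub_apply]
    have : D q = Dp q.1 + Dz q.2 := by rw [← hDsplit q.1 q.2]
    rw [this]
    simp
  have hfg : Function.RightInverse Dg Df := by
    intro q
    simp only [hDf, hDg, ContinuousLinearMap.prod_apply, ContinuousLinearMap.coe_comp',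
      Function.comp_apply, ContinuousLinearMap.coe_fst', ContinuousLinearMap.coe_snd',
      ContinuousLinearMap.sub_apply]
    rw [hDsplit]
    simp
  set DΨ : ((P₁ × P₂) × Z) ≃L[ℝ] ((P₁ × P₂) × Z) :=
    ContinuousLinearEquiv.equivOfInverse Df Dg hgf hfg with hDΨ
  have hΨc : ContDiffAt ℝ 1 Ψ p₀ := ContDiffAt.prodMk contDiffAt_fst hG
  have hΨd : HasFDerivAt Ψ (DΨ : ((P₁ × P₂) × Z) →L[ℝ] ((P₁ × P₂) × Z)) p₀ := by
    have : HasFDerivAt Ψ Df p₀ := HasFDerivAt.prodMk hasFDerivAt_fst hD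
    exact this
  have hs : HasStrictFDerivAt Ψ (DΨ : ((P₁ × P₂) × Z) →L[ℝ] ((P₁ × P₂) × Z)) p₀ :=
    hΨc.hasStrictFDerivAt' hΨd one_ne_zero
  set inv : ((P₁ × P₂) × Z) → ((P₁ × P₂) × Z) := hs.localInverse Ψ DΨ p₀ with hinv
  have hinv_cd : ContDiffAt ℝ 1 inv (Ψ p₀) := hΨc.to_localInverse hΨd one_ne_zero
  have hb₀ : Ψ p₀ = ((0, 0), 0) := by
    simp only [hΨdef, hp₀]
    rw [hfix 0]
  -- the implicit function
  set ψ : P₁ × P₂ → Z := fun p => (inv (p, 0)).2 with hψdef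
  have hψc : ContDiffAt ℝ 1 ψ (0, 0) := by
    have h1 : ContDiffAt ℝ 1 inv (((0, 0) : P₁ × P₂), (0 : Z)) := hb₀ ▸ hinv_cd
    have h2 : ContDiffAt ℝ 1 (fun p : P₁ × P₂ => ((p, (0 : Z)) : (P₁ × P₂) × Z)) (0, 0) :=
      ContDiffAt.prodMk contDiffAt_id contDiffAt_const
    have h3 : ContDiffAt ℝ 1 (fun p : P₁ × P₂ => inv (p, 0)) (0, 0) :=
      ContDiffAt.comp (g := inv) (f := fun p : P₁ × P₂ => ((p, (0 : Z)) : (P₁ × P₂) × Z))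
        (0, 0) h1 h2
    exact ContDiffAt.comp (g := Prod.snd) (f := fun p : P₁ × P₂ => inv (p, 0))
      (0, 0) contDiffAt_snd h3
  -- C¹ neighborhood and derivative bound
  obtain ⟨u, hu, hcd⟩ : ∃ u ∈ 𝓝 ((0, 0) : P₁ × P₂), ContDiffOn ℝ 1 ψ u :=
    hψc.contDiffOn le_rfl (by simp)
  obtain ⟨v, hvu, hv_open, hv0⟩ := _root_.mem_nhds_iff.1 hu
  obtain ⟨ρ, hρpos, hρv⟩ : ∃ ρ > 0, closedBall ((0, 0) : P₁ × P₂) ρ ⊆ v := by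
    obtain ⟨ρ', hρ'pos, hρ'⟩ := Metric.isOpen_iff.1 hv_open _ hv0
    exact ⟨ρ' / 2, by positivity, (closedBall_subset_ball (by linarith)).trans hρ'⟩
  have hdiff : ∀ q ∈ closedBall ((0, 0) : P₁ × P₂) ρ, DifferentiableAt ℝ ψ q := by
    intro q hq
    exact ((hcd.mono hvu).differentiableOn one_ne_zero).differentiableAt
      (hv_open.mem_nhds (hρv hq))
  obtain ⟨C, hC⟩ : ∃ C, ∀ q ∈ closedBall ((0, 0) : P₁ × P₂) ρ, ‖fderiv ℝ ψ q‖ ≤ C := by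
    have hcont : ContinuousOn (fun q => fderiv ℝ ψ q) (closedBall ((0, 0) : P₁ × P₂) ρ) := by
      have := ((hcd.mono hvu).continuousOn_fderiv_of_isOpen hv_open le_rfl).mono hρv
      exact this
    obtain ⟨C, hC⟩ := (isCompact_closedBall _ _).exists_bound_of_continuousOn hcont
    exact ⟨C, hC⟩
  set L : ℝ := max C 1 with hL
  have hLpos : (0 : ℝ) < L := lt_of_lt_of_le one_pos (le_max_right _ _)
  have hC' : ∀ q ∈ closedBall ((0, 0) : P₁ × P₂) ρ, ‖fderiv ℝ ψ q‖ ≤ L :=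
    fun q hq => (hC q hq).trans (le_max_left _ _)
  have hmvt : ∀ a ∈ closedBall ((0, 0) : P₁ × P₂) ρ, ∀ b ∈ closedBall ((0, 0) : P₁ × P₂) ρ,
      ‖ψ b - ψ a‖ ≤ L * ‖b - a‖ := fun a ha b hb =>
    Convex.norm_image_sub_le_of_norm_fderiv_le hdiff hC' (convex_closedBall _ _) ha hb
  -- radii for the left/right inverse properties
  obtain ⟨ε₁, hε₁pos, hε₁⟩ : ∃ ε₁ > 0, ∀ ζ : (P₁ × P₂) × Z,
      dist ζ ((0, 0), 0) < ε₁ → Ψ (inv ζ) = ζ := by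
    have := hs.eventually_right_inverse
    rw [hb₀] at this
    obtain ⟨ε₁, hε₁pos, h⟩ := Metric.eventually_nhds_iff.1 this
    exact ⟨ε₁, hε₁pos, fun ζ hζ => h hζ⟩
  obtain ⟨ε₂, hε₂pos, hε₂⟩ : ∃ ε₂ > 0, ∀ q : (P₁ × P₂) × Z,
      dist q p₀ < ε₂ → inv (Ψ q) = q := by
    obtain ⟨ε₂, hε₂pos, h⟩ := Metric.eventually_nhds_iff.1 hs.eventually_left_inverse
    exact ⟨ε₂, hε₂pos, fun q hq => h hq⟩
  -- choice of ε
  set ε : ℝ := min (min (ε₁ / 2) (ε₂ / 2)) (min ρ (η / L)) with hε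
  have hεpos : 0 < ε := by
    apply lt_min (lt_min (by linarith) (by linarith)) (lt_min hρpos (by positivity))
  have hεa : ε < ε₁ := (min_le_left _ _).trans_lt
    (lt_of_le_of_lt (min_le_left _ _) (by linarith))
  have hεb : ε < ε₂ := (min_le_left _ _).trans_lt
    (lt_of_le_of_lt (min_le_right _ _) (by linarith))
  have hερ : ε ≤ ρ := (min_le_right _ _).trans (min_le_left _ _)
  have hεη : ε ≤ η / L := (min_le_right _ _).trans (min_le_right _ _)
  -- the fixed-axis property
  have hfixφ : ∀ s : P₂, ‖s‖ ≤ ε → ψ (0, s) = z₀ := by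
    intro s hs'
    have hq : dist (((0, s), z₀) : (P₁ × P₂) × Z) p₀ < ε₂ := by
      rw [hp₀, Prod.dist_eq, Prod.dist_eq, dist_self, dist_self, dist_zero_right,
        max_eq_right (norm_nonneg s), max_eq_left (norm_nonneg s)]
      exact lt_of_le_of_lt hs' hεb
    have h1 : inv (Ψ ((0, s), z₀)) = ((0, s), z₀) := hε₂ _ hq
    have h2 : Ψ ((0, s), z₀) = ((0, s), 0) := by
      simp only [hΨdef]
      rw [hfix s]
    rw [h2] at h1
    have : (inv ((0, s), 0)).2 = z₀ := by rw [h1]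
    exact this
  refine ⟨ε, hεpos, L, hLpos, ψ, ?_, hfixφ⟩
  intro p hp1 hp2
  have hpnorm : ‖p‖ ≤ ε := by
    rw [Prod.norm_def]
    exact max_le hp1 hp2
  -- right inverse gives the equation
  have hGzero : G (p, ψ p) = 0 := by
    have hζ : dist ((p, (0 : Z)) : (P₁ × P₂) × Z) ((0, 0), 0) < ε₁ := by
      have h00 : ((0, 0) : P₁ × P₂) = 0 := rfl
      rw [Prod.dist_eq, dist_self, h00, dist_zero_right, max_eq_left (norm_nonneg _)]
      exact lt_of_le_of_lt hpnorm hεa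
    have h1 : Ψ (inv (p, 0)) = (p, 0) := hε₁ _ hζ
    have h2 : (inv ((p, (0 : Z)) : (P₁ × P₂) × Z)).1 = p := congrArg Prod.fst h1
    have h3 : G (inv (p, 0)) = 0 := congrArg Prod.snd h1
    have h4 : (inv ((p, (0 : Z)) : (P₁ × P₂) × Z)) = (p, ψ p) := by
      rw [Prod.ext_iff]
      exact ⟨h2, rfl⟩
    rw [h4] at h3
    exact h3
  -- the Lipschitz bound
  have hball1 : p ∈ closedBall ((0, 0) : P₁ × P₂) ρ := by
    have h00 : ((0, 0) : P₁ × P₂) = 0 := rfl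
    rw [mem_closedBall, h00, dist_zero_right]
    exact hpnorm.trans hερ
  have hball2 : ((0 : P₁), p.2) ∈ closedBall ((0, 0) : P₁ × P₂) ρ := by
    rw [mem_closedBall, Prod.dist_eq, dist_self, dist_zero_right,
      max_eq_right (norm_nonneg _)]
    exact hp2.trans hερ
  have hlip : ‖ψ p - ψ (0, p.2)‖ ≤ L * ‖p.1‖ := by
    have := hmvt ((0 : P₁), p.2) hball2 p hball1
    have heq : p - ((0 : P₁), p.2) = (p.1, 0) := by
      ext <;> simp
    rw [heq] at this
    have hnorm : ‖((p.1, (0 : P₂)) : P₁ × P₂)‖ = ‖p.1‖ := by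
      rw [Prod.norm_def]
      simp [max_eq_left (norm_nonneg _)]
    rw [hnorm] at this
    exact this
  have hψ0 : ψ (0, p.2) = z₀ := hfixφ p.2 hp2
  rw [hψ0] at hlip
  refine ⟨hGzero, ?_, hlip⟩
  calc ‖ψ p - z₀‖ ≤ L * ‖p.1‖ := hlip
    _ ≤ L * ε := mul_le_mul_of_nonneg_left hp1 hLpos.le
    _ ≤ η := by
        have h5 := mul_le_mul_of_nonneg_left hεη hLpos.le
        rwa [mul_comm L (η / L), div_mul_cancel₀ _ hLpos.ne'] at h5

set_option maxHeartbeats 1000000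

noncomputable section

/-- The real continuous linear equivalence between the dual of a Euclidean space and the
space itself, sending a functional to its Riesz representative. -/
private def Jdual (N : ℕ) :
    (EuclideanSpace ℝ (Fin N) →L[ℝ] ℝ) ≃L[ℝ] EuclideanSpace ℝ (Fin N) :=
  ContinuousLinearEquiv.equivOfInverse
    { toLinearMap :=
        { toFun := fun ξ => (InnerProductSpace.toDual ℝ (EuclideanSpace ℝ (Fin N))).symm ξ
          map_add' := fun ξ ζ => map_add _ _ _
          map_smul' := fun r ξ => by
            simp [LinearIsometryEquiv.map_smulₛₗ, starRingEnd_apply] }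
      cont := (InnerProductSpace.toDual ℝ (EuclideanSpace ℝ (Fin N))).symm.continuous }
    (innerSL ℝ)
    (fun ξ => by
      apply ContinuousLinearMap.ext
      intro u
      show ⟪(InnerProductSpace.toDual ℝ (EuclideanSpace ℝ (Fin N))).symm ξ, u⟫ = ξ u
      exact InnerProductSpace.toDual_symm_apply)
    (fun w => by
      have h : (innerSL ℝ) w
          = (InnerProductSpace.toDual ℝ (EuclideanSpace ℝ (Fin N))) w := by
        ext u
        simp [InnerProductSpace.toDual_apply_apply]
      show (InnerProductSpace.toDual ℝ (EuclideanSpace ℝ (Fin N))).symm ((innerSL ℝ) w) = w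
      rw [h, LinearIsometryEquiv.symm_apply_apply])

private lemma Jdual_apply (N : ℕ) (ξ : EuclideanSpace ℝ (Fin N) →L[ℝ] ℝ) :
    Jdual N ξ = (InnerProductSpace.toDual ℝ (EuclideanSpace ℝ (Fin N))).symm ξ := by
  rfl

private lemma gradient_eq_Jdual {N : ℕ} (g : EuclideanSpace ℝ (Fin N) → ℝ)
    (x : EuclideanSpace ℝ (Fin N)) : gradient g x = Jdual N (fderiv ℝ g x) := rfl

private lemma inner_Jdual {N : ℕ} (ξ : EuclideanSpace ℝ (Fin N) →L[ℝ] ℝ)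
    (u : EuclideanSpace ℝ (Fin N)) : ⟪Jdual N ξ, u⟫ = ξ u := by
  rw [Jdual_apply]
  exact InnerProductSpace.toDual_symm_apply

private lemma contDiffAt_gradient {N : ℕ} {g : EuclideanSpace ℝ (Fin N) → ℝ}
    {x₀ : EuclideanSpace ℝ (Fin N)} (hg : ContDiffAt ℝ 2 g x₀) :
    ContDiffAt ℝ 1 (fun x => gradient g x) x₀ := by
  have h1 : ContDiffAt ℝ 1 (fderiv ℝ g) x₀ := hg.fderiv_right (by norm_num)
  have h2 : ContDiff ℝ 1 (fun ξ : EuclideanSpace ℝ (Fin N) →L[ℝ] ℝ => Jdual N ξ) :=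
    (Jdual N : (EuclideanSpace ℝ (Fin N) →L[ℝ] ℝ) →L[ℝ] EuclideanSpace ℝ (Fin N)).contDiff
  have h3 : ContDiffAt ℝ 1 (fun x => Jdual N (fderiv ℝ g x)) x₀ :=
    ContDiffAt.comp x₀ h2.contDiffAt h1
  exact h3.congr_of_eventuallyEq (Filter.Eventually.of_forall fun x => gradient_eq_Jdual g x)

private lemma euclid_coord_norm_le {N : ℕ} (z : EuclideanSpace ℝ (Fin N)) :
    ‖(fun j => z j : Fin N → ℝ)‖ ≤ ‖z‖ := by
  rw [pi_norm_le_iff_of_nonneg (norm_nonneg z)]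
  intro j
  rw [Real.norm_eq_abs]
  calc |z j| = Real.sqrt (‖z j‖ ^ 2) := by
        rw [Real.norm_eq_abs, Real.sqrt_sq_eq_abs, abs_abs]
    _ ≤ Real.sqrt (∑ i, ‖z i‖ ^ 2) := by
        apply Real.sqrt_le_sqrt
        exact Finset.single_le_sum (f := fun i => ‖z i‖ ^ 2)
          (fun i _ => sq_nonneg _) (Finset.mem_univ j)
    _ = ‖z‖ := (EuclideanSpace.norm_eq z).symm

section EPM

variable {n m : ℕ} (f : EuclideanSpace ℝ (Fin n) → ℝ)
  (c : Fin m → EuclideanSpace ℝ (Fin n) → ℝ)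
  (y xstar : EuclideanSpace ℝ (Fin n)) (lamstar : Fin m → ℝ)

private def epmG :
    ((Fin m → ℝ) × ℝ) × (EuclideanSpace ℝ (Fin n) × (Fin m → ℝ)) →
      EuclideanSpace ℝ (Fin n) × (Fin m → ℝ) :=
  fun q =>
    (gradient (fun x => -Real.log (f y - f x)) q.2.1 - ∑ i, q.2.2 i • gradient (c i) q.2.1,
     fun i => q.2.2 i * c i q.2.1 + q.1.2 * q.2.2 i - q.1.2 * lamstar i - q.1.1 i)

private def prX (n m : ℕ) :
    (((Fin m → ℝ) × ℝ) × (EuclideanSpace ℝ (Fin n) × (Fin m → ℝ))) →L[ℝ]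
      EuclideanSpace ℝ (Fin n) :=
  (ContinuousLinearMap.fst ℝ (EuclideanSpace ℝ (Fin n)) (Fin m → ℝ)).comp
    (ContinuousLinearMap.snd ℝ ((Fin m → ℝ) × ℝ) (EuclideanSpace ℝ (Fin n) × (Fin m → ℝ)))

private def prL (n m : ℕ) :
    (((Fin m → ℝ) × ℝ) × (EuclideanSpace ℝ (Fin n) × (Fin m → ℝ))) →L[ℝ] (Fin m → ℝ) :=
  (ContinuousLinearMap.snd ℝ (EuclideanSpace ℝ (Fin n)) (Fin m → ℝ)).comp
    (ContinuousLinearMap.snd ℝ ((Fin m → ℝ) × ℝ) (EuclideanSpace ℝ (Fin n) × (Fin m → ℝ)))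

private def prT (n m : ℕ) :
    (((Fin m → ℝ) × ℝ) × (EuclideanSpace ℝ (Fin n) × (Fin m → ℝ))) →L[ℝ] (Fin m → ℝ) :=
  (ContinuousLinearMap.fst ℝ (Fin m → ℝ) ℝ).comp
    (ContinuousLinearMap.fst ℝ ((Fin m → ℝ) × ℝ) (EuclideanSpace ℝ (Fin n) × (Fin m → ℝ)))

private def prS (n m : ℕ) :
    (((Fin m → ℝ) × ℝ) × (EuclideanSpace ℝ (Fin n) × (Fin m → ℝ))) →L[ℝ] ℝ :=
  (ContinuousLinearMap.snd ℝ (Fin m → ℝ) ℝ).comp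
    (ContinuousLinearMap.fst ℝ ((Fin m → ℝ) × ℝ) (EuclideanSpace ℝ (Fin n) × (Fin m → ℝ)))

private def epmD :
    (((Fin m → ℝ) × ℝ) × (EuclideanSpace ℝ (Fin n) × (Fin m → ℝ))) →L[ℝ]
      EuclideanSpace ℝ (Fin n) × (Fin m → ℝ) :=
  ((fderiv ℝ (fun x => gradient (fun x' => -Real.log (f y - f x')) x) xstar).comp (prX n m)
    - ∑ i : Fin m,
        (lamstar i • ((fderiv ℝ (fun x => gradient (c i) x) xstar).comp (prX n m))
          + ((ContinuousLinearMap.proj i).comp (prL n m)).smulRight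
              (gradient (c i) xstar))).prod
  (ContinuousLinearMap.pi fun i =>
    (lamstar i • ((fderiv ℝ (c i) xstar).comp (prX n m))
        + c i xstar • ((ContinuousLinearMap.proj i).comp (prL n m)))
      + ((0 : ℝ) • ((ContinuousLinearMap.proj i).comp (prL n m)) + lamstar i • prS n m)
      - lamstar i • prS n m
      - (ContinuousLinearMap.proj i).comp (prT n m))

private lemma epmG_hasFDerivAt (hf : ContDiff ℝ 2 f) (hc : ∀ i, ContDiff ℝ 2 (c i))
    (hlt : f xstar < f y) :
    HasFDerivAt (epmG f c y lamstar) (epmD f c y xstar lamstar)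
      (((0, 0), (xstar, lamstar)) :
        ((Fin m → ℝ) × ℝ) × (EuclideanSpace ℝ (Fin n) × (Fin m → ℝ))) := by
  set p₀ : ((Fin m → ℝ) × ℝ) × (EuclideanSpace ℝ (Fin n) × (Fin m → ℝ)) :=
    ((0, 0), (xstar, lamstar)) with hp₀
  have hFc2 : ContDiffAt ℝ 2 (fun x => -Real.log (f y - f x)) xstar := by
    have h1 : ContDiffAt ℝ 2 (fun x => f y - f x) xstar :=
      (contDiffAt_const.sub hf.contDiffAt)
    exact (h1.log (by simp [sub_ne_zero]; linarith)).neg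
  -- projections have derivatives
  have hprX : HasFDerivAt (fun q : ((Fin m → ℝ) × ℝ) ×
      (EuclideanSpace ℝ (Fin n) × (Fin m → ℝ)) => q.2.1) (prX n m) p₀ :=
    (prX n m).hasFDerivAt
  have hprL : ∀ i : Fin m, HasFDerivAt (fun q : ((Fin m → ℝ) × ℝ) ×
      (EuclideanSpace ℝ (Fin n) × (Fin m → ℝ)) => q.2.2 i)
      ((ContinuousLinearMap.proj i).comp (prL n m)) p₀ :=
    fun i => ((ContinuousLinearMap.proj i).comp (prL n m)).hasFDerivAt
  have hprT : ∀ i : Fin m, HasFDerivAt (fun q : ((Fin m → ℝ) × ℝ) ×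
      (EuclideanSpace ℝ (Fin n) × (Fin m → ℝ)) => q.1.1 i)
      ((ContinuousLinearMap.proj i).comp (prT n m)) p₀ :=
    fun i => ((ContinuousLinearMap.proj i).comp (prT n m)).hasFDerivAt
  have hprS : HasFDerivAt (fun q : ((Fin m → ℝ) × ℝ) ×
      (EuclideanSpace ℝ (Fin n) × (Fin m → ℝ)) => q.1.2) (prS n m) p₀ :=
    (prS n m).hasFDerivAt
  -- first component
  have hgF : HasFDerivAt (fun x => gradient (fun x' => -Real.log (f y - f x')) x)
      (fderiv ℝ (fun x => gradient (fun x' => -Real.log (f y - f x')) x) xstar) xstar :=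
    ((contDiffAt_gradient hFc2).differentiableAt one_ne_zero).hasFDerivAt
  have hgc : ∀ i : Fin m, HasFDerivAt (fun x => gradient (c i) x)
      (fderiv ℝ (fun x => gradient (c i) x) xstar) xstar :=
    fun i => ((contDiffAt_gradient (hc i).contDiffAt).differentiableAt one_ne_zero).hasFDerivAt
  have h1 : HasFDerivAt (fun q : ((Fin m → ℝ) × ℝ) ×
      (EuclideanSpace ℝ (Fin n) × (Fin m → ℝ)) =>
        gradient (fun x => -Real.log (f y - f x)) q.2.1
          - ∑ i, q.2.2 i • gradient (c i) q.2.1)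
      ((fderiv ℝ (fun x => gradient (fun x' => -Real.log (f y - f x')) x) xstar).comp (prX n m)
        - ∑ i : Fin m,
            (lamstar i • ((fderiv ℝ (fun x => gradient (c i) x) xstar).comp (prX n m))
              + ((ContinuousLinearMap.proj i).comp (prL n m)).smulRight
                  (gradient (c i) xstar))) p₀ := by
    have hA : HasFDerivAt (fun q : ((Fin m → ℝ) × ℝ) ×
        (EuclideanSpace ℝ (Fin n) × (Fin m → ℝ)) =>
          gradient (fun x => -Real.log (f y - f x)) q.2.1)
        ((fderiv ℝ (fun x => gradient (fun x' => -Real.log (f y - f x')) x) xstar).comp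
          (prX n m)) p₀ :=
        HasFDerivAt.comp (g := fun x => gradient (fun x' => -Real.log (f y - f x')) x) p₀ hgF hprX
    have hB : ∀ i : Fin m, HasFDerivAt (fun q : ((Fin m → ℝ) × ℝ) ×
        (EuclideanSpace ℝ (Fin n) × (Fin m → ℝ)) => q.2.2 i • gradient (c i) q.2.1)
        (lamstar i • ((fderiv ℝ (fun x => gradient (c i) x) xstar).comp (prX n m))
          + ((ContinuousLinearMap.proj i).comp (prL n m)).smulRight (gradient (c i) xstar))
        p₀ := fun i => (hprL i).smul (HasFDerivAt.comp (g := fun x => gradient (c i) x) p₀ (hgc i) hprX)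
    exact hA.sub (HasFDerivAt.fun_sum fun i _ => hB i)
  -- second component
  have h2 : HasFDerivAt (fun q : ((Fin m → ℝ) × ℝ) ×
      (EuclideanSpace ℝ (Fin n) × (Fin m → ℝ)) =>
        (fun i => q.2.2 i * c i q.2.1 + q.1.2 * q.2.2 i - q.1.2 * lamstar i - q.1.1 i :
          Fin m → ℝ))
      (ContinuousLinearMap.pi fun i =>
        (lamstar i • ((fderiv ℝ (c i) xstar).comp (prX n m))
            + c i xstar • ((ContinuousLinearMap.proj i).comp (prL n m)))
          + ((0 : ℝ) • ((ContinuousLinearMap.proj i).comp (prL n m)) + lamstar i • prS n m)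
          - lamstar i • prS n m
          - (ContinuousLinearMap.proj i).comp (prT n m)) p₀ := by
    apply hasFDerivAt_pi.2
    intro i
    have hci : HasFDerivAt (fun q : ((Fin m → ℝ) × ℝ) ×
        (EuclideanSpace ℝ (Fin n) × (Fin m → ℝ)) => c i q.2.1)
        ((fderiv ℝ (c i) xstar).comp (prX n m)) p₀ :=
      ((hc i).differentiable (by norm_num) xstar).hasFDerivAt.comp p₀ hprX
    exact ((((hprL i).mul hci).add (hprS.mul (hprL i))).sub
      (hprS.mul_const (lamstar i))).sub (hprT i)
  exact h1.prodMk h2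

private lemma epm_contDiffAt_F {x : EuclideanSpace ℝ (Fin n)}
    (hf : ContDiff ℝ 2 f) (hx : f x < f y) :
    ContDiffAt ℝ 2 (fun x' => -Real.log (f y - f x')) x :=
  ((contDiffAt_const.sub hf.contDiffAt).log (by simp [sub_ne_zero]; linarith)).neg

private lemma grad_lag_eq (hf : ContDiff ℝ 2 f) (hc : ∀ i, ContDiff ℝ 2 (c i))
    (x : EuclideanSpace ℝ (Fin n)) (hx : f x < f y) :
    gradient (fun x' => -Real.log (f y - f x') - ∑ i, lamstar i * c i x') x
      = gradient (fun x' => -Real.log (f y - f x')) x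
        - ∑ i, lamstar i • gradient (c i) x := by
  have hF' : HasFDerivAt (fun x' => -Real.log (f y - f x'))
      (fderiv ℝ (fun x' => -Real.log (f y - f x')) x) x :=
    ((epm_contDiffAt_F f y hf hx).differentiableAt (by norm_num)).hasFDerivAt
  have hci : ∀ i : Fin m, HasFDerivAt (c i) (fderiv ℝ (c i) x) x :=
    fun i => ((hc i).differentiable (by norm_num) x).hasFDerivAt
  have hLag : HasFDerivAt (fun x' => -Real.log (f y - f x') - ∑ i, lamstar i * c i x')
      (fderiv ℝ (fun x' => -Real.log (f y - f x')) x
        - ∑ i, lamstar i • fderiv ℝ (c i) x) x :=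
    hF'.sub (HasFDerivAt.fun_sum fun i _ => (hci i).const_mul (lamstar i))
  rw [gradient_eq_Jdual _ x, hLag.fderiv, map_sub, map_sum]
  congr 1
  refine Finset.sum_congr rfl fun i _ => ?_
  rw [map_smul, ← gradient_eq_Jdual]

private lemma epm_fix (hf : ContDiff ℝ 2 f) (hc : ∀ i, ContDiff ℝ 2 (c i))
    (xstar : EuclideanSpace ℝ (Fin n)) (hlt : f xstar < f y)
    (hstat : gradient (fun x => -Real.log (f y - f x) - ∑ i, lamstar i * c i x) xstar = 0)
    (hcomp : ∀ i, lamstar i * c i xstar = 0) :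
    ∀ s : ℝ, epmG f c y lamstar ((0, s), (xstar, lamstar)) = 0 := by
  intro s
  have h1 := grad_lag_eq f c y lamstar hf hc xstar hlt
  unfold epmG
  refine Prod.ext ?_ ?_
  · show gradient (fun x => -Real.log (f y - f x)) xstar
      - ∑ i, lamstar i • gradient (c i) xstar = 0
    rw [← h1, hstat]
  · funext i
    show lamstar i * c i xstar + s * lamstar i - s * lamstar i - (0 : Fin m → ℝ) i = 0
    simp [hcomp i]

private lemma epmD_inj {r : ℕ} (xstar : EuclideanSpace ℝ (Fin n))
    (hf : ContDiff ℝ 2 f) (hc : ∀ i, ContDiff ℝ 2 (c i)) (hlt : f xstar < f y)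
    (hact : ∀ i : Fin m, (i : ℕ) < r → c i xstar = 0 ∧ 0 < lamstar i)
    (hinact : ∀ i : Fin m, r ≤ (i : ℕ) → 0 < c i xstar ∧ lamstar i = 0)
    (μ : ℝ) (hμ : 0 < μ)
    (hsosc : ∀ u : EuclideanSpace ℝ (Fin n),
      (∀ i : Fin m, (i : ℕ) < r → ⟪gradient (c i) xstar, u⟫ = 0) →
      (fderiv ℝ (fderiv ℝ (fun x => -Real.log (f y - f x)
          - ∑ i, lamstar i * c i x)) xstar) u u ≥ μ * ‖u‖ ^ 2)
    (hli : LinearIndependent ℝ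
      (fun i : {i : Fin m // (i : ℕ) < r} => gradient (c i.1) xstar)) :
    ∀ w : EuclideanSpace ℝ (Fin n) × (Fin m → ℝ),
      epmD f c y xstar lamstar ((0, 0), w) = 0 → w = 0 := by
  rintro ⟨u, v⟩ hw
  set HF : EuclideanSpace ℝ (Fin n) →L[ℝ] EuclideanSpace ℝ (Fin n) :=
    fderiv ℝ (fun x => gradient (fun x' => -Real.log (f y - f x')) x) xstar with hHF
  set Hc : Fin m → EuclideanSpace ℝ (Fin n) →L[ℝ] EuclideanSpace ℝ (Fin n) :=
    fun i => fderiv ℝ (fun x => gradient (c i) x) xstar with hHc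
  have hw1 : HF u - ∑ i, (lamstar i • (Hc i) u + v i • gradient (c i) xstar) = 0 := by
    have h := congrArg Prod.fst hw
    simpa [epmD, prX, prL, prT, prS, ContinuousLinearMap.sum_apply] using h
  have hw2 : ∀ i, lamstar i * (fderiv ℝ (c i) xstar) u + c i xstar * v i = 0 := by
    intro i
    have h := congrFun (congrArg Prod.snd hw) i
    simpa [epmD, prX, prL, prT, prS] using h
  have ha : ∀ i : Fin m, r ≤ (i : ℕ) → v i = 0 := by
    intro i hi
    have h := hw2 i
    rw [(hinact i hi).2] at h
    simp only [zero_mul, zero_add] at h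
    rcases mul_eq_zero.1 h with h' | h'
    · exact absurd h' (ne_of_gt (hinact i hi).1)
    · exact h'
  have hb : ∀ i : Fin m, (i : ℕ) < r → (fderiv ℝ (c i) xstar) u = 0 := by
    intro i hi
    have h := hw2 i
    rw [(hact i hi).1] at h
    simp only [zero_mul, add_zero] at h
    rcases mul_eq_zero.1 h with h' | h'
    · exact absurd h' (ne_of_gt (hact i hi).2)
    · exact h'
  have hcrit : ∀ i : Fin m, (i : ℕ) < r → ⟪gradient (c i) xstar, u⟫ = 0 := by
    intro i hi
    rw [gradient_eq_Jdual, inner_Jdual]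
    exact hb i hi
  set A : EuclideanSpace ℝ (Fin n) →L[ℝ] EuclideanSpace ℝ (Fin n) :=
    HF - ∑ i, lamstar i • Hc i with hA
  have hAu : A u = ∑ i, v i • gradient (c i) xstar := by
    have hsplit : ∑ i, (lamstar i • (Hc i) u + v i • gradient (c i) xstar)
        = ∑ i, lamstar i • (Hc i) u + ∑ i, v i • gradient (c i) xstar :=
      Finset.sum_add_distrib
    rw [hsplit] at hw1
    have : A u = HF u - ∑ i, lamstar i • (Hc i) u := by
      simp [hA, ContinuousLinearMap.sum_apply]
    rw [this]
    have := sub_eq_zero.1 hw1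
    rw [this]
    abel
  have hinner : ⟪A u, u⟫ = 0 := by
    rw [hAu, sum_inner]
    apply Finset.sum_eq_zero
    intro i _
    rcases lt_or_ge (i : ℕ) r with hi | hi
    · rw [real_inner_smul_left, hcrit i hi, mul_zero]
    · rw [ha i hi, zero_smul, inner_zero_left]
  -- the Hessian bridge
  have hev : ∀ᶠ x in 𝓝 xstar, f x < f y :=
    (isOpen_lt hf.continuous continuous_const).mem_nhds hlt
  have hgF' : HasFDerivAt (fun x => gradient (fun x' => -Real.log (f y - f x')) x) HF xstar :=
    ((contDiffAt_gradient (epm_contDiffAt_F f y hf hlt)).differentiableAt one_ne_zero).hasFDerivAt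
  have hgc' : ∀ i, HasFDerivAt (fun x => gradient (c i) x) (Hc i) xstar :=
    fun i => ((contDiffAt_gradient (hc i).contDiffAt).differentiableAt one_ne_zero).hasFDerivAt
  have hcombo : HasFDerivAt (fun x => gradient (fun x' => -Real.log (f y - f x')) x
      - ∑ i, lamstar i • gradient (c i) x) A xstar :=
    hgF'.sub (HasFDerivAt.fun_sum fun i _ => (hgc' i).const_smul (lamstar i))
  have hevEq : (fun x => gradient (fun x' => -Real.log (f y - f x')
        - ∑ i, lamstar i * c i x') x)
      =ᶠ[𝓝 xstar] (fun x => gradient (fun x' => -Real.log (f y - f x')) x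
        - ∑ i, lamstar i • gradient (c i) x) := by
    filter_upwards [hev] with x hx
    exact grad_lag_eq f c y lamstar hf hc x hx
  have hLagA : HasFDerivAt (fun x => gradient (fun x' => -Real.log (f y - f x')
      - ∑ i, lamstar i * c i x') x) A xstar :=
    hcombo.congr_of_eventuallyEq hevEq
  have hfd : (fderiv ℝ (fun x' => -Real.log (f y - f x') - ∑ i, lamstar i * c i x'))
      = fun x => (Jdual n).symm (gradient (fun x' => -Real.log (f y - f x')
          - ∑ i, lamstar i * c i x') x) := by
    funext x
    rw [gradient_eq_Jdual, ContinuousLinearEquiv.symm_apply_apply]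
  have hBd : HasFDerivAt (fun x => (Jdual n).symm
        (gradient (fun x' => -Real.log (f y - f x') - ∑ i, lamstar i * c i x') x))
      (((Jdual n).symm : EuclideanSpace ℝ (Fin n) →L[ℝ]
          (EuclideanSpace ℝ (Fin n) →L[ℝ] ℝ)).comp A) xstar :=
    (((Jdual n).symm : EuclideanSpace ℝ (Fin n) →L[ℝ]
        (EuclideanSpace ℝ (Fin n) →L[ℝ] ℝ))).hasFDerivAt.comp xstar hLagA
  rw [← hfd] at hBd
  have hBB : fderiv ℝ (fderiv ℝ (fun x' => -Real.log (f y - f x')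
      - ∑ i, lamstar i * c i x')) xstar
      = (((Jdual n).symm : EuclideanSpace ℝ (Fin n) →L[ℝ]
          (EuclideanSpace ℝ (Fin n) →L[ℝ] ℝ))).comp A := hBd.fderiv
  have hquad : (fderiv ℝ (fderiv ℝ (fun x' => -Real.log (f y - f x')
      - ∑ i, lamstar i * c i x')) xstar) u u = ⟪A u, u⟫ := by
    rw [hBB]
    have h1 : ⟪A u, u⟫ = ((Jdual n).symm (A u)) u := by
      have := inner_Jdual ((Jdual n).symm (A u)) u
      rw [ContinuousLinearEquiv.apply_symm_apply] at this
      exact this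
    rw [h1]
    rfl
  have hsq := hsosc u hcrit
  rw [hquad, hinner] at hsq
  have hu : u = 0 := by
    have h0 : ‖u‖ ^ 2 ≤ 0 := by nlinarith
    have : ‖u‖ = 0 := by nlinarith [norm_nonneg u, sq_nonneg ‖u‖]
    exact norm_eq_zero.1 this
  have hvsum : ∑ i, v i • gradient (c i) xstar = 0 := by
    rw [← hAu, hu]
    simp
  have hvr : ∀ i : {i : Fin m // (i : ℕ) < r}, v i.1 = 0 := by
    have hsum2 : ∑ i : {i : Fin m // (i : ℕ) < r}, v i.1 • gradient (c i.1) xstar = 0 := by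
      have hfil : ∑ i ∈ Finset.univ.filter (fun i : Fin m => (i : ℕ) < r),
          v i • gradient (c i) xstar = ∑ i, v i • gradient (c i) xstar := by
        apply Finset.sum_filter_of_ne
        intro i _ hne
        by_contra hcon
        push_neg at hcon
        exact hne (by rw [ha i hcon]; simp)
      have hsub : ∑ i ∈ Finset.univ.filter (fun i : Fin m => (i : ℕ) < r),
          v i • gradient (c i) xstar
          = ∑ i : {i : Fin m // (i : ℕ) < r}, v i.1 • gradient (c i.1) xstar := by
        rw [← Finset.sum_subtype (Finset.univ.filter (fun i : Fin m => (i : ℕ) < r))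
          (by simp) (fun i => v i • gradient (c i) xstar)]
      rw [← hsub, hfil, hvsum]
    exact Fintype.linearIndependent_iff.1 hli (fun i => v i.1) hsum2
  have hv : v = 0 := by
    funext i
    rcases lt_or_ge (i : ℕ) r with hi | hi
    · exact hvr ⟨i, hi⟩
    · exact ha i hi
  rw [hu, hv]
  rfl

private lemma epmG_contDiffAt (xstar : EuclideanSpace ℝ (Fin n))
    (hf : ContDiff ℝ 2 f) (hc : ∀ i, ContDiff ℝ 2 (c i)) (hlt : f xstar < f y) :
    ContDiffAt ℝ 1 (epmG f c y lamstar)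
      (((0, 0), (xstar, lamstar)) :
        ((Fin m → ℝ) × ℝ) × (EuclideanSpace ℝ (Fin n) × (Fin m → ℝ))) := by
  set p₀ : ((Fin m → ℝ) × ℝ) × (EuclideanSpace ℝ (Fin n) × (Fin m → ℝ)) :=
    ((0, 0), (xstar, lamstar)) with hp₀
  have hproj_x : ContDiffAt ℝ 1 (fun q : ((Fin m → ℝ) × ℝ) ×
      (EuclideanSpace ℝ (Fin n) × (Fin m → ℝ)) => q.2.1) p₀ :=
    ((prX n m).contDiff).contDiffAt
  have hproj_l : ∀ i : Fin m, ContDiffAt ℝ 1 (fun q : ((Fin m → ℝ) × ℝ) ×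
      (EuclideanSpace ℝ (Fin n) × (Fin m → ℝ)) => q.2.2 i) p₀ :=
    fun i => (((ContinuousLinearMap.proj i).comp (prL n m)).contDiff).contDiffAt
  have hproj_t : ∀ i : Fin m, ContDiffAt ℝ 1 (fun q : ((Fin m → ℝ) × ℝ) ×
      (EuclideanSpace ℝ (Fin n) × (Fin m → ℝ)) => q.1.1 i) p₀ :=
    fun i => (((ContinuousLinearMap.proj i).comp (prT n m)).contDiff).contDiffAt
  have hproj_s : ContDiffAt ℝ 1 (fun q : ((Fin m → ℝ) × ℝ) ×
      (EuclideanSpace ℝ (Fin n) × (Fin m → ℝ)) => q.1.2) p₀ :=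
    ((prS n m).contDiff).contDiffAt
  have h1 : ContDiffAt ℝ 1 (fun q : ((Fin m → ℝ) × ℝ) ×
      (EuclideanSpace ℝ (Fin n) × (Fin m → ℝ)) =>
        gradient (fun x => -Real.log (f y - f x)) q.2.1
          - ∑ i, q.2.2 i • gradient (c i) q.2.1) p₀ := by
    have hgF : ContDiffAt ℝ 1 (fun q : ((Fin m → ℝ) × ℝ) ×
        (EuclideanSpace ℝ (Fin n) × (Fin m → ℝ)) =>
          gradient (fun x => -Real.log (f y - f x)) q.2.1) p₀ :=
      ContDiffAt.comp (g := fun x => gradient (fun x' => -Real.log (f y - f x')) x)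
        (f := fun q : ((Fin m → ℝ) × ℝ) ×
          (EuclideanSpace ℝ (Fin n) × (Fin m → ℝ)) => q.2.1) p₀
        (contDiffAt_gradient (epm_contDiffAt_F f y hf hlt)) hproj_x
    have hsum : ContDiffAt ℝ 1 (fun q : ((Fin m → ℝ) × ℝ) ×
        (EuclideanSpace ℝ (Fin n) × (Fin m → ℝ)) =>
          ∑ i, q.2.2 i • gradient (c i) q.2.1) p₀ := by
      apply ContDiffAt.sum
      intro i _
      exact (hproj_l i).smul
        (ContDiffAt.comp (g := fun x => gradient (c i) x)
          (f := fun q : ((Fin m → ℝ) × ℝ) ×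
            (EuclideanSpace ℝ (Fin n) × (Fin m → ℝ)) => q.2.1) p₀
          (contDiffAt_gradient (hc i).contDiffAt) hproj_x)
    exact hgF.sub hsum
  have h2 : ContDiffAt ℝ 1 (fun q : ((Fin m → ℝ) × ℝ) ×
      (EuclideanSpace ℝ (Fin n) × (Fin m → ℝ)) =>
        (fun i => q.2.2 i * c i q.2.1 + q.1.2 * q.2.2 i - q.1.2 * lamstar i - q.1.1 i :
          Fin m → ℝ)) p₀ := by
    apply contDiffAt_pi.2
    intro i
    have hci : ContDiffAt ℝ 1 (fun q : ((Fin m → ℝ) × ℝ) ×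
        (EuclideanSpace ℝ (Fin n) × (Fin m → ℝ)) => c i q.2.1) p₀ :=
      ContDiffAt.comp p₀ ((hc i).contDiffAt.of_le (by norm_num)) hproj_x
    exact ((((hproj_l i).mul hci).add (hproj_s.mul (hproj_l i))).sub
      (hproj_s.mul contDiffAt_const)).sub (hproj_t i)
  exact h1.prodMk h2

private lemma edf_grad_zero (hf : ContDiff ℝ 2 f) (hc : ∀ i, ContDiff ℝ 2 (c i))
    (k : ℝ) (hk : 0 < k) (lam lh : Fin m → ℝ) (xh : EuclideanSpace ℝ (Fin n))
    (hfy : f xh < f y) (hpos : ∀ i, 0 < k * c i xh + 1)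
    (hE2 : ∀ i, lh i * (k * c i xh + 1) = lam i)
    (hE1 : gradient (fun x => -Real.log (f y - f x)) xh
      - ∑ i, lh i • gradient (c i) xh = 0) :
    gradient (fun x => -Real.log (f y - f x)
      - k⁻¹ * ∑ i, lam i * Real.log (k * c i x + 1)) xh = 0 := by
  have hFd : HasFDerivAt (fun x => -Real.log (f y - f x))
      (fderiv ℝ (fun x => -Real.log (f y - f x)) xh) xh :=
    ((epm_contDiffAt_F f y hf hfy).differentiableAt (by norm_num)).hasFDerivAt
  have hBi : ∀ i : Fin m, HasFDerivAt (fun x => Real.log (k * c i x + 1))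
      ((k * c i xh + 1)⁻¹ • (k • fderiv ℝ (c i) xh)) xh := by
    intro i
    have h1 : HasFDerivAt (fun x => k * c i x + 1) (k • fderiv ℝ (c i) xh) xh :=
      (((hc i).differentiable (by norm_num) xh).hasFDerivAt.const_mul k).add_const 1
    exact h1.log (ne_of_gt (hpos i))
  have hsum : HasFDerivAt (fun x => k⁻¹ * ∑ i, lam i * Real.log (k * c i x + 1))
      (k⁻¹ • ∑ i, lam i • ((k * c i xh + 1)⁻¹ • (k • fderiv ℝ (c i) xh))) xh := by
    have h2 : HasFDerivAt (fun x => ∑ i, lam i * Real.log (k * c i x + 1))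
        (∑ i, lam i • ((k * c i xh + 1)⁻¹ • (k • fderiv ℝ (c i) xh))) xh :=
      HasFDerivAt.fun_sum fun i _ => (hBi i).const_mul (lam i)
    exact h2.const_mul k⁻¹
  have hEDF : HasFDerivAt (fun x => -Real.log (f y - f x)
      - k⁻¹ * ∑ i, lam i * Real.log (k * c i x + 1))
      (fderiv ℝ (fun x => -Real.log (f y - f x)) xh
        - k⁻¹ • ∑ i, lam i • ((k * c i xh + 1)⁻¹ • (k • fderiv ℝ (c i) xh))) xh :=
    hFd.sub hsum
  rw [gradient_eq_Jdual, hEDF.fderiv, map_sub, map_smul, map_sum]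
  have hcoeff : ∀ i : Fin m, Jdual n (lam i • ((k * c i xh + 1)⁻¹ • (k • fderiv ℝ (c i) xh)))
      = (k * (lh i)) • gradient (c i) xh := by
    intro i
    rw [map_smul, map_smul, map_smul, ← gradient_eq_Jdual, smul_smul, smul_smul]
    congr 1
    have hne : k * c i xh + 1 ≠ 0 := ne_of_gt (hpos i)
    have hlh : lh i = lam i * (k * c i xh + 1)⁻¹ := by
      field_simp
      rw [hE2 i]
    rw [hlh]
    ring
  calc gradient (fun x => -Real.log (f y - f x)) xh
        - k⁻¹ • ∑ i, Jdual n (lam i • ((k * c i xh + 1)⁻¹ • (k • fderiv ℝ (c i) xh)))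
      = gradient (fun x => -Real.log (f y - f x)) xh
        - k⁻¹ • ∑ i, (k * lh i) • gradient (c i) xh := by
        rw [Finset.sum_congr rfl fun i _ => hcoeff i]
    _ = gradient (fun x => -Real.log (f y - f x)) xh - ∑ i, lh i • gradient (c i) xh := by
        rw [Finset.smul_sum]
        congr 1
        refine Finset.sum_congr rfl fun i _ => ?_
        rw [smul_smul]
        congr 1
        field_simp
    _ = 0 := hE1

end EPM

/-- Local convergence bound for the EPM step (Theorem 3 of the paper): under the second
order sufficient optimality condition at a KKT pair `(x*, λ*)` with active set `{1,…,r}`,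
there exist `δ > 0` small enough, `k₀ > 0` large enough and `c > 0` independent of `k`,
and a map `(k, λ) ↦ x̂(λ,k)`, such that for all `k ≥ k₀` and all `λ` in the extended dual
set (`λ_i ≥ δ`, `|λ_i - λ*_i| ≤ δ k` for `i ≤ r`; `0 ≤ λ_i ≤ δ k` for `i > r`):
(1) `∇_x 𝓛_y(x̂,λ,k) = 0` and `k c_i(x̂) + 1 > 0`;
(2) with `λ̂_i = λ_i (k c_i(x̂) + 1)⁻¹`,
`max {‖x̂ - x*‖_∞, ‖λ̂ - λ*‖_∞} ≤ c k⁻¹ ‖λ - λ*‖_∞`;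
(3) `x̂(λ*,k) = x*` and `λ̂(λ*,k) = λ*` (`λ*` is a fixed point of `λ ↦ λ̂(λ,k)`). -/
theorem EPM_local_rate {n m r : ℕ} (hrm : r ≤ m)
    (f : EuclideanSpace ℝ (Fin n) → ℝ)
    (c : Fin m → EuclideanSpace ℝ (Fin n) → ℝ)
    (hf : ContDiff ℝ 2 f) (hc : ∀ i, ContDiff ℝ 2 (c i))
    (y xstar : EuclideanSpace ℝ (Fin n)) (lamstar : Fin m → ℝ)
    (hy : ∀ i, 0 < c i y) (hlt : f xstar < f y)
    (hact : ∀ i : Fin m, (i : ℕ) < r → c i xstar = 0 ∧ 0 < lamstar i)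
    (hinact : ∀ i : Fin m, r ≤ (i : ℕ) → 0 < c i xstar ∧ lamstar i = 0)
    (hstat : gradient (fun x => -Real.log (f y - f x)
        - ∑ i, lamstar i * c i x) xstar = 0)
    (μ : ℝ) (hμ : 0 < μ)
    (hsosc : ∀ u : EuclideanSpace ℝ (Fin n),
      (∀ i : Fin m, (i : ℕ) < r → ⟪gradient (c i) xstar, u⟫ = 0) →
      (fderiv ℝ (fderiv ℝ (fun x => -Real.log (f y - f x)
          - ∑ i, lamstar i * c i x)) xstar) u u ≥ μ * ‖u‖ ^ 2)
    (hli : LinearIndependent ℝ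
      (fun i : {i : Fin m // (i : ℕ) < r} => gradient (c i.1) xstar)) :
    ∃ δ : ℝ, 0 < δ ∧ ∃ k₀ : ℝ, 0 < k₀ ∧ ∃ cc : ℝ, 0 < cc ∧
      ∃ X : ℝ → (Fin m → ℝ) → EuclideanSpace ℝ (Fin n),
        ∀ k : ℝ, k₀ ≤ k → ∀ lam : Fin m → ℝ,
          (∀ i : Fin m, (i : ℕ) < r → δ ≤ lam i ∧ |lam i - lamstar i| ≤ δ * k) →
          (∀ i : Fin m, r ≤ (i : ℕ) → 0 ≤ lam i ∧ lam i ≤ δ * k) →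
          -- (1) existence of a stationary point of the EDF
          gradient (fun x => -Real.log (f y - f x)
              - k⁻¹ * ∑ i, lam i * Real.log (k * c i x + 1)) (X k lam) = 0 ∧
          (∀ i, 0 < k * c i (X k lam) + 1) ∧
          -- (2) the basic bound for the primal-dual pair
          max ‖(fun j => X k lam j - xstar j : Fin n → ℝ)‖
              ‖(fun i => lam i * (k * c i (X k lam) + 1)⁻¹ - lamstar i : Fin m → ℝ)‖
            ≤ cc * k⁻¹ * ‖(fun i => lam i - lamstar i : Fin m → ℝ)‖ ∧
          -- (3) λ* is a fixed point
          X k lamstar = xstar ∧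
          (∀ i, lamstar i * (k * c i (X k lamstar) + 1)⁻¹ = lamstar i) := by
  classical
  have hcomp : ∀ i, lamstar i * c i xstar = 0 := by
    intro i
    rcases lt_or_ge (i : ℕ) r with hi | hi
    · rw [(hact i hi).1, mul_zero]
    · rw [(hinact i hi).2, zero_mul]
  -- choice of η
  obtain ⟨η₁, hη₁pos, hη₁⟩ : ∃ η₁ > 0, ∀ i : Fin m, (i : ℕ) < r → η₁ < lamstar i := by
    rcases (Finset.univ.filter (fun i : Fin m => (i : ℕ) < r)).eq_empty_or_nonempty
      with he | hne
    · refine ⟨1, one_pos, fun i hi => ?_⟩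
      have hmem : i ∈ Finset.univ.filter (fun j : Fin m => (j : ℕ) < r) :=
        Finset.mem_filter.2 ⟨Finset.mem_univ i, hi⟩
      rw [he] at hmem
      exact absurd hmem (Finset.notMem_empty i)
    · refine ⟨(Finset.univ.filter (fun i : Fin m => (i : ℕ) < r)).inf' hne lamstar / 2,
        ?_, ?_⟩
      · have : 0 < (Finset.univ.filter (fun i : Fin m => (i : ℕ) < r)).inf' hne lamstar := by
          rw [Finset.lt_inf'_iff]
          intro i hi
          exact (hact i (Finset.mem_filter.1 hi).2).2
        linarith
      · intro i hi
        have h1 : (Finset.univ.filter (fun i : Fin m => (i : ℕ) < r)).inf' hne lamstar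
            ≤ lamstar i :=
          Finset.inf'_le _ (Finset.mem_filter.2 ⟨Finset.mem_univ i, hi⟩)
        have h2 : 0 < (Finset.univ.filter (fun i : Fin m => (i : ℕ) < r)).inf' hne lamstar := by
          rw [Finset.lt_inf'_iff]
          intro j hj
          exact (hact j (Finset.mem_filter.1 hj).2).2
        linarith
  obtain ⟨η₂, hη₂pos, hη₂⟩ : ∃ η₂ > 0, ∀ x : EuclideanSpace ℝ (Fin n),
      dist x xstar ≤ η₂ → f x < f y ∧ ∀ i : Fin m, r ≤ (i : ℕ) → 0 < c i x := by
    have h1 : ∀ᶠ x in nhds xstar, f x < f y :=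
      (isOpen_lt hf.continuous continuous_const).mem_nhds hlt
    have h2 : ∀ᶠ x in nhds xstar, ∀ i : Fin m, r ≤ (i : ℕ) → 0 < c i x := by
      rw [Filter.eventually_all]
      intro i
      rcases lt_or_ge (i : ℕ) r with hi | hi
      · exact Filter.Eventually.of_forall fun x h => absurd h (not_le.2 hi)
      · have h3 : ∀ᶠ x in nhds xstar, 0 < c i x :=
          (isOpen_lt continuous_const (hc i).continuous).mem_nhds ((hinact i hi).1)
        filter_upwards [h3] with x hx _
        exact hx
    obtain ⟨ρ, hρpos, hρ⟩ := Metric.eventually_nhds_iff.1 (h1.and h2)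
    exact ⟨ρ / 2, by linarith, fun x hx => hρ (lt_of_le_of_lt hx (by linarith))⟩
  set η : ℝ := min η₁ η₂ with hηdef
  have hηpos : 0 < η := lt_min hη₁pos hη₂pos
  -- the invertible partial derivative
  set Dz₀ : (EuclideanSpace ℝ (Fin n) × (Fin m → ℝ)) →L[ℝ]
      (EuclideanSpace ℝ (Fin n) × (Fin m → ℝ)) :=
    (epmD f c y xstar lamstar).comp (ContinuousLinearMap.inr ℝ ((Fin m → ℝ) × ℝ)
      (EuclideanSpace ℝ (Fin n) × (Fin m → ℝ))) with hDz₀def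
  have hker : ∀ w, Dz₀ w = 0 → w = 0 := by
    intro w hw
    refine epmD_inj f c y lamstar xstar hf hc hlt hact hinact μ hμ hsosc hli w ?_
    exact hw
  have hinj : Function.Injective Dz₀ := by
    intro a b hab
    have := hker (a - b) (by rw [map_sub, hab, sub_self])
    exact sub_eq_zero.1 this
  set DzL := LinearEquiv.ofInjectiveEndo
    ((Dz₀ : (EuclideanSpace ℝ (Fin n) × (Fin m → ℝ)) →ₗ[ℝ]
      (EuclideanSpace ℝ (Fin n) × (Fin m → ℝ)))) (by exact hinj) with hDzL
  set Dz := DzL.toContinuousLinearEquiv with hDzdef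
  have hDzeq : ∀ w, epmD f c y xstar lamstar (0, w) = Dz w := by
    intro w
    have h1 : Dz w = Dz₀ w := by
      have h2 : Dz w = DzL w := by
        rw [hDzdef]
        exact congrFun (LinearEquiv.coe_toContinuousLinearEquiv' DzL) w
      rw [h2, hDzL]
      simp
    rw [h1]
    rfl
  obtain ⟨ε, hεpos, L, hLpos, φ, hφ, hφ0⟩ :=
    abs_ift (epmG f c y lamstar) (xstar, lamstar)
      (epmG_contDiffAt f c y lamstar xstar hf hc hlt)
      (epmD f c y xstar lamstar)
      (epmG_hasFDerivAt f c y xstar lamstar hf hc hlt)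
      Dz hDzeq
      (epm_fix f c y lamstar hf hc xstar hlt hstat hcomp) η hηpos
  refine ⟨ε, hεpos, 1 / ε + 1, by positivity, L, hLpos,
    fun k lam => (φ ((fun i => k⁻¹ * (lam i - lamstar i)), k⁻¹)).1, ?_⟩
  intro k hk lam hA hB
  have hk0 : 0 < k := lt_of_lt_of_le (by positivity) hk
  have hkinv_pos : 0 < k⁻¹ := inv_pos.2 hk0
  have hkinv_le : k⁻¹ ≤ ε := by
    have h3 : 1 / ε ≤ k := by linarith
    calc k⁻¹ ≤ (1 / ε)⁻¹ := by
          apply inv_anti₀ (by positivity) h3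
      _ = ε := by rw [one_div, inv_inv]
  set t : Fin m → ℝ := fun i => k⁻¹ * (lam i - lamstar i) with htdef
  have hδk : ∀ i, |lam i - lamstar i| ≤ ε * k := by
    intro i
    rcases lt_or_ge (i : ℕ) r with hi | hi
    · exact (hA i hi).2
    · rw [(hinact i hi).2, sub_zero, abs_of_nonneg (hB i hi).1]
      exact (hB i hi).2
  have ht_norm : ‖t‖ ≤ ε := by
    rw [pi_norm_le_iff_of_nonneg hεpos.le]
    intro i
    show ‖k⁻¹ * (lam i - lamstar i)‖ ≤ ε
    rw [Real.norm_eq_abs, abs_mul, abs_inv, abs_of_pos hk0]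
    calc k⁻¹ * |lam i - lamstar i| ≤ k⁻¹ * (ε * k) :=
          mul_le_mul_of_nonneg_left (hδk i) hkinv_pos.le
      _ = ε := by
          rw [mul_comm ε k, ← mul_assoc, inv_mul_cancel₀ hk0.ne', one_mul]
  have hs_norm : ‖(k⁻¹ : ℝ)‖ ≤ ε := by
    rw [Real.norm_eq_abs, abs_of_pos hkinv_pos]
    exact hkinv_le
  obtain ⟨hG0, hηb, hLb⟩ := hφ (t, k⁻¹) ht_norm hs_norm
  set z := φ (t, k⁻¹) with hzdef
  have hxel : ‖z.1 - xstar‖ ≤ ‖z - (xstar, lamstar)‖ := by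
    have h1 := norm_fst_le (z - (xstar, lamstar))
    exact h1
  have hlel : ‖z.2 - lamstar‖ ≤ ‖z - (xstar, lamstar)‖ := by
    have h1 := norm_snd_le (z - (xstar, lamstar))
    exact h1
  have hxη : dist z.1 xstar ≤ η₂ := by
    rw [dist_eq_norm]
    exact le_trans (le_trans hxel hηb) (min_le_right _ _)
  obtain ⟨hfy, hcx⟩ := hη₂ z.1 hxη
  have hlhη : ∀ i, |z.2 i - lamstar i| ≤ η := by
    intro i
    have h1 : ‖(z.2 - lamstar) i‖ ≤ ‖z.2 - lamstar‖ := norm_le_pi_norm _ i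
    rw [Pi.sub_apply, Real.norm_eq_abs] at h1
    exact le_trans (le_trans h1 hlel) hηb
  have hE1 : gradient (fun x => -Real.log (f y - f x)) z.1
      - ∑ i, z.2 i • gradient (c i) z.1 = 0 := congrArg Prod.fst hG0
  have hE2 : ∀ i, z.2 i * c i z.1 + k⁻¹ * z.2 i - k⁻¹ * lamstar i - t i = 0 := by
    intro i
    exact congrFun (congrArg Prod.snd hG0) i
  have hE2' : ∀ i, z.2 i * (k * c i z.1 + 1) = lam i := by
    intro i
    have h := hE2 i
    have hti : t i = k⁻¹ * lam i - k⁻¹ * lamstar i := by rw [htdef]; ring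
    have h' : z.2 i * c i z.1 = k⁻¹ * lam i - k⁻¹ * z.2 i := by
      rw [hti] at h
      linarith
    have hks : k * k⁻¹ = 1 := mul_inv_cancel₀ hk0.ne'
    calc z.2 i * (k * c i z.1 + 1) = k * (z.2 i * c i z.1) + z.2 i := by ring
      _ = k * (k⁻¹ * lam i - k⁻¹ * z.2 i) + z.2 i := by rw [h']
      _ = (k * k⁻¹) * lam i - (k * k⁻¹) * z.2 i + z.2 i := by ring
      _ = lam i := by rw [hks]; ring
  have hpos : ∀ i, 0 < k * c i z.1 + 1 := by
    intro i
    rcases lt_or_ge (i : ℕ) r with hi | hi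
    · have hlamlt : η < lamstar i := lt_of_le_of_lt (min_le_left _ _) (hη₁ i hi)
      have hzpos : 0 < z.2 i := by
        have h1 := abs_le.1 (hlhη i)
        linarith [h1.1]
      have hlampos : 0 < lam i := lt_of_lt_of_le hεpos (hA i hi).1
      by_contra hcon
      push_neg at hcon
      nlinarith [hE2' i]
    · have := hcx i hi
      nlinarith
  have hXfix : (φ ((fun i => k⁻¹ * (lamstar i - lamstar i)), k⁻¹)).1 = xstar := by
    have h0 : (fun i => k⁻¹ * (lamstar i - lamstar i)) = (0 : Fin m → ℝ) := by
      funext i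
      simp
    rw [h0, hφ0 k⁻¹ hs_norm]
  refine ⟨?_, hpos, ?_, hXfix, ?_⟩
  · exact edf_grad_zero f c y hf hc k hk0 lam z.2 z.1 hfy hpos hE2' hE1
  · have hDnorm : ‖t‖ = k⁻¹ * ‖(fun i => lam i - lamstar i : Fin m → ℝ)‖ := by
      have heq : t = k⁻¹ • (fun i => lam i - lamstar i : Fin m → ℝ) := rfl
      rw [heq, norm_smul, Real.norm_eq_abs, abs_of_pos hkinv_pos]
    have hchain : ‖z - (xstar, lamstar)‖
        ≤ L * k⁻¹ * ‖(fun i => lam i - lamstar i : Fin m → ℝ)‖ := by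
      calc ‖z - (xstar, lamstar)‖ ≤ L * ‖t‖ := hLb
        _ = L * (k⁻¹ * ‖(fun i => lam i - lamstar i : Fin m → ℝ)‖) := by rw [hDnorm]
        _ = L * k⁻¹ * ‖(fun i => lam i - lamstar i : Fin m → ℝ)‖ := by ring
    apply max_le
    · calc ‖(fun j => z.1 j - xstar j : Fin n → ℝ)‖
          = ‖(fun j => (z.1 - xstar) j : Fin n → ℝ)‖ := rfl
        _ ≤ ‖z.1 - xstar‖ := euclid_coord_norm_le _
        _ ≤ _ := le_trans hxel hchain
    · have hfun : (fun i => lam i * (k * c i z.1 + 1)⁻¹ - lamstar i : Fin m → ℝ)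
          = z.2 - lamstar := by
        funext i
        have hne : k * c i z.1 + 1 ≠ 0 := ne_of_gt (hpos i)
        have h1 : lam i * (k * c i z.1 + 1)⁻¹ = z.2 i := by
          rw [← hE2' i]
          field_simp
        rw [h1]
        simp
      rw [hfun]
      exact le_trans hlel hchain
  · intro i
    beta_reduce
    rw [hXfix]
    rcases lt_or_ge (i : ℕ) r with hi | hi
    · rw [(hact i hi).1]
      norm_num
    · rw [(hinact i hi).2]
      ring
end
end
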